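/- arXiv:2002.08659 — 7 statements merged into one kernel-verified Lean document; each statement's English description precedes it below -/
import Mathlib

section
/- For any graph G with maximum degree Δ, there exists a proper edge coloring of G using at most Δ+1 colors (Vizing's Theorem). -/
open SimpleGraph

set_option linter.unusedSectionVars false

namespace VizingAux

variable {V : Type*} [Fintype V] [DecidableEq V]

/-- Properness of an edge coloring on a finite set of edges. -/
def ECol {K : Type*} (c : Sym2 V → K) (E : Finset (Sym2 V)) : Prop :=
  ∀ e₁ ∈ E, ∀ e₂ ∈ E, e₁ ≠ e₂ → (∃ v : V, v ∈ e₁ ∧ v ∈ e₂) → c e₁ ≠ c e₂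

/-- Colors appearing on edges of `E` incident to `v`. -/
def colorsAt {K : Type*} [DecidableEq K] (c : Sym2 V → K) (E : Finset (Sym2 V)) (v : V) :
    Finset K := (E.filter (fun e => v ∈ e)).image c

lemma mem_colorsAt {K : Type*} [DecidableEq K] {c : Sym2 V → K} {E : Finset (Sym2 V)} {v : V} {γ : K} :
    γ ∈ colorsAt c E v ↔ ∃ e ∈ E, v ∈ e ∧ c e = γ := by
  classical
  simp [colorsAt, Finset.mem_image, Finset.mem_filter]
  tauto

lemma colorsAt_congr {K : Type*} [DecidableEq K] {c c' : Sym2 V → K} {E : Finset (Sym2 V)} {v : V}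
    (h : ∀ e ∈ E, v ∈ e → c' e = c e) : colorsAt c' E v = colorsAt c E v := by
  classical
  apply Finset.ext
  intro γ
  simp only [mem_colorsAt]
  constructor
  · rintro ⟨e, he, hv, rfl⟩; exact ⟨e, he, hv, (h e he hv).symm⟩
  · rintro ⟨e, he, hv, rfl⟩; exact ⟨e, he, hv, h e he hv⟩


section Rotate
variable {K : Type*} [DecidableEq K]

/-- Rotating a fan: if `y 0 … y k` is a fan at `x` (w.r.t. coloring `c` of `E`,
with `s(x, y 0)` uncolored) and `β` is free at both `x` and `y k`, then the
coloring extends to `insert s(x, y 0) E`. -/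
lemma rotate (c : Sym2 V → K) (E : Finset (Sym2 V)) (x : V) (y : ℕ → V) (k : ℕ)
    (hcol : ECol c E)
    (h0 : s(x, y 0) ∉ E)
    (hmem : ∀ i, 1 ≤ i → i ≤ k → s(x, y i) ∈ E)
    (hinj : ∀ i ≤ k, ∀ j ≤ k, y i = y j → i = j)
    (hne : ∀ i ≤ k, y i ≠ x)
    (hfan : ∀ i < k, c s(x, y (i+1)) ∉ colorsAt c E (y i))
    (β : K) (hβx : β ∉ colorsAt c E x) (hβy : β ∉ colorsAt c E (y k)) :
    ∃ c' : Sym2 V → K, ECol c' (insert s(x, y 0) E) := by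
  classical
  induction k generalizing c β with
  | zero =>
    refine ⟨Function.update c s(x, y 0) β, ?_⟩
    intro e₁ he₁ e₂ he₂ hne12 ⟨v, hv1, hv2⟩
    rw [Finset.mem_insert] at he₁ he₂
    have hupd : ∀ e ∈ E, Function.update c s(x, y 0) β e = c e := by
      intro e he
      exact Function.update_of_ne (by rintro rfl; exact h0 he) _ _
    rcases he₁ with rfl | he₁
    · rcases he₂ with rfl | he₂
      · exact absurd rfl hne12
      · rw [hupd e₂ he₂, Function.update_self]
        rcases Sym2.mem_iff.mp hv1 with rfl | h
        · exact fun h' => hβx (mem_colorsAt.mpr ⟨e₂, he₂, hv2, h'.symm⟩)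
        · subst h
          exact fun h' => hβy (mem_colorsAt.mpr ⟨e₂, he₂, hv2, h'.symm⟩)
    · rcases he₂ with rfl | he₂
      · rw [hupd e₁ he₁, Function.update_self]
        rcases Sym2.mem_iff.mp hv2 with rfl | h
        · exact fun h' => hβx (mem_colorsAt.mpr ⟨e₁, he₁, hv1, h'⟩)
        · subst h
          exact fun h' => hβy (mem_colorsAt.mpr ⟨e₁, he₁, hv1, h'⟩)
      · rw [hupd e₁ he₁, hupd e₂ he₂]
        exact hcol e₁ he₁ e₂ he₂ hne12 ⟨v, hv1, hv2⟩
  | succ k ih =>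
    set ek1 : Sym2 V := s(x, y (k+1)) with hek1
    have hek1E : ek1 ∈ E := hmem (k+1) (by omega) le_rfl
    set γ : K := c ek1 with hγ
    have hβγ : β ≠ γ := by
      rintro rfl
      exact hβx (mem_colorsAt.mpr ⟨ek1, hek1E, by simp [hek1], rfl⟩)
    set c1 : Sym2 V → K := Function.update c ek1 β with hc1
    have hc1self : c1 ek1 = β := by rw [hc1]; exact Function.update_self _ _ _
    have hc1eq : ∀ e, e ≠ ek1 → c1 e = c e := by
      intro e he; exact Function.update_of_ne he _ _
    -- y i is not an endpoint of ek1 for i ≤ k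
    have hnotin : ∀ i ≤ k, y i ∉ ek1 := by
      intro i hi h
      rcases Sym2.mem_iff.mp h with h' | h'
      · exact hne i (by omega) h'
      · have := hinj i (by omega) (k+1) le_rfl h'
        omega
    have hcAt : ∀ (v : V), v ∉ ek1 → colorsAt c1 E v = colorsAt c E v := by
      intro v hv
      apply colorsAt_congr
      intro e he hve
      exact hc1eq e (by rintro rfl; exact hv hve)
    -- c1 is proper on E
    have hcol1 : ECol c1 E := by
      intro e₁ he₁ e₂ he₂ hne12 ⟨v, hv1, hv2⟩
      by_cases h1 : e₁ = ek1
      · subst h1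
        rw [hc1eq e₂ (fun h => hne12 h.symm), hc1self]
        rcases Sym2.mem_iff.mp hv1 with rfl | h
        · exact fun h' => hβx (mem_colorsAt.mpr ⟨e₂, he₂, hv2, h'.symm⟩)
        · subst h
          exact fun h' => hβy (mem_colorsAt.mpr ⟨e₂, he₂, hv2, h'.symm⟩)
      · by_cases h2 : e₂ = ek1
        · subst h2
          rw [hc1eq e₁ h1, hc1self]
          rcases Sym2.mem_iff.mp hv2 with rfl | h
          · exact fun h' => hβx (mem_colorsAt.mpr ⟨e₁, he₁, hv1, h'⟩)
          · subst h
            exact fun h' => hβy (mem_colorsAt.mpr ⟨e₁, he₁, hv1, h'⟩)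
        · rw [hc1eq e₁ h1, hc1eq e₂ h2]
          exact hcol e₁ he₁ e₂ he₂ hne12 ⟨v, hv1, hv2⟩
    -- γ is free at x for c1
    have hγx : γ ∉ colorsAt c1 E x := by
      rw [mem_colorsAt]
      rintro ⟨e, he, hxe, hce⟩
      by_cases h : e = ek1
      · subst h; rw [hc1self] at hce; exact hβγ hce
      · rw [hc1eq e h] at hce
        exact hcol e he ek1 hek1E h ⟨x, hxe, by simp [hek1]⟩ hce
    -- γ is free at y k for c1
    have hγyk : γ ∉ colorsAt c1 E (y k) := by
      rw [hcAt (y k) (hnotin k le_rfl)]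
      exact hfan k (by omega)
    -- fan edges for i ≤ k unchanged
    have hfe : ∀ i ≤ k, c1 s(x, y i) = c s(x, y i) := by
      intro i hi
      apply hc1eq
      intro h
      have : y i = y (k+1) := by
        have := Sym2.congr_right.mp h
        exact this
      have := hinj i (by omega) (k+1) le_rfl this
      omega
    exact ih c1 hcol1 (fun i h1 h2 => hmem i h1 (by omega))
      (fun i hi j hj h => hinj i (by omega) j (by omega) h)
      (fun i hi => hne i (by omega))
      (fun i hi => by
        rw [hfe (i+1) (by omega), hcAt (y i) (hnotin i (by omega))]
        exact hfan i (by omega))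
      γ hγx hγyk

end Rotate


section Extend

variable (G : SimpleGraph V) [DecidableRel G.Adj]

/-- There is always a free color at any vertex. -/
lemma exists_free (c : Sym2 V → Fin (G.maxDegree + 1)) (E : Finset (Sym2 V))
    (hE : E ⊆ G.edgeFinset) (v : V) :
    ∃ β : Fin (G.maxDegree + 1), β ∉ colorsAt c E v := by
  classical
  have hsub : E.filter (fun e => v ∈ e) ⊆ G.incidenceFinset v := by
    intro e he
    rw [Finset.mem_filter] at he
    rw [G.mem_incidenceFinset]
    exact ⟨mem_edgeFinset.mp (hE he.1), he.2⟩
  have hcard : (colorsAt c E v).card ≤ G.maxDegree := by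
    calc (colorsAt c E v).card ≤ (E.filter (fun e => v ∈ e)).card := by
          classical exact Finset.card_image_le
      _ ≤ (G.incidenceFinset v).card := Finset.card_le_card hsub
      _ = G.degree v := G.card_incidenceFinset_eq_degree v
      _ ≤ G.maxDegree := G.degree_le_maxDegree v
  have : (colorsAt c E v).card < Fintype.card (Fin (G.maxDegree + 1)) := by
    simpa using Nat.lt_succ_of_le hcard
  have hne : ((colorsAt c E v)ᶜ : Finset (Fin (G.maxDegree + 1))).Nonempty := by
    rw [← Finset.card_pos, Finset.card_compl]
    omega
  obtain ⟨β, hβ⟩ := hne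
  exact ⟨β, by simpa using hβ⟩

/-- The key extension lemma: a proper partial coloring extends over one more edge. -/
lemma extend (E : Finset (Sym2 V)) (hE : E ⊆ G.edgeFinset)
    (c : Sym2 V → Fin (G.maxDegree + 1)) (hcol : ECol c E)
    (x y₀ : V) (hadj : G.Adj x y₀) (hnew : s(x, y₀) ∉ E) :
    ∃ c' : Sym2 V → Fin (G.maxDegree + 1), ECol c' (insert s(x, y₀) E) := by
  classical
  -- fans at x starting with y₀
  set P : ℕ → Prop := fun k => ∃ y : ℕ → V, y 0 = y₀ ∧ (∀ i ≤ k, G.Adj x (y i)) ∧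
      (∀ i, 1 ≤ i → i ≤ k → s(x, y i) ∈ E) ∧
      (∀ i ≤ k, ∀ j ≤ k, y i = y j → i = j) ∧
      (∀ i < k, c s(x, y (i+1)) ∉ colorsAt c E (y i)) with hP
  have hP0 : P 0 := by
    refine ⟨fun _ => y₀, rfl, fun i hi => ?_, by omega, ?_, by omega⟩
    · simpa using hadj
    · intro i hi j hj _; omega
  have hPbound : ∀ k, P k → k < Fintype.card V := by
    rintro k ⟨y, -, -, -, hinj, -⟩
    have : Function.Injective (fun i : Fin (k+1) => y i) := by
      intro i j hij
      exact Fin.ext (hinj i (Nat.lt_succ_iff.mp i.isLt) j (Nat.lt_succ_iff.mp j.isLt) hij)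
    have := Fintype.card_le_of_injective _ this
    simpa using this
  set k : ℕ := Nat.findGreatest P (Fintype.card V) with hk
  have hPk : P k := Nat.findGreatest_spec (Nat.zero_le _) hP0
  have hkmax : ∀ m, P m → m ≤ k := by
    intro m hm
    by_contra h
    exact Nat.findGreatest_is_greatest (by omega) (le_of_lt (hPbound m hm)) hm
  obtain ⟨y, hy0, hyadj, hymem, hyinj, hyfan⟩ := hPk
  have hyne : ∀ i ≤ k, y i ≠ x := fun i hi => (hyadj i hi).ne'
  obtain ⟨α, hαx⟩ := exists_free G c E hE x
  obtain ⟨β, hβyk⟩ := exists_free G c E hE (y k)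
  by_cases hβx : β ∈ colorsAt c E x
  case neg =>
    -- rotate the whole fan
    obtain ⟨c', hc'⟩ := rotate c E x y k hcol (hy0 ▸ hnew) hymem hyinj hyne hyfan β hβx hβyk
    exact ⟨c', hy0 ▸ hc'⟩
  case pos =>
  -- the β-colored edge at x goes to a fan vertex y m, 1 ≤ m < k
  obtain ⟨eβ, heβE, hxeβ, hceβ⟩ := mem_colorsAt.mp hβx
  obtain ⟨u, rfl⟩ := Sym2.mem_iff_exists.mp hxeβ
  have hum : ∃ m, 1 ≤ m ∧ m ≤ k ∧ y m = u := by
    by_contra hcon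
    push_neg at hcon
    have humem : ∀ i ≤ k, y i ≠ u := by
      intro i hi
      rcases Nat.eq_zero_or_pos i with rfl | hpos
      · rw [hy0]
        rintro rfl
        exact hnew heβE
      · exact hcon i hpos hi
    have hPk1 : P (k+1) := by
      refine ⟨fun i => if i = k+1 then u else y i, by simp [hy0], ?_, ?_, ?_, ?_⟩
      · intro i hi
        by_cases h : i = k+1
        · simp only [if_pos h]
          exact (SimpleGraph.mem_edgeSet _).mp (mem_edgeFinset.mp (hE heβE))
        · simp only [if_neg h]
          exact hyadj i (by omega)
      · intro i h1 h2
        by_cases h : i = k+1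
        · simpa [h] using heβE
        · simp only [if_neg h]
          exact hymem i h1 (by omega)
      · intro i hi j hj hij
        by_cases h : i = k+1 <;> by_cases h' : j = k+1
        · omega
        · simp only [h, if_true, if_neg h'] at hij
          exact absurd hij.symm (humem j (by omega))
        · simp only [h', if_true, if_neg h] at hij
          exact absurd hij (humem i (by omega))
        · simp only [if_neg h, if_neg h'] at hij
          exact hyinj i (by omega) j (by omega) hij
      · intro i hi
        by_cases h : i+1 = k+1
        · have hik : i = k := by omega
          subst hik
          simp only [if_pos h, if_true, if_neg (show ¬ k = k+1 by omega)]
          rw [hceβ]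
          exact hβyk
        · simp only [if_neg h, if_neg (show ¬ i = k+1 by omega)]
          exact hyfan i (by omega)
    have := hkmax (k+1) hPk1
    omega
  obtain ⟨m, hm1, hmk, hymu⟩ := hum
  subst hymu
  have hmltk : m < k := by
    rcases Nat.lt_or_ge m k with h | h
    · exact h
    · exfalso
      have : m = k := by omega
      subst this
      exact hβyk (mem_colorsAt.mpr ⟨s(x, y k), heβE, by simp, hceβ⟩)
  have hαβ : α ≠ β := by rintro rfl; exact hαx hβx
  -- Kempe chain subgraph on colors α, β
  set H : SimpleGraph V :=
    { Adj := fun a b => a ≠ b ∧ s(a, b) ∈ E ∧ (c s(a, b) = α ∨ c s(a, b) = β),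
      symm := ⟨by
        intro a b ⟨h1, h2, h3⟩
        rw [Sym2.eq_swap] at h2 h3
        exact ⟨h1.symm, h2, h3⟩⟩,
      loopless := ⟨fun a h => h.1 rfl⟩ } with hHdef
  have hHadj : ∀ a b : V, H.Adj a b ↔ (a ≠ b ∧ s(a, b) ∈ E ∧ (c s(a, b) = α ∨ c s(a, b) = β)) :=
    fun a b => Iff.rfl
  -- reachability propagates along α/β edges
  have htouch : ∀ e ∈ E, (c e = α ∨ c e = β) → (∃ v ∈ e, H.Reachable x v) →
      ∀ w ∈ e, H.Reachable x w := by
    intro e he hc ⟨v, hve, hvr⟩ w hwe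
    by_cases hvw : v = w
    · exact hvw ▸ hvr
    · have hse : e = s(v, w) := (Sym2.mem_and_mem_iff hvw).mp ⟨hve, hwe⟩
      subst hse
      exact hvr.trans (SimpleGraph.Adj.reachable ((hHadj v w).mpr ⟨hvw, he, hc⟩))
  -- the swap
  set σ : Fin (G.maxDegree + 1) → Fin (G.maxDegree + 1) :=
    fun γ => if γ = α then β else if γ = β then α else γ with hσdef
  have hσα : σ α = β := by simp [hσdef]
  have hσβ : σ β = α := by simp [hσdef, hαβ.symm]
  have hσo : ∀ γ, γ ≠ α → γ ≠ β → σ γ = γ := by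
    intro γ h1 h2; simp [hσdef, h1, h2]
  have hσeqβ : ∀ γ, σ γ = β → γ = α := by
    intro γ h
    by_cases h1 : γ = α
    · exact h1
    · by_cases h2 : γ = β
      · rw [h2, hσβ] at h; exact absurd h hαβ
      · rw [hσo γ h1 h2] at h; exact absurd h h2
  have hσeqα : ∀ γ, σ γ = α → γ = β := by
    intro γ h
    by_cases h1 : γ = α
    · rw [h1, hσα] at h; exact absurd h hαβ.symm
    · by_cases h2 : γ = β
      · exact h2
      · rw [hσo γ h1 h2] at h; exact absurd h h1
  have hσσ : ∀ γ, σ (σ γ) = γ := by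
    intro γ
    by_cases h1 : γ = α
    · rw [h1, hσα, hσβ]
    · by_cases h2 : γ = β
      · rw [h2, hσβ, hσα]
      · rw [hσo γ h1 h2, hσo γ h1 h2]
  have hσinj : Function.Injective σ := fun a b h => by
    rw [← hσσ a, h, hσσ b]
  set c' : Sym2 V → Fin (G.maxDegree + 1) :=
    fun e => if e ∈ E ∧ (∃ v ∈ e, H.Reachable x v) then σ (c e) else c e with hc'def
  have hswap : ∀ e ∈ E, (∃ v ∈ e, H.Reachable x v) → c' e = σ (c e) := by
    intro e he ht; simp only [hc'def]; exact if_pos ⟨he, ht⟩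
  have huntouched' : ∀ e, (¬ ∃ v ∈ e, H.Reachable x v) → c' e = c e := by
    intro e ht; simp only [hc'def]; exact if_neg (fun h => ht h.2)
  have hfix : ∀ e, c e ≠ α → c e ≠ β → c' e = c e := by
    intro e h1 h2
    simp only [hc'def]
    by_cases h : e ∈ E ∧ (∃ v ∈ e, H.Reachable x v)
    · rw [if_pos h]; exact hσo _ h1 h2
    · exact if_neg h
  have htransfer : ∀ (f : Sym2 V) γ, γ ≠ α → γ ≠ β → c' f = γ → c f = γ := by
    intro f γ h1 h2 h
    by_cases hf1 : c f = α
    · exfalso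
      simp only [hc'def] at h
      by_cases ht : f ∈ E ∧ (∃ v ∈ f, H.Reachable x v)
      · rw [if_pos ht, hf1, hσα] at h; exact h2 h.symm
      · rw [if_neg ht, hf1] at h; exact h1 h.symm
    · by_cases hf2 : c f = β
      · exfalso
        simp only [hc'def] at h
        by_cases ht : f ∈ E ∧ (∃ v ∈ f, H.Reachable x v)
        · rw [if_pos ht, hf2, hσβ] at h; exact h1 h.symm
        · rw [if_neg ht, hf2] at h; exact h2 h.symm
      · rw [hfix f hf1 hf2] at h; exact h
  -- the swapped coloring is proper
  have hcol' : ECol c' E := by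
    intro e₁ he₁ e₂ he₂ hne12 ⟨v, hv1, hv2⟩
    by_cases t1 : ∃ w ∈ e₁, H.Reachable x w
    · by_cases t2 : ∃ w ∈ e₂, H.Reachable x w
      · rw [hswap e₁ he₁ t1, hswap e₂ he₂ t2]
        exact fun h => (hcol e₁ he₁ e₂ he₂ hne12 ⟨v, hv1, hv2⟩) (hσinj h)
      · rw [hswap e₁ he₁ t1, huntouched' e₂ t2]
        by_cases hc1 : c e₁ = α ∨ c e₁ = β
        · have hvr : H.Reachable x v := htouch e₁ he₁ hc1 t1 v hv1
          intro h
          apply t2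
          refine ⟨v, hv2, hvr⟩
        · push_neg at hc1
          rw [hσo _ hc1.1 hc1.2]
          exact hcol e₁ he₁ e₂ he₂ hne12 ⟨v, hv1, hv2⟩
    · by_cases t2 : ∃ w ∈ e₂, H.Reachable x w
      · rw [huntouched' e₁ t1, hswap e₂ he₂ t2]
        by_cases hc2 : c e₂ = α ∨ c e₂ = β
        · have hvr : H.Reachable x v := htouch e₂ he₂ hc2 t2 v hv2
          intro h
          apply t1
          exact ⟨v, hv1, hvr⟩
        · push_neg at hc2
          rw [hσo _ hc2.1 hc2.2]
          exact hcol e₁ he₁ e₂ he₂ hne12 ⟨v, hv1, hv2⟩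
      · rw [huntouched' e₁ t1, huntouched' e₂ t2]
        exact hcol e₁ he₁ e₂ he₂ hne12 ⟨v, hv1, hv2⟩
  -- color sets at unreachable vertices are unchanged
  have hL2 : ∀ v, ¬ H.Reachable x v → colorsAt c' E v = colorsAt c E v := by
    intro v hv
    apply colorsAt_congr
    intro e he hve
    by_cases hc1 : c e = α ∨ c e = β
    · apply huntouched'
      rintro ⟨w, hwe, hwr⟩
      exact hv (htouch e he hc1 ⟨w, hwe, hwr⟩ v hve)
    · push_neg at hc1
      exact hfix e hc1.1 hc1.2
  have hL3a : ∀ v, H.Reachable x v → α ∉ colorsAt c E v → β ∉ colorsAt c' E v := by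
    intro v hvr hα hmem
    obtain ⟨e, he, hve, hce⟩ := mem_colorsAt.mp hmem
    by_cases ht : ∃ w ∈ e, H.Reachable x w
    · rw [hswap e he ht] at hce
      exact hα (mem_colorsAt.mpr ⟨e, he, hve, hσeqβ _ hce⟩)
    · rw [huntouched' e ht] at hce
      exact ht ⟨v, hve, hvr⟩
  have hL3b : ∀ v, H.Reachable x v → β ∉ colorsAt c E v → α ∉ colorsAt c' E v := by
    intro v hvr hβ hmem
    obtain ⟨e, he, hve, hce⟩ := mem_colorsAt.mp hmem
    by_cases ht : ∃ w ∈ e, H.Reachable x w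
    · rw [hswap e he ht] at hce
      exact hβ (mem_colorsAt.mpr ⟨e, he, hve, hσeqα _ hce⟩)
    · rw [huntouched' e ht] at hce
      exact ht ⟨v, hve, hvr⟩
  -- membership transfer for colors other than α, β
  have hL1 : ∀ (v : V) γ, γ ≠ α → γ ≠ β → γ ∉ colorsAt c E v → γ ∉ colorsAt c' E v := by
    intro v γ h1 h2 hγ hmem
    obtain ⟨e, he, hve, hce⟩ := mem_colorsAt.mp hmem
    exact hγ (mem_colorsAt.mpr ⟨e, he, hve, htransfer e γ h1 h2 hce⟩)
  have hβx' : β ∉ colorsAt c' E x := hL3a x (Reachable.refl x) hαx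
  have hm1k : m - 1 + 1 = m := by omega
  have hβym1 : β ∉ colorsAt c E (y (m-1)) := by
    have := hyfan (m-1) (by omega)
    rw [hm1k, hceβ] at this
    exact this
  -- colors of fan edges other than the m-th are untouched and differ from α, β
  have hfanfix : ∀ i, 1 ≤ i → i ≤ k → i ≠ m →
      c' s(x, y i) = c s(x, y i) ∧ c s(x, y i) ≠ α ∧ c s(x, y i) ≠ β := by
    intro i h1 h2 h3
    have hiE : s(x, y i) ∈ E := hymem i h1 h2
    have hne1 : c s(x, y i) ≠ α := by
      intro h
      exact hαx (mem_colorsAt.mpr ⟨s(x, y i), hiE, by simp, h⟩)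
    have hne2 : c s(x, y i) ≠ β := by
      intro h
      have hne' : s(x, y i) ≠ s(x, y m) := by
        intro he
        exact h3 (hyinj i h2 m hmk (Sym2.congr_right.mp he))
      exact hcol s(x, y i) hiE s(x, y m) heβE hne' ⟨x, by simp, by simp⟩ (h.trans hceβ.symm)
    exact ⟨hfix _ hne1 hne2, hne1, hne2⟩
  by_cases hA : H.Reachable x (y (m-1))
  case neg =>
    -- rotate the prefix fan y 0 … y (m-1) with color β
    have hrot := rotate c' E x y (m-1) hcol' (hy0 ▸ hnew)
      (fun i hi1 hi2 => hymem i hi1 (by omega))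
      (fun i hi j hj h => hyinj i (by omega) j (by omega) h)
      (fun i hi => hyne i (by omega))
      (fun i hi => by
        have h3 : i + 1 ≠ m := by omega
        obtain ⟨hfixe, hc1, hc2⟩ := hfanfix (i+1) (by omega) (by omega) h3
        rw [hfixe]
        exact hL1 (y i) _ hc1 hc2 (hyfan i (by omega)))
      β hβx' (by rw [hL2 _ hA]; exact hβym1)
    obtain ⟨c'', hc''⟩ := hrot
    exact ⟨c'', hy0 ▸ hc''⟩
  case pos =>
  by_cases hBk : H.Reachable x (y k)
  case neg =>
    -- rotate the full fan with color β
    have hswapm : c' s(x, y m) = α := by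
      rw [hswap s(x, y m) heβE ⟨x, by simp, Reachable.refl x⟩, hceβ, hσβ]
    have hrot := rotate c' E x y k hcol' (hy0 ▸ hnew) hymem hyinj hyne
      (fun i hi => by
        by_cases h3 : i + 1 = m
        · have him : i = m - 1 := by omega
          rw [h3, hswapm, him]
          exact hL3b (y (m-1)) hA hβym1
        · obtain ⟨hfixe, hc1, hc2⟩ := hfanfix (i+1) (by omega) (by omega) h3
          rw [hfixe]
          exact hL1 (y i) _ hc1 hc2 (hyfan i hi))
      β hβx' (by rw [hL2 _ hBk]; exact hβyk)
    obtain ⟨c'', hc''⟩ := hrot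
    exact ⟨c'', hy0 ▸ hc''⟩
  case pos =>
  -- both y (m-1) and y k are reachable: contradiction by counting
  exfalso
  have hym1k : y (m-1) ≠ y k := by
    intro h
    have := hyinj (m-1) (by omega) k le_rfl h
    omega
  have hxym1 : x ≠ y (m-1) := (hyne (m-1) (by omega)).symm
  have hxyk : x ≠ y k := (hyne k le_rfl).symm
  set S : Finset V := Finset.univ.filter (fun v => H.Reachable x v) with hS
  set T : Finset (Sym2 V) :=
    E.filter (fun e => (c e = α ∨ c e = β) ∧ ∃ v ∈ e, H.Reachable x v) with hT
  have hmemS : ∀ v, v ∈ S ↔ H.Reachable x v := by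
    intro v; rw [hS, Finset.mem_filter]; simp
  have hmemT : ∀ e, e ∈ T ↔ e ∈ E ∧ (c e = α ∨ c e = β) ∧ ∃ v ∈ e, H.Reachable x v := by
    intro e; rw [hT, Finset.mem_filter]
  set d : V → ℕ := fun v => (T.filter (fun e => v ∈ e)).card with hd
  -- degree bounds
  have hdle : ∀ (v : V) (B : Finset (Fin (G.maxDegree + 1))),
      (∀ e ∈ T, v ∈ e → c e ∈ B) → d v ≤ B.card := by
    intro v B hB
    rw [hd]
    apply Finset.card_le_card_of_injOn c
    · intro e he
      rw [Finset.mem_coe, Finset.mem_filter] at he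
      exact hB e he.1 he.2
    · intro e₁ he₁ e₂ he₂ hce
      simp only [Finset.coe_filter, Set.mem_setOf_eq] at he₁ he₂
      by_contra hne12
      exact hcol e₁ ((hmemT e₁).mp he₁.1).1 e₂ ((hmemT e₂).mp he₂.1).1 hne12
        ⟨v, he₁.2, he₂.2⟩ hce
  have hd2 : ∀ v, d v ≤ 2 := by
    intro v
    have := hdle v {α, β} (fun e he _ => by
      rcases ((hmemT e).mp he).2.1 with h | h <;> simp [h])
    calc d v ≤ ({α, β} : Finset _).card := this
      _ ≤ 2 := Finset.card_insert_le _ _ |>.trans (by simp)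
  have hd1 : ∀ v, (∃ γ, (γ = α ∨ γ = β) ∧ γ ∉ colorsAt c E v) → d v ≤ 1 := by
    rintro v ⟨γ, hγab, hγ⟩
    have := hdle v {σ γ} (fun e he hve => by
      have hmem := (hmemT e).mp he
      have hcnot : c e ≠ γ := by
        intro h
        exact hγ (mem_colorsAt.mpr ⟨e, hmem.1, hve, h⟩)
      rcases hγab with rfl | rfl
      · rcases hmem.2.1 with h | h
        · exact absurd h hcnot
        · simp [h, hσα]
      · rcases hmem.2.1 with h | h
        · simp [h, hσβ]
        · exact absurd h hcnot)
    simpa using this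
  -- handshake: the sum of degrees over S is twice the number of edges in T
  have hhand : ∑ v ∈ S, d v = 2 * T.card := by
    have h1 : ∀ v, d v = ∑ e ∈ T, (if v ∈ e then 1 else 0) := by
      intro v; rw [hd]; exact Finset.card_filter _ _
    calc ∑ v ∈ S, d v = ∑ v ∈ S, ∑ e ∈ T, (if v ∈ e then 1 else 0) := by
          exact Finset.sum_congr rfl (fun v _ => h1 v)
      _ = ∑ e ∈ T, ∑ v ∈ S, (if v ∈ e then 1 else 0) := Finset.sum_comm
      _ = ∑ e ∈ T, (S.filter (fun v => v ∈ e)).card := by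
          exact Finset.sum_congr rfl (fun e _ => (Finset.card_filter _ _).symm)
      _ = ∑ _e ∈ T, 2 := by
          apply Finset.sum_congr rfl
          intro e he
          obtain ⟨heE, hcab, w, hwe, hwr⟩ := (hmemT e).mp he
          obtain ⟨w', rfl⟩ := Sym2.mem_iff_exists.mp hwe
          have hww' : w ≠ w' := by
            have := mem_edgeFinset.mp (hE heE)
            rw [SimpleGraph.mem_edgeSet] at this
            exact this.ne
          have hw'r : H.Reachable x w' := htouch _ heE hcab ⟨w, hwe, hwr⟩ w' (by simp)
          have : S.filter (fun v => v ∈ s(w, w')) = {w, w'} := by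
            ext u
            simp only [Finset.mem_filter, hmemS, Sym2.mem_iff, Finset.mem_insert,
              Finset.mem_singleton]
            constructor
            · rintro ⟨-, h⟩; exact h
            · rintro (rfl | rfl)
              · exact ⟨hwr, Or.inl rfl⟩
              · exact ⟨hw'r, Or.inr rfl⟩
          rw [this, Finset.card_pair hww']
      _ = 2 * T.card := by rw [Finset.sum_const, smul_eq_mul, Nat.mul_comm]
  -- the component of x has at least |S| - 1 edges
  have hxS : x ∈ S := (hmemS x).mpr (Reachable.refl x)
  have key : ∀ v ∈ S.erase x, ∃ u, H.Adj v u ∧ H.dist x u + 1 ≤ H.dist x v := by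
    intro v hv
    rw [Finset.mem_erase] at hv
    obtain ⟨hvx, hvS⟩ := hv
    have hvr : H.Reachable x v := (hmemS v).mp hvS
    obtain ⟨p, hp⟩ := hvr.exists_walk_length_eq_dist
    obtain ⟨u, hadj_vu, q, hq⟩ := SimpleGraph.Walk.exists_eq_cons_of_ne hvx p.reverse
    have hlen : q.length + 1 = H.dist x v := by
      have h1 : p.reverse.length = H.dist x v := by rw [SimpleGraph.Walk.length_reverse, hp]
      rw [hq] at h1
      simpa using h1
    have hdu : H.dist x u ≤ q.length := by
      have := SimpleGraph.dist_le q.reverse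
      simpa using this
    exact ⟨u, hadj_vu, by omega⟩
  choose! f hf1 hf2 using key
  have hcardST : S.card ≤ T.card + 1 := by
    have hinj : (S.erase x).card ≤ T.card := by
      apply Finset.card_le_card_of_injOn (fun v => s(v, f v))
      · intro v hv
        have h1 := hf1 v hv
        rw [Finset.mem_coe, hmemT]
        refine ⟨h1.2.1, h1.2.2, v, by simp, ?_⟩
        exact (hmemS v).mp (Finset.mem_of_mem_erase hv)
      · intro v₁ hv₁ v₂ hv₂ heq
        rw [Sym2.eq_iff] at heq
        rcases heq with ⟨h1, -⟩ | ⟨h1, h2⟩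
        · exact h1
        · exfalso
          have d1 := hf2 v₁ (Finset.mem_coe.mp hv₁)
          have d2 := hf2 v₂ (Finset.mem_coe.mp hv₂)
          rw [← h1] at d2
          rw [h2] at d1
          omega
    rw [Finset.card_erase_of_mem hxS] at hinj
    omega
  -- three vertices of degree at most 1
  set X : Finset V := {x, y (m-1), y k} with hX
  have hXsub : X ⊆ S := by
    intro v hv
    rw [hX] at hv
    simp only [Finset.mem_insert, Finset.mem_singleton] at hv
    rcases hv with rfl | rfl | rfl
    · exact hxS
    · exact (hmemS _).mpr hA
    · exact (hmemS _).mpr hBk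
  have hXcard : X.card = 3 := by
    rw [hX]
    rw [Finset.card_insert_of_notMem (by simp [hxym1, hxyk]),
      Finset.card_insert_of_notMem (by simp [hym1k])]
    simp
  have hboundd : ∀ v ∈ S, d v + (if v ∈ X then 1 else 0) ≤ 2 := by
    intro v hv
    by_cases h : v ∈ X
    · rw [if_pos h]
      have hd1v : d v ≤ 1 := by
        rw [hX] at h
        simp only [Finset.mem_insert, Finset.mem_singleton] at h
        rcases h with rfl | rfl | rfl
        · exact hd1 _ ⟨α, Or.inl rfl, hαx⟩
        · exact hd1 _ ⟨β, Or.inr rfl, hβym1⟩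
        · exact hd1 _ ⟨β, Or.inr rfl, hβyk⟩
      omega
    · rw [if_neg h]
      simpa using hd2 v
  have hsum3 : ∑ v ∈ S, d v + 3 ≤ 2 * S.card := by
    have h1 : ∑ v ∈ S, (d v + (if v ∈ X then 1 else 0)) ≤ ∑ _v ∈ S, 2 :=
      Finset.sum_le_sum hboundd
    rw [Finset.sum_add_distrib, Finset.sum_const, smul_eq_mul] at h1
    have h2 : ∑ v ∈ S, (if v ∈ X then 1 else 0) = 3 := by
      rw [← Finset.card_filter, Finset.filter_mem_eq_inter,
        Finset.inter_eq_right.mpr hXsub, hXcard]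
    omega
  omega

/-- Any finite subset of the edges of `G` can be properly colored. -/
lemma color_all (E : Finset (Sym2 V)) (hE : E ⊆ G.edgeFinset) :
    ∃ c : Sym2 V → Fin (G.maxDegree + 1), ECol c E := by
  classical
  induction E using Finset.induction_on with
  | empty => exact ⟨fun _ => ⟨0, Nat.succ_pos _⟩, fun e he => absurd he (Finset.notMem_empty e)⟩
  | @insert e E hnew ih =>
    have hE' : E ⊆ G.edgeFinset := fun f hf => hE (Finset.mem_insert_of_mem hf)
    obtain ⟨c, hc⟩ := ih hE'
    obtain ⟨⟨a, b⟩, rfl⟩ := e.exists_rep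
    have hadj : G.Adj a b := by
      have := hE (Finset.mem_insert_self _ _)
      rw [mem_edgeFinset] at this
      exact this
    exact extend G E hE' c hc a b hadj hnew

end Extend

end VizingAux

open VizingAux in
/-- Vizing's Theorem: every graph with maximum degree Δ admits a proper
edge coloring with at most Δ + 1 colors. -/
theorem vizing_edge_coloring {V : Type*} [Fintype V] [DecidableEq V]
    (G : SimpleGraph V) [DecidableRel G.Adj] :
    ∃ C : Sym2 V → Fin (G.maxDegree + 1),
      ∀ e₁ ∈ G.edgeSet, ∀ e₂ ∈ G.edgeSet,
        e₁ ≠ e₂ → (∃ v : V, v ∈ e₁ ∧ v ∈ e₂) → C e₁ ≠ C e₂ := by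
  obtain ⟨c, hc⟩ := color_all G G.edgeFinset (le_refl _)
  refine ⟨c, fun e₁ he₁ e₂ he₂ hne hshare => ?_⟩
  exact hc e₁ (SimpleGraph.mem_edgeFinset.mpr he₁) e₂ (SimpleGraph.mem_edgeFinset.mpr he₂)
    hne hshare
end

section
/- Let L be a proper c-colored labeling with exactly k weak edges for a graph G=(V,E), and let e={u,v} with e ∉ E. If in G'=(V, E ∪ {e}) every vertex w in the closed neighborhood of u has degree at most c-1, then there exists a proper c-colored labeling L' for G' with exactly k weak edges. -/
open SimpleGraph

/-- Number of weak edges (edges labeled `0`) of a labeling. -/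
noncomputable def weakCount {V : Type*} (G : SimpleGraph V) (ℓ : Sym2 V → ℕ) : ℕ :=
  {e ∈ G.edgeSet | ℓ e = 0}.ncard

/-- A proper `c`-colored labeling: every edge gets a color in `{0,…,c}`
(color `0` meaning weak), and no two distinct incident edges share
a strong color. -/
def IsProperLabeling {V : Type*} (G : SimpleGraph V) (c : ℕ) (ℓ : Sym2 V → ℕ) : Prop :=
  (∀ e ∈ G.edgeSet, ℓ e ≤ c) ∧
  ∀ e₁ ∈ G.edgeSet, ∀ e₂ ∈ G.edgeSet,
    e₁ ≠ e₂ → (∃ v : V, v ∈ e₁ ∧ v ∈ e₂) → ℓ e₁ = ℓ e₂ → ℓ e₁ = 0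

namespace AddEdgeAux

variable {V : Type*}

/-- The set of strong colors appearing at a vertex. -/
def strongAt (G : SimpleGraph V) (ℓ : Sym2 V → ℕ) (w : V) : Set ℕ :=
  {n | n ≠ 0 ∧ ∃ z, G.Adj w z ∧ ℓ s(w, z) = n}

lemma mem_strongAt {G : SimpleGraph V} {ℓ : Sym2 V → ℕ} {w : V} {γ : ℕ}
    (h0 : γ ≠ 0) {z : V} (hadj : G.Adj w z) (hc : ℓ s(w, z) = γ) :
    γ ∈ strongAt G ℓ w := ⟨h0, z, hadj, hc⟩

lemma proper_pair {G : SimpleGraph V} {c : ℕ} {ℓ : Sym2 V → ℕ}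
    (hp : IsProperLabeling G c ℓ) {a b b' : V}
    (h1 : G.Adj a b) (h2 : G.Adj a b') (hbb : b ≠ b')
    (hc : ℓ s(a, b) = ℓ s(a, b')) : ℓ s(a, b) = 0 := by
  refine hp.2 _ (G.mem_edgeSet.2 h1) _ (G.mem_edgeSet.2 h2) ?_ ⟨a, by simp, by simp⟩ hc
  exact fun h => hbb (Sym2.congr_right.1 h)

lemma edge_decomp {G : SimpleGraph V} {e : Sym2 V} (he : e ∈ G.edgeSet) {w : V}
    (hw : w ∈ e) : ∃ z, G.Adj w z ∧ e = s(w, z) := by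
  obtain ⟨z, rfl⟩ := Sym2.mem_iff_exists.1 hw
  exact ⟨z, G.mem_edgeSet.1 he, rfl⟩

section Leaf

variable [DecidableEq V] {S : SimpleGraph V}

/-- An internal vertex of a path has two distinct neighbors on the path. -/
lemma two_nbrs {a b : V} {p : S.Walk a b} (hp : p.IsPath) {w : V}
    (hw : w ∈ p.support) (hwa : w ≠ a) (hwb : w ≠ b) :
    ∃ z₁ z₂, z₁ ≠ z₂ ∧ S.Adj w z₁ ∧ S.Adj w z₂ ∧ z₁ ∈ p.support ∧ z₂ ∈ p.support := by
  set t := p.takeUntil w hw with htdef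
  set d := p.dropUntil w hw with hddef
  obtain ⟨z₁, h₁, t', ht'⟩ := Walk.exists_eq_cons_of_ne hwa t.reverse
  obtain ⟨z₂, h₂, d', hd'⟩ := Walk.exists_eq_cons_of_ne hwb d
  have hz₁x : z₁ ∈ t.support := by
    have : z₁ ∈ t.reverse.support := by
      rw [ht']; exact List.mem_cons_of_mem _ t'.start_mem_support
    rwa [Walk.support_reverse, List.mem_reverse] at this
  have hz₂x : z₂ ∈ d.support.tail := by
    rw [hd', Walk.support_cons]
    exact d'.start_mem_support
  have hsupp : p.support = t.support ++ d.support.tail := by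
    conv_lhs => rw [← p.take_spec hw]
    rw [Walk.support_append]
  have hnd : (t.support ++ d.support.tail).Nodup := by
    rw [← hsupp]; exact hp.support_nodup
  refine ⟨z₁, z₂, ?_, h₁, h₂, ?_, ?_⟩
  · intro hEq
    exact (List.disjoint_of_nodup_append hnd) hz₁x (hEq ▸ hz₂x)
  · rw [hsupp]
    exact List.mem_append_left _ hz₁x
  · rw [hsupp]
    exact List.mem_append_right _ hz₂x

/-- A connected max-degree-2 graph cannot have three distinct vertices of degree ≤ 1. -/
lemma leaf3 (hdeg2 : ∀ w : V, ∃ n₁ n₂ : V, ∀ z, S.Adj w z → z = n₁ ∨ z = n₂)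
    {a b k : V}
    (ha : ∀ z z', S.Adj a z → S.Adj a z' → z = z')
    (hb : ∀ z z', S.Adj b z → S.Adj b z' → z = z')
    (hk : ∀ z z', S.Adj k z → S.Adj k z' → z = z')
    (hab : a ≠ b) (hka : k ≠ a) (hkb : k ≠ b)
    (rab : S.Reachable a b) (rak : S.Reachable a k) : False := by
  obtain ⟨q⟩ := rab
  obtain ⟨p, hp⟩ := q.toPath
  have closure : ∀ w ∈ p.support, ∀ z, S.Adj w z → z ∈ p.support := by
    intro w hw z hz
    by_cases hwa : w = a
    · subst hwa
      obtain ⟨w₁, h₁, p₁, hp₁⟩ := Walk.exists_eq_cons_of_ne hab p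
      have : z = w₁ := ha _ _ hz h₁
      subst this
      rw [hp₁, Walk.support_cons]
      exact List.mem_cons_of_mem _ p₁.start_mem_support
    · by_cases hwb : w = b
      · subst hwb
        obtain ⟨w₁, h₁, p₁, hp₁⟩ := Walk.exists_eq_cons_of_ne (Ne.symm hab) p.reverse
        have : z = w₁ := hb _ _ hz h₁
        subst this
        have : z ∈ p.reverse.support := by
          rw [hp₁, Walk.support_cons]
          exact List.mem_cons_of_mem _ p₁.start_mem_support
        rwa [Walk.support_reverse, List.mem_reverse] at this
      · obtain ⟨z₁, z₂, h12, h₁, h₂, hm₁, hm₂⟩ := two_nbrs hp hw hwa hwb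
        obtain ⟨n₁, n₂, hn⟩ := hdeg2 w
        rcases hn z hz with rfl | rfl <;> rcases hn z₁ h₁ with rfl | rfl <;>
          rcases hn z₂ h₂ with rfl | rfl <;> first | exact hm₁ | exact hm₂ | exact absurd rfl h12
  have step : ∀ (x w : V) (q' : S.Walk x w), x ∈ p.support → w ∈ p.support := by
    intro x w q'
    induction q' with
    | nil => exact id
    | cons h q' ih => exact fun hx => ih (closure _ hx _ h)
  obtain ⟨qk⟩ := rak
  have hkp : k ∈ p.support := step _ _ qk p.start_mem_support
  obtain ⟨z₁, z₂, h12, h₁, h₂, _, _⟩ := two_nbrs hp hkp hka hkb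
  exact h12 (hk _ _ h₁ h₂)

end Leaf

section Kempe

variable {G : SimpleGraph V} {c : ℕ} {ℓ : Sym2 V → ℕ}

/-- The subgraph of edges colored `α` or `β`. -/
def kg (G : SimpleGraph V) (ℓ : Sym2 V → ℕ) (α β : ℕ) : SimpleGraph V where
  Adj a b := G.Adj a b ∧ (ℓ s(a, b) = α ∨ ℓ s(a, b) = β)
  symm := by
    constructor
    intro a b ⟨h, hc⟩
    exact ⟨h.symm, by rwa [Sym2.eq_swap]⟩
  loopless := ⟨fun a ⟨h, _⟩ => G.irrefl h⟩

lemma kempe (hp : IsProperLabeling G c ℓ) {α β : ℕ}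
    (hα0 : α ≠ 0) (hβ0 : β ≠ 0) (hαc : α ≤ c) (hβc : β ≤ c) (hαβ : α ≠ β) (z₀ : V) :
    ∃ ℓ₂ : Sym2 V → ℕ,
      IsProperLabeling G c ℓ₂ ∧
      (∀ e, ℓ₂ e = 0 ↔ ℓ e = 0) ∧
      (∀ w γ, γ ≠ α → γ ≠ β → (γ ∈ strongAt G ℓ₂ w ↔ γ ∈ strongAt G ℓ w)) ∧
      (∀ a b, ¬ (kg G ℓ α β).Reachable z₀ a → ℓ₂ s(a, b) = ℓ s(a, b)) ∧
      (∀ w, (kg G ℓ α β).Reachable z₀ w →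
        ((α ∈ strongAt G ℓ₂ w ↔ β ∈ strongAt G ℓ w) ∧
         (β ∈ strongAt G ℓ₂ w ↔ α ∈ strongAt G ℓ w))) := by
  classical
  set S := kg G ℓ α β with hS
  set SW : Sym2 V → Prop := fun e => ∃ a b, e = s(a, b) ∧ S.Adj a b ∧ S.Reachable z₀ a
    with hSWdef
  set ℓ₂ : Sym2 V → ℕ := fun e =>
    if SW e then (if ℓ e = α then β else if ℓ e = β then α else ℓ e) else ℓ e with hℓ₂
  have hSW_col : ∀ e, SW e → ℓ e = α ∨ ℓ e = β := by
    rintro e ⟨a, b, rfl, hadj, _⟩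
    exact (show G.Adj a b ∧ (ℓ s(a, b) = α ∨ ℓ s(a, b) = β) from hadj).2
  have hSW_reach : ∀ e, SW e → ∀ w ∈ e, S.Reachable z₀ w := by
    rintro e ⟨a, b, rfl, hadj, hr⟩ w hw
    rcases Sym2.mem_iff.1 hw with rfl | rfl
    · exact hr
    · exact hr.trans hadj.reachable
  have hSW_intro : ∀ a b, S.Adj a b → S.Reachable z₀ a → SW s(a, b) :=
    fun a b hadj hr => ⟨a, b, rfl, hadj, hr⟩
  have hval_sw : ∀ e, SW e → (ℓ e = α → ℓ₂ e = β) ∧ (ℓ e = β → ℓ₂ e = α) := by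
    intro e hsw
    constructor
    · intro h; simp only [hℓ₂]; rw [if_pos hsw, if_pos h]
    · intro h
      have hne : ℓ e ≠ α := by rw [h]; exact fun hc => hαβ hc.symm
      simp only [hℓ₂]; rw [if_pos hsw, if_neg hne, if_pos h]
  have hval_nsw : ∀ e, ¬ SW e → ℓ₂ e = ℓ e := fun e h => by
    simp only [hℓ₂, if_neg h]
  have hval_mem : ∀ e, SW e → (ℓ₂ e = α ∨ ℓ₂ e = β) ∧ ℓ₂ e ≠ 0 := by
    intro e hsw
    rcases hSW_col e hsw with h | h
    · exact ⟨Or.inr ((hval_sw e hsw).1 h), by rw [(hval_sw e hsw).1 h]; exact hβ0⟩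
    · exact ⟨Or.inl ((hval_sw e hsw).2 h), by rw [(hval_sw e hsw).2 h]; exact hα0⟩
  have hval_inj : ∀ e, SW e → ∀ e', SW e' → ℓ₂ e = ℓ₂ e' → ℓ e = ℓ e' := by
    intro e hsw e' hsw' h
    rcases hSW_col e hsw with h1 | h1 <;> rcases hSW_col e' hsw' with h2 | h2
    · rw [h1, h2]
    · exfalso
      rw [(hval_sw e hsw).1 h1, (hval_sw e' hsw').2 h2] at h
      exact hαβ h.symm
    · exfalso
      rw [(hval_sw e hsw).2 h1, (hval_sw e' hsw').1 h2] at h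
      exact hαβ h
    · rw [h1, h2]
  have hmix : ∀ e₁ e₂, e₁ ∈ G.edgeSet → e₂ ∈ G.edgeSet → SW e₁ → ¬ SW e₂ →
      (∃ w, w ∈ e₁ ∧ w ∈ e₂) → ℓ₂ e₁ = ℓ₂ e₂ → False := by
    rintro e₁ e₂ he₁ he₂ hsw₁ hsw₂ ⟨w, hw₁, hw₂⟩ hc
    obtain ⟨z₂, hz₂, rfl⟩ := edge_decomp he₂ hw₂
    apply hsw₂
    apply hSW_intro w z₂ _ (hSW_reach e₁ hsw₁ w hw₁)
    refine (show G.Adj w z₂ ∧ (ℓ s(w, z₂) = α ∨ ℓ s(w, z₂) = β) from ⟨hz₂, ?_⟩)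
    have := (hval_mem e₁ hsw₁).1
    rw [hc, hval_nsw _ hsw₂] at this
    exact this
  refine ⟨ℓ₂, ⟨?_, ?_⟩, ?_, ?_, ?_, ?_⟩
  · -- bound
    intro e he
    by_cases hsw : SW e
    · rcases (hval_mem e hsw).1 with h | h <;> rw [h] <;> assumption
    · rw [hval_nsw e hsw]; exact hp.1 e he
  · -- properness
    intro e₁ he₁ e₂ he₂ hne hshare hc
    by_contra h0
    by_cases hsw₁ : SW e₁ <;> by_cases hsw₂ : SW e₂
    · have h := hval_inj e₁ hsw₁ e₂ hsw₂ hc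
      have := hp.2 e₁ he₁ e₂ he₂ hne hshare h
      rcases hSW_col e₁ hsw₁ with h1 | h1 <;> rw [this] at h1
      · exact hα0 h1.symm
      · exact hβ0 h1.symm
    · exact hmix e₁ e₂ he₁ he₂ hsw₁ hsw₂ hshare hc
    · obtain ⟨w, hw₁, hw₂⟩ := hshare
      exact hmix e₂ e₁ he₂ he₁ hsw₂ hsw₁ ⟨w, hw₂, hw₁⟩ hc.symm
    · rw [hval_nsw e₁ hsw₁, hval_nsw e₂ hsw₂] at hc
      exact h0 ((hval_nsw e₁ hsw₁).trans (hp.2 e₁ he₁ e₂ he₂ hne hshare hc))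
  · -- weak preservation
    intro e
    by_cases hsw : SW e
    · constructor
      · intro h; exact absurd h (hval_mem e hsw).2
      · intro h
        rcases hSW_col e hsw with h1 | h1 <;> rw [h] at h1
        · exact absurd h1.symm hα0
        · exact absurd h1.symm hβ0
    · rw [hval_nsw e hsw]
  · -- strongAt preservation for other colors
    intro w γ hγα hγβ
    constructor
    · rintro ⟨h0, z, hadj, hcz⟩
      refine ⟨h0, z, hadj, ?_⟩
      by_cases hsw : SW s(w, z)
      · rcases (hval_mem _ hsw).1 with h | h <;> rw [hcz] at h
        · exact absurd h hγα
        · exact absurd h hγβ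
      · rw [← hval_nsw _ hsw]; exact hcz
    · rintro ⟨h0, z, hadj, hcz⟩
      refine ⟨h0, z, hadj, ?_⟩
      by_cases hsw : SW s(w, z)
      · rcases hSW_col _ hsw with h | h <;> rw [hcz] at h
        · exact absurd h hγα
        · exact absurd h hγβ
      · rw [hval_nsw _ hsw]; exact hcz
  · -- edges at unreachable vertices unchanged
    intro a b hr
    apply hval_nsw
    intro hsw
    exact hr (hSW_reach _ hsw a (by simp))
  · -- swap of α and β at reachable vertices
    intro w hr
    constructor
    · constructor
      · rintro ⟨h0, z, hadj, hcz⟩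
        by_cases hsw : SW s(w, z)
        · rcases hSW_col _ hsw with h | h
          · rw [(hval_sw _ hsw).1 h] at hcz
            exact absurd hcz.symm hαβ
          · exact ⟨hβ0, z, hadj, h⟩
        · rw [hval_nsw _ hsw] at hcz
          exact absurd (hSW_intro w z (show G.Adj w z ∧ (ℓ s(w, z) = α ∨ ℓ s(w, z) = β) from ⟨hadj, Or.inl hcz⟩) hr) hsw
      · rintro ⟨h0, z, hadj, hcz⟩
        have hsw : SW s(w, z) := hSW_intro w z (show G.Adj w z ∧ (ℓ s(w, z) = α ∨ ℓ s(w, z) = β) from ⟨hadj, Or.inr hcz⟩) hr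
        exact ⟨hα0, z, hadj, (hval_sw _ hsw).2 hcz⟩
    · constructor
      · rintro ⟨h0, z, hadj, hcz⟩
        by_cases hsw : SW s(w, z)
        · rcases hSW_col _ hsw with h | h
          · exact ⟨hα0, z, hadj, h⟩
          · rw [(hval_sw _ hsw).2 h] at hcz
            exact absurd hcz hαβ
        · rw [hval_nsw _ hsw] at hcz
          exact absurd (hSW_intro w z (show G.Adj w z ∧ (ℓ s(w, z) = α ∨ ℓ s(w, z) = β) from ⟨hadj, Or.inr hcz⟩) hr) hsw
      · rintro ⟨h0, z, hadj, hcz⟩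
        have hsw : SW s(w, z) := hSW_intro w z (show G.Adj w z ∧ (ℓ s(w, z) = α ∨ ℓ s(w, z) = β) from ⟨hadj, Or.inl hcz⟩) hr
        exact ⟨hβ0, z, hadj, (hval_sw _ hsw).1 hcz⟩

end Kempe

section Rotate

lemma rotate [DecidableEq V] {G H : SimpleGraph V} {c : ℕ} {x v₀ : V}
    (hGH : H.edgeSet = insert s(x, v₀) G.edgeSet) (hnG : s(x, v₀) ∉ G.edgeSet)
    {ℓ : Sym2 V → ℕ} (hp : IsProperLabeling G c ℓ)
    (m : ℕ) (y : ℕ → V) (hy0 : y 0 = v₀)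
    (hyH : ∀ r, r ≤ m → H.Adj x (y r))
    (hyG : ∀ r, 1 ≤ r → r ≤ m → G.Adj x (y r))
    (hyinj : ∀ r, r ≤ m → ∀ t, t ≤ m → y r = y t → r = t)
    (hfan : ∀ r, r < m → ℓ s(x, y (r+1)) ≠ 0 ∧ ℓ s(x, y (r+1)) ∉ strongAt G ℓ (y r))
    {γ : ℕ} (hγ0 : γ ≠ 0) (hγc : γ ≤ c)
    (hγx : γ ∉ strongAt G ℓ x) (hγm : γ ∉ strongAt G ℓ (y m)) :
    ∃ ℓ' : Sym2 V → ℕ, IsProperLabeling H c ℓ' ∧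
      {e ∈ H.edgeSet | ℓ' e = 0} = {e ∈ G.edgeSet | ℓ e = 0} := by
  classical
  have hGsub : G.edgeSet ⊆ H.edgeSet := by rw [hGH]; exact Set.subset_insert _ _
  have hHG : ∀ e ∈ H.edgeSet, e ≠ s(x, v₀) → e ∈ G.edgeSet := by
    intro e he hne
    rw [hGH] at he
    rcases Set.mem_insert_iff.1 he with h | h
    · exact absurd h hne
    · exact h
  have heqiff : ∀ r, r ≤ m → ∀ t, t ≤ m → (s(x, y r) = s(x, y t) ↔ r = t) := by
    intro r hr t ht
    constructor
    · intro h; exact hyinj r hr t ht (Sym2.congr_right.1 h)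
    · rintro rfl; rfl
  set F : Sym2 V → Prop := fun e => ∃ r, r ≤ m ∧ e = s(x, y r) with hF
  set ℓ' : Sym2 V → ℕ := fun e =>
    if h : F e then (if e = s(x, y m) then γ else ℓ s(x, y (Nat.find h + 1))) else ℓ e
    with hℓ'
  have heval : ∀ r, r ≤ m → ℓ' s(x, y r) = if r = m then γ else ℓ s(x, y (r+1)) := by
    intro r hr
    have hex : F s(x, y r) := ⟨r, hr, rfl⟩
    have hfind : Nat.find hex = r := by
      have hsp := Nat.find_spec hex
      exact ((heqiff r hr _ hsp.1).1 hsp.2).symm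
    simp only [hℓ']
    rw [dif_pos hex, hfind]
    by_cases hrm : r = m
    · subst hrm; rw [if_pos rfl, if_pos rfl]
    · rw [if_neg (fun h => hrm ((heqiff r hr m le_rfl).1 h)), if_neg hrm]
  have hevaln : ∀ e, ¬ F e → ℓ' e = ℓ e := by
    intro e h; simp only [hℓ']; rw [dif_neg h]
  have hFv₀ : F s(x, v₀) := ⟨0, Nat.zero_le _, by rw [hy0]⟩
  have hnonfanG : ∀ e ∈ H.edgeSet, ¬ F e → e ∈ G.edgeSet :=
    fun e he hf => hHG e he (fun h => hf (h ▸ hFv₀))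
  have hcstrong : ∀ r, r < m → ℓ s(x, y (r+1)) ∈ strongAt G ℓ x := fun r hr =>
    mem_strongAt (hfan r hr).1 (hyG (r+1) (by omega) (by omega)) rfl
  have hv : ∀ r, r ≤ m → ℓ' s(x, y r) ≠ 0 ∧ ℓ' s(x, y r) ∉ strongAt G ℓ (y r) ∧
      (∀ z, G.Adj x z → (∀ rr, rr ≤ m → z ≠ y rr) → ℓ s(x, z) ≠ ℓ' s(x, y r)) := by
    intro r hr
    rw [heval r hr]
    by_cases hrm : r = m
    · subst hrm
      rw [if_pos rfl]
      refine ⟨hγ0, hγm, ?_⟩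
      intro z hadj _ hEq
      exact hγx (mem_strongAt (hEq ▸ hγ0) hadj hEq)
    · have hrm' : r < m := lt_of_le_of_ne hr hrm
      rw [if_neg hrm]
      refine ⟨(hfan r hrm').1, (hfan r hrm').2, ?_⟩
      intro z hadj hz hEq
      have hne : z ≠ y (r+1) := hz (r+1) (by omega)
      exact (hfan r hrm').1
        (proper_pair hp (hyG (r+1) (by omega) (by omega)) hadj (fun h => hne h.symm)
          hEq.symm)
  have hbothfan : ∀ r r', r < r' → r' ≤ m → ℓ' s(x, y r) = ℓ' s(x, y r') → False := by
    intro r r' hrr hr'm hc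
    have hrm : r < m := lt_of_lt_of_le hrr hr'm
    rw [heval r (le_of_lt hrm), if_neg (by omega : ¬ r = m)] at hc
    by_cases h' : r' = m
    · subst h'
      rw [heval r' le_rfl, if_pos rfl] at hc
      exact hγx (hc ▸ hcstrong r hrm)
    · rw [heval r' hr'm, if_neg h'] at hc
      have hne : y (r+1) ≠ y (r'+1) := fun h => by
        have := hyinj (r+1) (by omega) (r'+1) (by omega) h; omega
      exact (hfan r hrm).1
        (proper_pair hp (hyG (r+1) (by omega) (by omega))
          (hyG (r'+1) (by omega) (by omega)) hne hc)
  have hmixed : ∀ e₂ ∈ H.edgeSet, ¬ F e₂ → ∀ r, r ≤ m → ∀ w, w ∈ s(x, y r) → w ∈ e₂ →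
      ℓ' s(x, y r) = ℓ' e₂ → False := by
    intro e₂ he₂ hf r hr w hw1 hw2 hc
    have he₂G : e₂ ∈ G.edgeSet := hnonfanG e₂ he₂ hf
    rw [hevaln e₂ hf] at hc
    obtain ⟨h0, hfree, hthird⟩ := hv r hr
    rcases Sym2.mem_iff.1 hw1 with rfl | rfl
    · obtain ⟨z₂, hadj, rfl⟩ := edge_decomp he₂G hw2
      refine hthird z₂ hadj ?_ hc.symm
      intro rr hrr hz
      exact hf ⟨rr, hrr, by rw [hz]⟩
    · obtain ⟨z₂, hadj, rfl⟩ := edge_decomp he₂G hw2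
      exact hfree (mem_strongAt h0 hadj hc.symm)
  refine ⟨ℓ', ⟨?_, ?_⟩, ?_⟩
  · intro e he
    by_cases hf : F e
    · obtain ⟨r, hr, rfl⟩ := hf
      rw [heval r hr]
      by_cases hrm : r = m
      · rw [if_pos hrm]; exact hγc
      · rw [if_neg hrm]
        exact hp.1 _ (G.mem_edgeSet.2
          (hyG (r+1) (by omega) (by omega : r + 1 ≤ m)))
    · rw [hevaln e hf]
      exact hp.1 e (hnonfanG e he hf)
  · rintro e₁ he₁ e₂ he₂ hne ⟨w, hw1, hw2⟩ hc
    by_contra h0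
    by_cases hf1 : F e₁ <;> by_cases hf2 : F e₂
    · obtain ⟨r, hr, rfl⟩ := hf1
      obtain ⟨r', hr', rfl⟩ := hf2
      have hrr : r ≠ r' := fun h => hne (by rw [h])
      rcases lt_or_gt_of_ne hrr with h | h
      · exact hbothfan r r' h hr' hc
      · exact hbothfan r' r h hr hc.symm
    · obtain ⟨r, hr, rfl⟩ := hf1
      exact hmixed e₂ he₂ hf2 r hr w hw1 hw2 hc
    · obtain ⟨r, hr, rfl⟩ := hf2
      exact hmixed e₁ he₁ hf1 r hr w hw2 hw1 hc.symm
    · exact h0 ((hevaln e₁ hf1).trans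
        (hp.2 e₁ (hnonfanG e₁ he₁ hf1) e₂ (hnonfanG e₂ he₂ hf2) hne ⟨w, hw1, hw2⟩
          (by rw [← hevaln e₁ hf1, ← hevaln e₂ hf2]; exact hc)))
  · ext e
    simp only [Set.mem_setOf_eq]
    constructor
    · rintro ⟨he, h0⟩
      by_cases hf : F e
      · exfalso
        obtain ⟨r, hr, rfl⟩ := hf
        exact (hv r hr).1 h0
      · exact ⟨hnonfanG e he hf, by rwa [hevaln e hf] at h0⟩
    · rintro ⟨he, h0⟩
      have hf : ¬ F e := by
        rintro ⟨r, hr, rfl⟩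
        rcases Nat.eq_zero_or_pos r with rfl | hr1
        · rw [hy0] at he; exact hnG he
        · have : r - 1 < m := by omega
          have h1 := (hfan (r-1) this).1
          rw [(by omega : r - 1 + 1 = r)] at h1
          exact h1 h0
      exact ⟨hGsub he, by rw [hevaln e hf]; exact h0⟩

end Rotate

section Ext

lemma ext_lemma [Fintype V] [DecidableEq V] {G H : SimpleGraph V} {c : ℕ} {x v₀ : V}
    (hGH : H.edgeSet = insert s(x, v₀) G.edgeSet) (hnG : s(x, v₀) ∉ G.edgeSet)
    {ℓ : Sym2 V → ℕ} (hp : IsProperLabeling G c ℓ)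
    (hdeg : ∀ w, (w = x ∨ H.Adj x w) → (H.neighborSet w).ncard ≤ c - 1) :
    ∃ ℓ' : Sym2 V → ℕ, IsProperLabeling H c ℓ' ∧
      {e ∈ H.edgeSet | ℓ' e = 0} = {e ∈ G.edgeSet | ℓ e = 0} := by
  classical
  have hAdjGH : ∀ a b : V, G.Adj a b → H.Adj a b := by
    intro a b h
    exact H.mem_edgeSet.1 (by rw [hGH]; exact Set.mem_insert_of_mem _ (G.mem_edgeSet.2 h))
  have hxv₀ : H.Adj x v₀ := H.mem_edgeSet.1 (by rw [hGH]; exact Set.mem_insert _ _)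
  have hGn : ¬ G.Adj x v₀ := fun h => hnG (G.mem_edgeSet.2 h)
  have free : ∀ w, (w = x ∨ H.Adj x w) → ∃ γ, γ ≠ 0 ∧ γ ≤ c ∧ γ ∉ strongAt G ℓ w := by
    intro w hw
    by_contra hcon
    push_neg at hcon
    have hch : ∀ γ : ℕ, ∃ z, 1 ≤ γ → γ ≤ c → G.Adj w z ∧ ℓ s(w, z) = γ := by
      intro γ
      by_cases h : 1 ≤ γ ∧ γ ≤ c
      · obtain ⟨-, z, hz1, hz2⟩ := hcon γ (by omega) h.2
        exact ⟨z, fun _ _ => ⟨hz1, hz2⟩⟩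
      · exact ⟨w, fun h1 h2 => absurd ⟨h1, h2⟩ h⟩
    choose f hf using hch
    have hinj : Set.InjOn f (Set.Icc 1 c) := by
      intro γ₁ h₁ γ₂ h₂ hEq
      obtain ⟨ha₁, hb₁⟩ := hf γ₁ h₁.1 h₁.2
      obtain ⟨ha₂, hb₂⟩ := hf γ₂ h₂.1 h₂.2
      rw [← hb₁, ← hb₂, hEq]
    have hmaps : ∀ γ ∈ Set.Icc (1:ℕ) c, f γ ∈ H.neighborSet w := fun γ h =>
      (H.mem_neighborSet w (f γ)).2 (hAdjGH _ _ (hf γ h.1 h.2).1)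
    have hle := Set.ncard_le_ncard_of_injOn f hmaps hinj (Set.toFinite _)
    have hIcc : (Set.Icc (1:ℕ) c).ncard = c := by
      rw [← Finset.coe_Icc, Set.ncard_coe_finset, Nat.card_Icc]
      omega
    have hd := hdeg w hw
    have hcpos : 1 ≤ (H.neighborSet x).ncard :=
      (Set.ncard_pos (Set.toFinite _)).2 ⟨v₀, (H.mem_neighborSet x v₀).2 hxv₀⟩
    have hcx := hdeg x (Or.inl rfl)
    omega
  have uniq : ∀ (w : V) (δ : ℕ), δ ≠ 0 → ∀ z₁ z₂, G.Adj w z₁ → G.Adj w z₂ →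
      ℓ s(w, z₁) = δ → ℓ s(w, z₂) = δ → z₁ = z₂ := by
    intro w δ hδ z₁ z₂ h1 h2 hc1 hc2
    by_contra hne
    exact hδ (hc1 ▸ proper_pair hp h1 h2 hne (hc1.trans hc2.symm))
  suffices h : ∀ d i (y : ℕ → V), Fintype.card V ≤ i + d →
      y 0 = v₀ →
      (∀ r, r ≤ i → H.Adj x (y r)) →
      (∀ r, 1 ≤ r → r ≤ i → G.Adj x (y r)) →
      (∀ r, r ≤ i → ∀ t, t ≤ i → y r = y t → r = t) →
      (∀ r, r < i → ℓ s(x, y (r+1)) ≠ 0 ∧ ℓ s(x, y (r+1)) ∉ strongAt G ℓ (y r)) →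
      ∃ ℓ' : Sym2 V → ℕ, IsProperLabeling H c ℓ' ∧
        {e ∈ H.edgeSet | ℓ' e = 0} = {e ∈ G.edgeSet | ℓ e = 0} by
    exact h (Fintype.card V) 0 (fun _ => v₀) (by omega) rfl
      (fun r _ => hxv₀)
      (fun r h1 h2 => absurd (h1.trans h2) (by omega))
      (fun r hr t ht _ => by omega)
      (fun r hr => absurd hr (by omega))
  intro d
  induction d with
  | zero =>
    intro i y hcard hy0 hyH hyG hyinj hfan
    exfalso
    have hcard2 : (Finset.range (i+1)).card ≤ (Finset.univ : Finset V).card := by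
      apply Finset.card_le_card_of_injOn y (fun a _ => Finset.mem_univ _)
      intro a ha b hb hEq
      simp only [Finset.coe_range, Set.mem_Iio] at ha hb
      exact hyinj a (by omega) b (by omega) hEq
    simp only [Finset.card_range, Finset.card_univ] at hcard2
    omega
  | succ d ih =>
    intro i y hcard hy0 hyH hyG hyinj hfan
    obtain ⟨β, hβ0, hβc, hβfree⟩ := free (y i) (Or.inr (hyH i le_rfl))
    by_cases hβx : β ∈ strongAt G ℓ x
    · obtain ⟨-, z, hxz, hz⟩ := hβx
      by_cases hzin : ∃ j, j ≤ i ∧ z = y j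
      · obtain ⟨j, hj, rfl⟩ := hzin
        have hj0 : j ≠ 0 := by
          rintro rfl
          rw [hy0] at hxz
          exact hGn hxz
        have hji : j ≠ i := by
          rintro rfl
          exact hβfree (mem_strongAt hβ0 hxz.symm (by rw [Sym2.eq_swap]; exact hz))
        have hjlt : j < i := lt_of_le_of_ne hj hji
        obtain ⟨α, hα0, hαc, hαx⟩ := free x (Or.inl rfl)
        have hαβ : α ≠ β := fun h => hαx (h ▸ mem_strongAt hβ0 hxz hz)
        set S := kg G ℓ α β with hSdef
        have hSadj : ∀ a b, S.Adj a b ↔ (G.Adj a b ∧ (ℓ s(a, b) = α ∨ ℓ s(a, b) = β)) :=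
          fun a b => by rw [hSdef]; exact Iff.rfl
        have hjfan := hfan (j-1) (by omega)
        rw [(by omega : j - 1 + 1 = j)] at hjfan
        have hβj1 : β ∉ strongAt G ℓ (y (j-1)) := hz ▸ hjfan.2
        have hcstrong : ∀ r, r < i → ℓ s(x, y (r+1)) ∈ strongAt G ℓ x := fun r hr =>
          mem_strongAt (hfan r hr).1 (hyG (r+1) (by omega) (by omega)) rfl
        have hcα : ∀ r, r < i → ℓ s(x, y (r+1)) ≠ α := fun r hr h =>
          hαx (h ▸ hcstrong r hr)
        have hcβ : ∀ r, r < i → ℓ s(x, y (r+1)) = β → r + 1 = j := by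
          intro r hr h
          by_contra hne
          have hyne : y (r+1) ≠ y j := fun hEq =>
            hne (hyinj (r+1) (by omega) j (by omega) hEq)
          exact (hfan r hr).1
            (proper_pair hp (hyG (r+1) (by omega) (by omega)) hxz hyne (h.trans hz.symm))
        by_cases hR1 : S.Reachable (y (j-1)) x
        · by_cases hR2 : S.Reachable (y (j-1)) (y i)
          · -- three leaves: contradiction
            exfalso
            have hdegS : ∀ w, ∃ n₁ n₂ : V, ∀ z', S.Adj w z' → z' = n₁ ∨ z' = n₂ := by
              intro w
              refine ⟨if h : ∃ z', G.Adj w z' ∧ ℓ s(w, z') = α then h.choose else w,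
                      if h : ∃ z', G.Adj w z' ∧ ℓ s(w, z') = β then h.choose else w, ?_⟩
              intro z' hadj'
              obtain ⟨hadj, hcol | hcol⟩ := (hSadj w z').1 hadj'
              · left
                have hx' : ∃ z'', G.Adj w z'' ∧ ℓ s(w, z'') = α := ⟨z', hadj, hcol⟩
                rw [dif_pos hx']
                exact uniq w α hα0 z' hx'.choose hadj hx'.choose_spec.1 hcol
                  hx'.choose_spec.2
              · right
                have hx' : ∃ z'', G.Adj w z'' ∧ ℓ s(w, z'') = β := ⟨z', hadj, hcol⟩
                rw [dif_pos hx']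
                exact uniq w β hβ0 z' hx'.choose hadj hx'.choose_spec.1 hcol
                  hx'.choose_spec.2
            have hleaf : ∀ w : V, (α ∉ strongAt G ℓ w ∨ β ∉ strongAt G ℓ w) →
                ∀ z₁ z₂, S.Adj w z₁ → S.Adj w z₂ → z₁ = z₂ := by
              intro w hfr z₁ z₂ ha1 ha2
              obtain ⟨h1, hc1⟩ := (hSadj w z₁).1 ha1
              obtain ⟨h2, hc2⟩ := (hSadj w z₂).1 ha2
              rcases hfr with hfr | hfr
              · have hc1' : ℓ s(w, z₁) = β := by
                  rcases hc1 with h | h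
                  · exact absurd (mem_strongAt hα0 h1 h) hfr
                  · exact h
                have hc2' : ℓ s(w, z₂) = β := by
                  rcases hc2 with h | h
                  · exact absurd (mem_strongAt hα0 h2 h) hfr
                  · exact h
                exact uniq w β hβ0 z₁ z₂ h1 h2 hc1' hc2'
              · have hc1' : ℓ s(w, z₁) = α := by
                  rcases hc1 with h | h
                  · exact h
                  · exact absurd (mem_strongAt hβ0 h1 h) hfr
                have hc2' : ℓ s(w, z₂) = α := by
                  rcases hc2 with h | h
                  · exact h
                  · exact absurd (mem_strongAt hβ0 h2 h) hfr
                exact uniq w α hα0 z₁ z₂ h1 h2 hc1' hc2'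
            have hxj1 : y (j-1) ≠ x := (hyH (j-1) (by omega)).ne'
            have hxi : y i ≠ x := (hyH i le_rfl).ne'
            have hj1i : y i ≠ y (j-1) := fun hEq => by
              have := hyinj i le_rfl (j-1) (by omega) hEq
              omega
            exact leaf3 hdegS (hleaf _ (Or.inr hβj1)) (hleaf _ (Or.inl hαx))
              (hleaf _ (Or.inr hβfree)) hxj1 hj1i hxi hR1 hR2
          · -- Kempe swap on component of y i
            have hRix : ¬ S.Reachable (y i) x := fun h => hR2 (hR1.trans h.symm)
            obtain ⟨ℓ₂, hp₂, hw₂, hK4, hK5, hK6⟩ := kempe hp hα0 hβ0 hαc hβc hαβ (y i)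
            have hsA : ∀ w, ¬ S.Reachable (y i) w →
                strongAt G ℓ₂ w = strongAt G ℓ w := by
              intro w hw
              ext n
              simp only [strongAt, Set.mem_setOf_eq]
              constructor
              · rintro ⟨h0, z', hadj, hcz⟩
                exact ⟨h0, z', hadj, by rw [← hK5 w z' hw]; exact hcz⟩
              · rintro ⟨h0, z', hadj, hcz⟩
                exact ⟨h0, z', hadj, by rw [hK5 w z' hw]; exact hcz⟩
            have hfan₂ : ∀ r, r < i → ℓ₂ s(x, y (r+1)) ≠ 0 ∧
                ℓ₂ s(x, y (r+1)) ∉ strongAt G ℓ₂ (y r) := by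
              intro r hr
              have hval : ℓ₂ s(x, y (r+1)) = ℓ s(x, y (r+1)) := hK5 x (y (r+1)) hRix
              rw [hval]
              refine ⟨(hfan r hr).1, ?_⟩
              by_cases hcb : ℓ s(x, y (r+1)) = β
              · have hrj : r + 1 = j := hcβ r hr hcb
                have hry : y r = y (j-1) := by
                  congr 1
                  omega
                rw [hcb, hry]
                have hnr : ¬ S.Reachable (y i) (y (j-1)) := fun h => hR2 h.symm
                rw [hsA _ hnr]
                exact hβj1
              · intro hmem
                exact (hfan r hr).2 ((hK4 (y r) _ (hcα r hr) hcb).1 hmem)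
            have hαx₂ : α ∉ strongAt G ℓ₂ x := by rw [hsA x hRix]; exact hαx
            have hαyi : α ∉ strongAt G ℓ₂ (y i) := fun h =>
              hβfree ((hK6 (y i) (Reachable.refl _)).1.1 h)
            obtain ⟨ℓ', hℓ'p, hℓ'w⟩ := rotate hGH hnG hp₂ i y hy0 hyH hyG hyinj hfan₂
              hα0 hαc hαx₂ hαyi
            refine ⟨ℓ', hℓ'p, ?_⟩
            rw [hℓ'w]
            ext e
            simp only [Set.mem_setOf_eq]
            rw [hw₂ e]
        · -- Kempe swap on component of y (j-1)
          obtain ⟨ℓ₂, hp₂, hw₂, hK4, hK5, hK6⟩ := kempe hp hα0 hβ0 hαc hβc hαβ (y (j-1))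
          have hsA : ∀ w, ¬ S.Reachable (y (j-1)) w →
              strongAt G ℓ₂ w = strongAt G ℓ w := by
            intro w hw
            ext n
            simp only [strongAt, Set.mem_setOf_eq]
            constructor
            · rintro ⟨h0, z', hadj, hcz⟩
              exact ⟨h0, z', hadj, by rw [← hK5 w z' hw]; exact hcz⟩
            · rintro ⟨h0, z', hadj, hcz⟩
              exact ⟨h0, z', hadj, by rw [hK5 w z' hw]; exact hcz⟩
          have hfan₂ : ∀ r, r < j - 1 → ℓ₂ s(x, y (r+1)) ≠ 0 ∧
              ℓ₂ s(x, y (r+1)) ∉ strongAt G ℓ₂ (y r) := by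
            intro r hr
            have hval : ℓ₂ s(x, y (r+1)) = ℓ s(x, y (r+1)) := hK5 x (y (r+1)) hR1
            rw [hval]
            refine ⟨(hfan r (by omega)).1, ?_⟩
            have hcb : ℓ s(x, y (r+1)) ≠ β := fun h => by
              have := hcβ r (by omega) h
              omega
            intro hmem
            exact (hfan r (by omega)).2 ((hK4 (y r) _ (hcα r (by omega)) hcb).1 hmem)
          have hαx₂ : α ∉ strongAt G ℓ₂ x := by rw [hsA x hR1]; exact hαx
          have hαyj : α ∉ strongAt G ℓ₂ (y (j-1)) := fun h =>
            hβj1 ((hK6 (y (j-1)) (Reachable.refl _)).1.1 h)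
          obtain ⟨ℓ', hℓ'p, hℓ'w⟩ := rotate hGH hnG hp₂ (j-1) y hy0
            (fun r hr => hyH r (by omega)) (fun r h1 h2 => hyG r h1 (by omega))
            (fun r hr t ht hEq => hyinj r (by omega) t (by omega) hEq)
            hfan₂ hα0 hαc hαx₂ hαyj
          refine ⟨ℓ', hℓ'p, ?_⟩
          rw [hℓ'w]
          ext e
          simp only [Set.mem_setOf_eq]
          rw [hw₂ e]
      · -- extend the fan
        push_neg at hzin
        refine ih (i+1) (fun r => if r = i + 1 then z else y r) (by omega) ?_ ?_ ?_ ?_ ?_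
        · have h0 : (0:ℕ) ≠ i + 1 := by omega
          simp only [if_neg h0]
          exact hy0
        · intro r hr
          by_cases h : r = i + 1
          · simp only [if_pos h]
            exact hAdjGH _ _ hxz
          · simp only [if_neg h]
            exact hyH r (by omega)
        · intro r h1 h2
          by_cases h : r = i + 1
          · simp only [if_pos h]
            exact hxz
          · simp only [if_neg h]
            exact hyG r h1 (by omega)
        · intro r hr t ht hEq
          by_cases h : r = i + 1 <;> by_cases h' : t = i + 1
          · omega
          · exfalso
            simp only [if_pos h, if_neg h'] at hEq
            exact hzin t (by omega) hEq
          · exfalso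
            simp only [if_neg h, if_pos h'] at hEq
            exact hzin r (by omega) hEq.symm
          · simp only [if_neg h, if_neg h'] at hEq
            exact hyinj r (by omega) t (by omega) hEq
        · intro r hr
          by_cases h : r = i
          · subst h
            have h1 : r + 1 = r + 1 := rfl
            simp only [if_pos rfl, if_neg (by omega : r ≠ r + 1)]
            exact ⟨hz ▸ hβ0, hz ▸ hβfree⟩
          · have h1 : r + 1 ≠ i + 1 := by omega
            have h2 : r ≠ i + 1 := by omega
            simp only [if_neg h1, if_neg h2]
            exact hfan r (by omega)
    · exact rotate hGH hnG hp i y hy0 hyH hyG hyinj hfan hβ0 hβc hβx hβfree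

end Ext
end AddEdgeAux


open AddEdgeAux in
/-- If `G` has a proper `c`-colored labeling with exactly `k` weak edges, and a
non-edge `{u,v}` is added such that in the new graph every vertex in the closed
neighborhood of `u` has degree at most `c-1`, then the new graph also has a
proper `c`-colored labeling with exactly `k` weak edges. -/
theorem add_edge_of_low_degree {V : Type*} [Fintype V] [DecidableEq V]
    (G : SimpleGraph V) (c k : ℕ) (ℓ : Sym2 V → ℕ)
    (hproper : IsProperLabeling G c ℓ) (hweak : weakCount G ℓ = k)
    (u v : V) (huv : u ≠ v) (hne : ¬ G.Adj u v)
    (G' : SimpleGraph V) (hG' : G' = G ⊔ SimpleGraph.fromEdgeSet {s(u, v)})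
    (hdeg : ∀ w ∈ insert u (G'.neighborSet u), (G'.neighborSet w).ncard ≤ c - 1) :
    ∃ ℓ' : Sym2 V → ℕ, IsProperLabeling G' c ℓ' ∧ weakCount G' ℓ' = k := by
  have hGH : G'.edgeSet = insert s(u, v) G.edgeSet := by
    rw [hG', edgeSet_sup, edgeSet_fromEdgeSet]
    have hd : ({s(u, v)} : Set (Sym2 V)) \ Sym2.diagSet = {s(u, v)} := by
      ext e
      simp only [Set.mem_diff, Set.mem_singleton_iff, Sym2.mem_diagSet,
        and_iff_left_iff_imp]
      rintro rfl
      simp [Sym2.mk_isDiag_iff, huv]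
    rw [hd, Set.union_singleton]
  have hnG : s(u, v) ∉ G.edgeSet := fun h => hne (G.mem_edgeSet.1 h)
  have hdeg' : ∀ w, (w = u ∨ G'.Adj u w) → (G'.neighborSet w).ncard ≤ c - 1 := by
    intro w hw
    apply hdeg w
    rcases hw with rfl | hw
    · exact Set.mem_insert _ _
    · exact Set.mem_insert_of_mem _ ((G'.mem_neighborSet u w).2 hw)
  obtain ⟨ℓ', hp', hws⟩ := ext_lemma hGH hnG hproper hdeg'
  refine ⟨ℓ', hp', ?_⟩
  show ({e ∈ G'.edgeSet | ℓ' e = 0}).ncard = k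
  rw [hws]
  exact hweak
end

section
/- Let G=(V,E) be a graph with an edge e={u,v}, let c = Δ(G), and suppose L is a proper c-colored labeling of (V, E\{e}) with no weak edges. If for every subset Z ⊆ N_G(u) with |Z| ≥ 2 and v ∈ Z it holds that Σ_{z∈Z}(deg_G(z)+1-c) < 2, then there is a proper c-colored labeling of G with no weak edges. -/
open SimpleGraph

set_option linter.unusedSectionVars false
set_option linter.unusedVariables false
set_option maxHeartbeats 1000000

namespace VF

variable {V : Type*} [DecidableEq V]

/-- proper, no-weak labeling with colors in `[1,c]`, vertex-centric form. -/
def PNW (H : SimpleGraph V) (c : ℕ) (m : Sym2 V → ℕ) : Prop :=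
  (∀ x w, H.Adj x w → 1 ≤ m s(x, w) ∧ m s(x, w) ≤ c) ∧
  (∀ x w w', H.Adj x w → H.Adj x w' → w ≠ w' → m s(x, w) ≠ m s(x, w'))

/-- color `a` is a legal color missing at `x`. -/
def Free (H : SimpleGraph V) (c : ℕ) (m : Sym2 V → ℕ) (x : V) (a : ℕ) : Prop :=
  1 ≤ a ∧ a ≤ c ∧ ∀ w, H.Adj x w → m s(x, w) ≠ a

/-- Vizing fan chains at `u` starting from `v`. -/
inductive Chain (H : SimpleGraph V) (c : ℕ) (m : Sym2 V → ℕ) (u v : V) : V → List V → Prop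
  | base : Chain H c m u v v []
  | step {x L y} : Chain H c m u v x L → H.Adj u y → y ∉ x :: L →
      Free H c m x (m s(u, y)) → Chain H c m u v y (x :: L)

lemma sym2_ne_of_ne {z w a b : V} (h1 : z ≠ a) (h2 : z ≠ b) : s(z, w) ≠ s(a, b) := by
  intro h
  have : z ∈ s(a, b) := h ▸ Sym2.mem_mk_left z w
  rcases Sym2.mem_iff.1 this with h | h <;> [exact h1 h; exact h2 h]

lemma s_ne {H : SimpleGraph V} {x w w' : V} (h1 : H.Adj x w') (hne : w ≠ w') :
    s(x, w) ≠ s(x, w') := by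
  intro h
  rcases Sym2.eq_iff.1 h with ⟨_, h2⟩ | ⟨h2, _⟩
  · exact hne h2
  · exact H.irrefl (h2 ▸ h1)

lemma Free.congr {H : SimpleGraph V} {c : ℕ} {m m' : Sym2 V → ℕ} {x : V} {a : ℕ}
    (hf : Free H c m x a) (h : ∀ w, H.Adj x w → m' s(x, w) = m s(x, w)) :
    Free H c m' x a :=
  ⟨hf.1, hf.2.1, fun w hw => (h w hw) ▸ hf.2.2 w hw⟩

lemma PNW.update {H : SimpleGraph V} {c : ℕ} {m : Sym2 V → ℕ} (hm : PNW H c m)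
    {a b : V} (hab : H.Adj a b) {β : ℕ} (ha : Free H c m a β) (hb : Free H c m b β) :
    PNW H c (Function.update m s(a, b) β) := by
  constructor
  · intro x w hxw
    by_cases h : s(x, w) = s(a, b)
    · rw [h, Function.update_self]; exact ⟨ha.1, ha.2.1⟩
    · rw [Function.update_of_ne h]; exact hm.1 x w hxw
  · intro x w w' hxw hxw' hne
    by_cases h1 : s(x, w) = s(a, b) <;> by_cases h2 : s(x, w') = s(a, b)
    · exact absurd (h1.trans h2.symm) (s_ne hxw' hne)
    · rw [h1, Function.update_self, Function.update_of_ne h2]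
      rcases Sym2.eq_iff.1 h1 with ⟨hx, _⟩ | ⟨hx, _⟩
      · exact fun hcon => (ha.2.2 w' (hx ▸ hxw')) (hx ▸ hcon.symm)
      · exact fun hcon => (hb.2.2 w' (hx ▸ hxw')) (hx ▸ hcon.symm)
    · rw [h2, Function.update_self, Function.update_of_ne h1]
      rcases Sym2.eq_iff.1 h2 with ⟨hx, _⟩ | ⟨hx, _⟩
      · exact fun hcon => (ha.2.2 w (hx ▸ hxw)) (hx ▸ hcon)
      · exact fun hcon => (hb.2.2 w (hx ▸ hxw)) (hx ▸ hcon)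
    · rw [Function.update_of_ne h1, Function.update_of_ne h2]
      exact hm.2 x w w' hxw hxw' hne

lemma Chain.congr {H : SimpleGraph V} {c : ℕ} {m : Sym2 V → ℕ} {u v y : V} {L : List V}
    (h : Chain H c m u v y L) {m' : Sym2 V → ℕ}
    (hagree : ∀ z ∈ y :: L, ∀ w, H.Adj z w → m' s(z, w) = m s(z, w))
    (hagreeu : ∀ z ∈ y :: L, m' s(u, z) = m s(u, z)) :
    Chain H c m' u v y L := by
  induction h with
  | base => exact Chain.base
  | @step x L y hch hadj hnot hfree ih =>
    refine Chain.step (ih ?_ ?_) hadj hnot ?_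
    · intro z hz; exact hagree z (List.mem_cons_of_mem _ hz)
    · intro z hz; exact hagreeu z (List.mem_cons_of_mem _ hz)
    · rw [hagreeu y (List.mem_cons_self)]
      exact hfree.congr fun w hw =>
        hagree x (List.mem_cons_of_mem _ (List.mem_cons_self)) w hw

lemma Chain.mem_spec {H : SimpleGraph V} {c : ℕ} {m : Sym2 V → ℕ} {u v y : V} {L : List V}
    (h : Chain H c m u v y L) : ∀ z ∈ y :: L, z = v ∨ H.Adj u z := by
  induction h with
  | base => intro z hz; left; simpa using hz
  | @step x L y hch hadj hnot hfree ih =>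
    intro z hz
    rcases List.mem_cons.1 hz with rfl | hz
    · exact Or.inr hadj
    · exact ih z hz

lemma Chain.prefix {H : SimpleGraph V} {c : ℕ} {m : Sym2 V → ℕ} {u v y : V} {L : List V}
    (h : Chain H c m u v y L) : ∀ z ∈ y :: L, ∃ L', Chain H c m u v z L' := by
  induction h with
  | base =>
    intro z hz
    have hzv : z = v := by simpa using hz
    exact ⟨[], hzv ▸ Chain.base⟩
  | @step x L y hch hadj hnot hfree ih =>
    intro z hz
    rcases List.mem_cons.1 hz with rfl | hz
    · exact ⟨x :: L, Chain.step hch hadj hnot hfree⟩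
    · exact ih z hz

lemma gd_adj {G : SimpleGraph V} {u v x w : V} :
    (G.deleteEdges {s(u, v)}).Adj x w ↔ G.Adj x w ∧ s(x, w) ≠ s(u, v) := by
  simp [deleteEdges_adj]

lemma extend {G : SimpleGraph V} {u v : V} (huv : G.Adj u v) {c : ℕ} {m : Sym2 V → ℕ}
    (hm : PNW (G.deleteEdges {s(u, v)}) c m) {β : ℕ}
    (hu : Free (G.deleteEdges {s(u, v)}) c m u β)
    (hv : Free (G.deleteEdges {s(u, v)}) c m v β) :
    PNW G c (Function.update m s(u, v) β) := by
  constructor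
  · intro x w hxw
    by_cases h : s(x, w) = s(u, v)
    · rw [h, Function.update_self]; exact ⟨hu.1, hu.2.1⟩
    · rw [Function.update_of_ne h]; exact hm.1 x w (gd_adj.2 ⟨hxw, h⟩)
  · intro x w w' hxw hxw' hne
    by_cases h1 : s(x, w) = s(u, v) <;> by_cases h2 : s(x, w') = s(u, v)
    · exact absurd (h1.trans h2.symm) (s_ne hxw' hne)
    · rw [h1, Function.update_self, Function.update_of_ne h2]
      have hadj' : (G.deleteEdges {s(u, v)}).Adj x w' := gd_adj.2 ⟨hxw', h2⟩
      rcases Sym2.eq_iff.1 h1 with ⟨hx, _⟩ | ⟨hx, _⟩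
      · exact fun hcon => (hu.2.2 w' (hx ▸ hadj')) (hx ▸ hcon.symm)
      · exact fun hcon => (hv.2.2 w' (hx ▸ hadj')) (hx ▸ hcon.symm)
    · rw [h2, Function.update_self, Function.update_of_ne h1]
      have hadj' : (G.deleteEdges {s(u, v)}).Adj x w := gd_adj.2 ⟨hxw, h1⟩
      rcases Sym2.eq_iff.1 h2 with ⟨hx, _⟩ | ⟨hx, _⟩
      · exact fun hcon => (hu.2.2 w (hx ▸ hadj')) (hx ▸ hcon)
      · exact fun hcon => (hv.2.2 w (hx ▸ hadj')) (hx ▸ hcon)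
    · rw [Function.update_of_ne h1, Function.update_of_ne h2]
      exact hm.2 x w w' (gd_adj.2 ⟨hxw, h1⟩) (gd_adj.2 ⟨hxw', h2⟩) hne

/-- Key "no extension" lemma: if `G` has no proper coloring, then no chain can end
at a vertex sharing a free color with `u`. -/
lemma noext {G : SimpleGraph V} {u v : V} (huv : G.Adj u v) {c : ℕ}
    (hng : ∀ m : Sym2 V → ℕ, ¬ PNW G c m) :
    ∀ (L : List V) (m : Sym2 V → ℕ) (y : V), PNW (G.deleteEdges {s(u, v)}) c m →
      Chain (G.deleteEdges {s(u, v)}) c m u v y L →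
      ∀ β, Free (G.deleteEdges {s(u, v)}) c m u β →
        Free (G.deleteEdges {s(u, v)}) c m y β → False := by
  intro L
  induction L with
  | nil =>
    intro m y hm hch β hu hy
    cases hch
    exact hng _ (extend huv hm hu hy)
  | cons x L ih =>
    intro m y hm hch β hu hy
    cases hch with
    | step hch hadj hnot hfree =>
      have hyu : y ≠ u := hadj.ne'
      have hmem : ∀ z ∈ x :: L, z ≠ u := by
        intro z hz
        rcases hch.mem_spec z hz with rfl | hz'
        · exact huv.ne'
        · exact hz'.ne'
      have hmemy : ∀ z ∈ x :: L, z ≠ y := fun z hz hzy => hnot (hzy ▸ hz)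
      set γ := m s(u, y) with hγ
      set m₁ := Function.update m s(u, y) β with hm₁
      have hagree : ∀ z ∈ x :: L, ∀ w, (G.deleteEdges {s(u, v)}).Adj z w →
          m₁ s(z, w) = m s(z, w) := by
        intro z hz w hw
        exact Function.update_of_ne (sym2_ne_of_ne (hmem z hz) (hmemy z hz)) _ _
      have hagreeu : ∀ z ∈ x :: L, m₁ s(u, z) = m s(u, z) := by
        intro z hz
        refine Function.update_of_ne ?_ _ _
        intro h
        rcases Sym2.eq_iff.1 h with ⟨_, h2⟩ | ⟨h2, _⟩
        · exact hmemy z hz h2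
        · exact hadj.ne h2
      have hm₁p : PNW (G.deleteEdges {s(u, v)}) c m₁ := hm.update hadj hu hy
      have hch₁ : Chain (G.deleteEdges {s(u, v)}) c m₁ u v x L := hch.congr hagree hagreeu
      have hγu : Free (G.deleteEdges {s(u, v)}) c m₁ u γ := by
        refine ⟨(hm.1 u y hadj).1, (hm.1 u y hadj).2, ?_⟩
        intro w hw
        by_cases hwy : w = y
        · rw [hm₁, hwy, Function.update_self]
          intro hcon
          rw [hγ] at hcon
          exact hu.2.2 y hadj hcon.symm
        · rw [hm₁, Function.update_of_ne (s_ne hadj hwy)]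
          exact hm.2 u w y hw hadj hwy
      have hγx : Free (G.deleteEdges {s(u, v)}) c m₁ x γ := by
        refine hfree.congr ?_
        exact hagree x (List.mem_cons_self)
      exact ih m₁ x hm₁p hch₁ γ hγu hγx

lemma walk_first_step {H : SimpleGraph V} {z b : V} (d : H.Walk z b) (h : z ≠ b) :
    ∃ y, H.Adj z y ∧ y ∈ d.support.tail := by
  cases d with
  | nil => exact absurd rfl h
  | cons hadj d' => exact ⟨_, hadj, by simp [Walk.start_mem_support]⟩

lemma internal_nbrs {H : SimpleGraph V} {a b z : V} (p : H.Walk a b) (hp : p.IsPath)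
    (hz : z ∈ p.support) (hza : z ≠ a) (hzb : z ≠ b) :
    ∃ y₁ y₂, y₁ ≠ y₂ ∧ H.Adj z y₁ ∧ H.Adj z y₂ ∧ y₁ ∈ p.support ∧ y₂ ∈ p.support := by
  set t := p.takeUntil z hz with ht
  set d := p.dropUntil z hz with hd
  obtain ⟨y₂, hy₂adj, hy₂mem⟩ := walk_first_step d hzb
  obtain ⟨y₁, hy₁adj, hy₁mem⟩ := walk_first_step t.reverse hza
  have hy₁t : y₁ ∈ t.support := by
    have := List.tail_subset t.reverse.support hy₁mem
    rwa [Walk.support_reverse, List.mem_reverse] at this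
  have hsupp : p.support = t.support ++ d.support.tail := by
    conv_lhs => rw [← p.take_spec hz]
    rw [Walk.support_append]
  have hnd : (t.support ++ d.support.tail).Nodup := hsupp ▸ hp.support_nodup
  have hdisj := List.disjoint_of_nodup_append hnd
  refine ⟨y₁, y₂, fun hcon => hdisj hy₁t (hcon ▸ hy₂mem), hy₁adj, hy₂adj, ?_, ?_⟩
  · exact p.support_takeUntil_subset hz hy₁t
  · exact p.support_dropUntil_subset hz (List.tail_subset _ hy₂mem)

lemma path_lemma {H : SimpleGraph V} {a b₁ b₂ : V}
    (hab₁ : a ≠ b₁) (hab₂ : a ≠ b₂) (hb : b₁ ≠ b₂)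
    (s1a : ∀ w w', H.Adj a w → H.Adj a w' → w = w')
    (s1b₁ : ∀ w w', H.Adj b₁ w → H.Adj b₁ w' → w = w')
    (s1b₂ : ∀ w w', H.Adj b₂ w → H.Adj b₂ w' → w = w')
    (s2 : ∀ z w₁ w₂ w₃, H.Adj z w₁ → H.Adj z w₂ → H.Adj z w₃ →
      w₁ = w₂ ∨ w₁ = w₃ ∨ w₂ = w₃)
    (h1 : H.Reachable a b₁) (h2 : H.Reachable a b₂) : False := by
  obtain ⟨w⟩ := h1
  set p : H.Walk a b₁ := (w.toPath : H.Path a b₁).1 with hpdef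
  have hp : p.IsPath := w.toPath.2
  have hclos : ∀ z ∈ p.support, ∀ x, H.Adj z x → x ∈ p.support := by
    intro z hz x hx
    by_cases hza : z = a
    · subst hza
      obtain ⟨y, hyadj, hymem⟩ := walk_first_step p hab₁
      have : x = y := s1a x y hx hyadj
      exact this ▸ List.tail_subset _ hymem
    · by_cases hzb : z = b₁
      · subst hzb
        obtain ⟨y, hyadj, hymem⟩ := walk_first_step p.reverse (Ne.symm hab₁)
        have hy : y ∈ p.support := by
          have := List.tail_subset p.reverse.support hymem
          rwa [Walk.support_reverse, List.mem_reverse] at this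
        exact (s1b₁ x y hx hyadj) ▸ hy
      · obtain ⟨y₁, y₂, hne, h1', h2', hm1, hm2⟩ := internal_nbrs p hp hz hza hzb
        rcases s2 z x y₁ y₂ hx h1' h2' with rfl | rfl | hcon
        · exact hm1
        · exact hm2
        · exact absurd hcon hne
  have hreach : ∀ {s t : V} (q : H.Walk s t), s ∈ p.support → t ∈ p.support := by
    intro s t q
    induction q with
    | nil => exact id
    | cons hadj q' ih => intro hs; exact ih (hclos _ hs _ hadj)
  obtain ⟨w₂⟩ := h2
  have hb₂ : b₂ ∈ p.support := hreach w₂ p.start_mem_support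
  obtain ⟨y₁, y₂, hne, h1', h2', _, _⟩ := internal_nbrs p hp hb₂ (Ne.symm hab₂) (Ne.symm hb)
  exact hne (s1b₂ y₁ y₂ h1' h2')

open Classical in
/-- swap colors `α`, `β` on all `α/β`-edges touching `C`. -/
noncomputable def kswap (H : SimpleGraph V) (m : Sym2 V → ℕ) (α β : ℕ) (C : Set V) :
    Sym2 V → ℕ :=
  fun f => if (f ∈ H.edgeSet ∧ (m f = α ∨ m f = β) ∧ ∃ x ∈ C, x ∈ f)
    then (if m f = α then β else α) else m f

section Kswap

variable {H : SimpleGraph V} {c α β : ℕ} {m : Sym2 V → ℕ} {C : Set V}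

/-- closure hypothesis on `C`. -/
def Closed (H : SimpleGraph V) (m : Sym2 V → ℕ) (α β : ℕ) (C : Set V) : Prop :=
  ∀ a b, H.Adj a b → (m s(a, b) = α ∨ m s(a, b) = β) → (a ∈ C ↔ b ∈ C)

lemma kswap_cond_iff (hC : Closed H m α β C) {a b : V} :
    (s(a, b) ∈ H.edgeSet ∧ (m s(a, b) = α ∨ m s(a, b) = β) ∧ ∃ x ∈ C, x ∈ s(a, b)) ↔
      (H.Adj a b ∧ (m s(a, b) = α ∨ m s(a, b) = β) ∧ a ∈ C) := by
  constructor
  · rintro ⟨he, hcol, x, hxC, hxmem⟩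
    have hadj : H.Adj a b := H.mem_edgeSet.1 he
    refine ⟨hadj, hcol, ?_⟩
    rcases Sym2.mem_iff.1 hxmem with h | h
    · exact h ▸ hxC
    · exact (hC a b hadj hcol).2 (h ▸ hxC)
  · rintro ⟨hadj, hcol, haC⟩
    exact ⟨H.mem_edgeSet.2 hadj, hcol, a, haC, Sym2.mem_mk_left a b⟩

lemma kswap_eval_pos (hC : Closed H m α β C) {a b : V} (hadj : H.Adj a b)
    (h : (m s(a, b) = α ∨ m s(a, b) = β) ∧ a ∈ C) :
    kswap H m α β C s(a, b) = if m s(a, b) = α then β else α := by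
  rw [kswap, if_pos ((kswap_cond_iff hC).2 ⟨hadj, h.1, h.2⟩)]

lemma kswap_eval_neg (hC : Closed H m α β C) {a b : V} (hadj : H.Adj a b)
    (h : ¬((m s(a, b) = α ∨ m s(a, b) = β) ∧ a ∈ C)) :
    kswap H m α β C s(a, b) = m s(a, b) := by
  rw [kswap, if_neg]
  intro hcon
  obtain ⟨_, hcol, haC⟩ := (kswap_cond_iff hC).1 hcon
  exact h ⟨hcol, haC⟩

lemma kswap_agree_out (hC : Closed H m α β C) {z : V} (hz : z ∉ C) :
    ∀ w, H.Adj z w → kswap H m α β C s(z, w) = m s(z, w) := by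
  intro w hw
  exact kswap_eval_neg hC hw (fun hcon => hz hcon.2)

lemma kswap_gamma_pres (hC : Closed H m α β C) (hαβ : α ≠ β) {γ : ℕ}
    (hγα : γ ≠ α) (hγβ : γ ≠ β) {a b : V} (hadj : H.Adj a b) :
    (kswap H m α β C s(a, b) = γ ↔ m s(a, b) = γ) := by
  by_cases h : (m s(a, b) = α ∨ m s(a, b) = β) ∧ a ∈ C
  · rw [kswap_eval_pos hC hadj h]
    constructor
    · intro hcon
      by_cases hmα : m s(a, b) = α
      · rw [if_pos hmα] at hcon; exact absurd hcon.symm hγβ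
      · rw [if_neg hmα] at hcon; exact absurd hcon.symm hγα
    · intro hcon
      rcases h.1 with h1 | h1
      · exact absurd (hcon ▸ h1) hγα
      · exact absurd (hcon ▸ h1) hγβ
  · rw [kswap_eval_neg hC hadj h]

lemma kswap_free (hC : Closed H m α β C) (hαβ : α ≠ β)
    (hβ1 : 1 ≤ β) (hβc : β ≤ c) {z : V} (hzC : z ∈ C) (hf : Free H c m z α) :
    Free H c (kswap H m α β C) z β := by
  refine ⟨hβ1, hβc, ?_⟩
  intro w hw
  by_cases h : (m s(z, w) = α ∨ m s(z, w) = β) ∧ z ∈ C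
  · rw [kswap_eval_pos hC hw h]
    by_cases hmα : m s(z, w) = α
    · exact absurd hmα (hf.2.2 w hw)
    · rw [if_neg hmα]; exact hαβ
  · rw [kswap_eval_neg hC hw h]
    intro hcon
    exact h ⟨Or.inr hcon, hzC⟩

lemma kswap_pnw (hC : Closed H m α β C) (hαβ : α ≠ β) (hm : PNW H c m)
    (hα1 : 1 ≤ α) (hαc : α ≤ c) (hβ1 : 1 ≤ β) (hβc : β ≤ c) :
    PNW H c (kswap H m α β C) := by
  constructor
  · intro x w hxw
    by_cases h : (m s(x, w) = α ∨ m s(x, w) = β) ∧ x ∈ C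
    · rw [kswap_eval_pos hC hxw h]
      by_cases hmα : m s(x, w) = α
      · rw [if_pos hmα]; exact ⟨hβ1, hβc⟩
      · rw [if_neg hmα]; exact ⟨hα1, hαc⟩
    · rw [kswap_eval_neg hC hxw h]; exact hm.1 x w hxw
  · intro x w w' hxw hxw' hne
    by_cases h1 : (m s(x, w) = α ∨ m s(x, w) = β) ∧ x ∈ C <;>
      by_cases h2 : (m s(x, w') = α ∨ m s(x, w') = β) ∧ x ∈ C
    · rw [kswap_eval_pos hC hxw h1, kswap_eval_pos hC hxw' h2]
      by_cases hm1 : m s(x, w) = α <;> by_cases hm2 : m s(x, w') = α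
      · exact absurd (hm1.trans hm2.symm) (hm.2 x w w' hxw hxw' hne)
      · rw [if_pos hm1, if_neg hm2]; exact hαβ.symm
      · rw [if_neg hm1, if_pos hm2]; exact hαβ
      · have hb1 : m s(x, w) = β := h1.1.resolve_left hm1
        have hb2 : m s(x, w') = β := h2.1.resolve_left hm2
        exact absurd (hb1.trans hb2.symm) (hm.2 x w w' hxw hxw' hne)
    · rw [kswap_eval_pos hC hxw h1, kswap_eval_neg hC hxw' h2]
      intro hcon
      apply h2
      refine ⟨?_, h1.2⟩
      by_cases hm1 : m s(x, w) = α
      · rw [if_pos hm1] at hcon; exact Or.inr hcon.symm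
      · rw [if_neg hm1] at hcon; exact Or.inl hcon.symm
    · rw [kswap_eval_neg hC hxw h1, kswap_eval_pos hC hxw' h2]
      intro hcon
      apply h1
      refine ⟨?_, h2.2⟩
      by_cases hm2 : m s(x, w') = α
      · rw [if_pos hm2] at hcon; exact Or.inr hcon
      · rw [if_neg hm2] at hcon; exact Or.inl hcon
    · rw [kswap_eval_neg hC hxw h1, kswap_eval_neg hC hxw' h2]
      exact hm.2 x w w' hxw hxw' hne

end Kswap

lemma chain_transfer {H : SimpleGraph V} {c : ℕ} {m m' : Sym2 V → ℕ} {u v : V}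
    {α β : ℕ} {C : Set V}
    (hentry : ∀ w, H.Adj u w → m' s(u, w) = m s(u, w))
    (hβnotu : ∀ w, H.Adj u w → m s(u, w) ≠ β)
    (hother : ∀ z γ, γ ≠ α → γ ≠ β → Free H c m z γ → Free H c m' z γ)
    (hαout : ∀ z, z ∉ C → Free H c m z α → Free H c m' z α) :
    ∀ {y : V} {L : List V}, Chain H c m u v y L →
      Chain H c m' u v y L ∨
        ∃ z L', Chain H c m' u v z L' ∧ z ∈ C ∧ Free H c m z α := by
  intro y L h
  induction h with
  | base => exact Or.inl Chain.base
  | @step x L y hch hadj hnot hfree ih =>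
    rcases ih with hch' | hright
    · by_cases hγα : m s(u, y) = α
      · by_cases hxC : x ∈ C
        · exact Or.inr ⟨x, L, hch', hxC, hγα ▸ hfree⟩
        · refine Or.inl (Chain.step hch' hadj hnot ?_)
          rw [hentry y hadj]
          exact hγα ▸ (hαout x hxC (hγα ▸ hfree))
      · refine Or.inl (Chain.step hch' hadj hnot ?_)
        rw [hentry y hadj]
        exact hother x _ hγα (hβnotu y hadj) hfree
    · exact Or.inr hright

lemma claim2 {G : SimpleGraph V} {u v : V} (huv : G.Adj u v) {c : ℕ}
    (hng : ∀ m : Sym2 V → ℕ, ¬ PNW G c m)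
    {m : Sym2 V → ℕ} (hm : PNW (G.deleteEdges {s(u, v)}) c m)
    {β : ℕ} (hβu : Free (G.deleteEdges {s(u, v)}) c m u β)
    {x₁ x₂ : V} {L₁ L₂ : List V}
    (h₁ : Chain (G.deleteEdges {s(u, v)}) c m u v x₁ L₁)
    (h₂ : Chain (G.deleteEdges {s(u, v)}) c m u v x₂ L₂)
    (hx : x₁ ≠ x₂) {α : ℕ}
    (hα₁ : Free (G.deleteEdges {s(u, v)}) c m x₁ α)
    (hα₂ : Free (G.deleteEdges {s(u, v)}) c m x₂ α) : False := by
  set G' := G.deleteEdges {s(u, v)} with hG'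
  have hαβ : α ≠ β := fun h => noext huv hng L₁ m x₁ hm h₁ α (h ▸ hβu) hα₁
  have hx₁u : x₁ ≠ u := by
    rcases h₁.mem_spec x₁ (List.mem_cons_self) with rfl | h
    · exact huv.ne'
    · exact h.ne'
  have hx₂u : x₂ ≠ u := by
    rcases h₂.mem_spec x₂ (List.mem_cons_self) with rfl | h
    · exact huv.ne'
    · exact h.ne'
  -- the Kempe α/β graph
  set HK : SimpleGraph V :=
    { Adj := fun a b => G'.Adj a b ∧ (m s(a, b) = α ∨ m s(a, b) = β)
      symm := by
        constructor
        intro a b ⟨h1, h2⟩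
        refine ⟨h1.symm, ?_⟩
        rwa [Sym2.eq_swap] at h2
      loopless := ⟨fun a h => G'.irrefl h.1⟩ } with hHK
  have sub1α : ∀ z, Free G' c m z α → ∀ w w', HK.Adj z w → HK.Adj z w' → w = w' := by
    intro z hf w w' h h'
    have c1 : m s(z, w) = β := h.2.resolve_left (hf.2.2 w h.1)
    have c2 : m s(z, w') = β := h'.2.resolve_left (hf.2.2 w' h'.1)
    by_contra hne
    exact hm.2 z w w' h.1 h'.1 hne (c1.trans c2.symm)
  have sub1β : ∀ w w', HK.Adj u w → HK.Adj u w' → w = w' := by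
    intro w w' h h'
    have c1 : m s(u, w) = α := h.2.resolve_right (hβu.2.2 w h.1)
    have c2 : m s(u, w') = α := h'.2.resolve_right (hβu.2.2 w' h'.1)
    by_contra hne
    exact hm.2 u w w' h.1 h'.1 hne (c1.trans c2.symm)
  have sub2 : ∀ z w₁ w₂ w₃, HK.Adj z w₁ → HK.Adj z w₂ → HK.Adj z w₃ →
      w₁ = w₂ ∨ w₁ = w₃ ∨ w₂ = w₃ := by
    intro z w₁ w₂ w₃ hw₁ hw₂ hw₃
    by_contra hcon
    push_neg at hcon
    obtain ⟨h12, h13, h23⟩ := hcon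
    rcases hw₁.2 with c1 | c1 <;> rcases hw₂.2 with c2 | c2 <;> rcases hw₃.2 with c3 | c3
    · exact hm.2 z w₁ w₂ hw₁.1 hw₂.1 h12 (c1.trans c2.symm)
    · exact hm.2 z w₁ w₂ hw₁.1 hw₂.1 h12 (c1.trans c2.symm)
    · exact hm.2 z w₁ w₃ hw₁.1 hw₃.1 h13 (c1.trans c3.symm)
    · exact hm.2 z w₂ w₃ hw₂.1 hw₃.1 h23 (c2.trans c3.symm)
    · exact hm.2 z w₂ w₃ hw₂.1 hw₃.1 h23 (c2.trans c3.symm)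
    · exact hm.2 z w₁ w₃ hw₁.1 hw₃.1 h13 (c1.trans c3.symm)
    · exact hm.2 z w₁ w₂ hw₁.1 hw₂.1 h12 (c1.trans c2.symm)
    · exact hm.2 z w₁ w₂ hw₁.1 hw₂.1 h12 (c1.trans c2.symm)
  have hnotboth : ¬(HK.Reachable u x₁ ∧ HK.Reachable u x₂) := by
    rintro ⟨r1, r2⟩
    exact path_lemma hx₁u.symm hx₂u.symm hx sub1β (sub1α x₁ hα₁) (sub1α x₂ hα₂) sub2 r1 r2
  obtain ⟨y, Ly, hchy, hfy, hry⟩ :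
      ∃ y Ly, Chain G' c m u v y Ly ∧ Free G' c m y α ∧ ¬HK.Reachable u y := by
    rcases not_and_or.1 hnotboth with hr | hr
    · exact ⟨x₁, L₁, h₁, hα₁, hr⟩
    · exact ⟨x₂, L₂, h₂, hα₂, hr⟩
  set C : Set V := {z | HK.Reachable y z} with hCdef
  have hyC : y ∈ C := Set.mem_setOf.2 (Reachable.refl y)
  have huC : u ∉ C := fun h => hry ((Set.mem_setOf.1 h).symm)
  have hC : Closed G' m α β C := by
    intro a b hadj hcol
    have hKadj : HK.Adj a b := ⟨hadj, hcol⟩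
    constructor
    · intro ha
      exact Set.mem_setOf.2 (Reachable.trans (Set.mem_setOf.1 ha) (Adj.reachable hKadj))
    · intro hb
      exact Set.mem_setOf.2 (Reachable.trans (Set.mem_setOf.1 hb) (Adj.reachable hKadj.symm))
  set m' := kswap G' m α β C with hm'def
  have hentry : ∀ w, G'.Adj u w → m' s(u, w) = m s(u, w) := kswap_agree_out hC huC
  have hother : ∀ z γ, γ ≠ α → γ ≠ β → Free G' c m z γ → Free G' c m' z γ := by
    intro z γ hγα hγβ hf
    exact ⟨hf.1, hf.2.1, fun w hw hcon =>
      hf.2.2 w hw ((kswap_gamma_pres hC hαβ hγα hγβ hw).1 hcon)⟩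
  have hαout : ∀ z, z ∉ C → Free G' c m z α → Free G' c m' z α := by
    intro z hz hf
    exact hf.congr (kswap_agree_out hC hz)
  have hβu' : Free G' c m' u β :=
    ⟨hβu.1, hβu.2.1, fun w hw hcon => hβu.2.2 w hw ((hentry w hw) ▸ hcon)⟩
  have hm'p : PNW G' c m' := kswap_pnw hC hαβ hm hα₁.1 hα₁.2.1 hβu.1 hβu.2.1
  rcases chain_transfer hentry hβu.2.2 hother hαout hchy with hch' | ⟨z', L', hch', hz'C, hfz'⟩
  · exact noext huv hng Ly m' y hm'p hch' β hβu'
      (kswap_free hC hαβ hβu.1 hβu.2.1 hyC hfy)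
  · exact noext huv hng L' m' z' hm'p hch' β hβu'
      (kswap_free hC hαβ hβu.1 hβu.2.1 hz'C hfz')

open Classical in
noncomputable def freeF [Fintype V] (H : SimpleGraph V) (c : ℕ) (m : Sym2 V → ℕ) (x : V) :
    Finset ℕ :=
  (Finset.Icc 1 c).filter (fun a => ∀ w, H.Adj x w → m s(x, w) ≠ a)

open Classical in
noncomputable def nbr [Fintype V] (H : SimpleGraph V) (x : V) : Finset V :=
  Finset.univ.filter (fun w => H.Adj x w)

lemma mem_freeF [Fintype V] {H : SimpleGraph V} {c : ℕ} {m : Sym2 V → ℕ} {x : V} {a : ℕ} :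
    a ∈ freeF H c m x ↔ Free H c m x a := by
  classical
  simp only [freeF, Finset.mem_filter, Finset.mem_Icc, Free]
  tauto

lemma mem_nbr [Fintype V] {H : SimpleGraph V} {x w : V} :
    w ∈ nbr H x ↔ H.Adj x w := by
  classical
  simp [nbr]

lemma card_freeF [Fintype V] {H : SimpleGraph V} {c : ℕ} {m : Sym2 V → ℕ} {x : V} :
    c ≤ (freeF H c m x).card + (nbr H x).card := by
  classical
  have hsub : Finset.Icc 1 c ⊆ freeF H c m x ∪ (nbr H x).image (fun w => m s(x, w)) := by
    intro a ha
    by_cases hf : ∀ w, H.Adj x w → m s(x, w) ≠ a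
    · exact Finset.mem_union_left _ (mem_freeF.2 ⟨(Finset.mem_Icc.1 ha).1,
        (Finset.mem_Icc.1 ha).2, hf⟩)
    · push_neg at hf
      obtain ⟨w, hw, heq⟩ := hf
      exact Finset.mem_union_right _ (Finset.mem_image.2 ⟨w, mem_nbr.2 hw, heq⟩)
  calc c = (Finset.Icc 1 c).card := by rw [Nat.card_Icc]; omega
    _ ≤ (freeF H c m x ∪ (nbr H x).image (fun w => m s(x, w))).card := Finset.card_le_card hsub
    _ ≤ (freeF H c m x).card + ((nbr H x).image (fun w => m s(x, w))).card :=
        Finset.card_union_le _ _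
    _ ≤ (freeF H c m x).card + (nbr H x).card := by
        exact Nat.add_le_add_left (Finset.card_image_le) _

lemma sedge_eq_iff {x w a b : V} :
    s(x, w) = s(a, b) ↔ (x = a ∧ w = b) ∨ (x = b ∧ w = a) := Sym2.eq_iff

lemma nbr_card_eq_degree [Fintype V] {G : SimpleGraph V} [DecidableRel G.Adj] (x : V) :
    (nbr G x).card = G.degree x := by
  classical
  have h : nbr G x = G.neighborFinset x := by
    ext w; simp [mem_nbr, SimpleGraph.mem_neighborFinset]
  rw [h, SimpleGraph.card_neighborFinset_eq_degree]

lemma nbr_gd_v [Fintype V] {G : SimpleGraph V} {u v : V} (huv : G.Adj u v) :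
    nbr (G.deleteEdges {s(u, v)}) v = (nbr G v).erase u := by
  ext w
  simp only [mem_nbr, Finset.mem_erase, gd_adj]
  constructor
  · rintro ⟨hadj, hne⟩
    refine ⟨?_, hadj⟩
    rintro rfl
    exact hne (Sym2.eq_swap)
  · rintro ⟨hne, hadj⟩
    refine ⟨hadj, ?_⟩
    intro h
    rcases sedge_eq_iff.1 h with ⟨h1, _⟩ | ⟨_, h2⟩
    · exact huv.ne' h1
    · exact hne h2
  
lemma nbr_gd_u [Fintype V] {G : SimpleGraph V} {u v : V} (huv : G.Adj u v) :
    nbr (G.deleteEdges {s(u, v)}) u = (nbr G u).erase v := by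
  ext w
  simp only [mem_nbr, Finset.mem_erase, gd_adj]
  constructor
  · rintro ⟨hadj, hne⟩
    refine ⟨?_, hadj⟩
    rintro rfl
    exact hne rfl
  · rintro ⟨hne, hadj⟩
    refine ⟨hadj, ?_⟩
    intro h
    rcases sedge_eq_iff.1 h with ⟨_, h2⟩ | ⟨h1, _⟩
    · exact hne h2
    · exact huv.ne h1

lemma nbr_gd_other [Fintype V] {G : SimpleGraph V} {u v x : V} (hxu : x ≠ u) (hxv : x ≠ v) :
    nbr (G.deleteEdges {s(u, v)}) x = nbr G x := by
  ext w
  simp only [mem_nbr, gd_adj]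
  constructor
  · exact fun h => h.1
  · intro h
    refine ⟨h, ?_⟩
    intro hcon
    rcases sedge_eq_iff.1 hcon with ⟨h1, _⟩ | ⟨h1, _⟩
    · exact hxu h1
    · exact hxv h1

end VF

/-- Vizing fan equation consequence: if `G - e` (for `e = {u,v}`) is properly
`c`-edge-colorable for `c = Δ(G)` and every set `Z ⊆ N(u)` with `|Z| ≥ 2` and
`v ∈ Z` satisfies `Σ_{z ∈ Z} (deg z + 1 - c) < 2`, then `G` is properly
`c`-edge-colorable. -/
theorem vizing_fan_equation {V : Type*} [Fintype V] [DecidableEq V]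
    (G : SimpleGraph V) [DecidableRel G.Adj] (u v : V) (huv : G.Adj u v)
    (c : ℕ) (hc : c = G.maxDegree) (ℓ : Sym2 V → ℕ)
    (hproper : IsProperLabeling (G.deleteEdges {s(u, v)}) c ℓ)
    (hnoweak : weakCount (G.deleteEdges {s(u, v)}) ℓ = 0)
    (hfan : ∀ Z : Finset V, (↑Z : Set V) ⊆ G.neighborSet u → 2 ≤ Z.card → v ∈ Z →
      (∑ z ∈ Z, ((G.degree z : ℤ) + 1 - c)) < 2) :
    ∃ ℓ' : Sym2 V → ℕ, IsProperLabeling G c ℓ' ∧ weakCount G ℓ' = 0 := by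
  classical
  by_contra hcon
  set G' := G.deleteEdges {s(u, v)} with hG'def
  -- if some full PNW coloring existed, we'd be done
  have hng : ∀ m : Sym2 V → ℕ, ¬ VF.PNW G c m := by
    intro m hPm
    apply hcon
    refine ⟨m, ⟨?_, ?_⟩, ?_⟩
    · intro e he
      induction e using Sym2.ind with
      | _ a b => exact (hPm.1 a b (G.mem_edgeSet.1 he)).2
    · intro e₁ he₁ e₂ he₂ hne hshare heq
      exfalso
      obtain ⟨t, ht₁, ht₂⟩ := hshare
      obtain ⟨w₁, rfl⟩ := Sym2.mem_iff_exists.1 ht₁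
      obtain ⟨w₂, rfl⟩ := Sym2.mem_iff_exists.1 ht₂
      have ha₁ : G.Adj t w₁ := G.mem_edgeSet.1 he₁
      have ha₂ : G.Adj t w₂ := G.mem_edgeSet.1 he₂
      have hw : w₁ ≠ w₂ := fun h => hne (h ▸ rfl)
      exact hPm.2 t w₁ w₂ ha₁ ha₂ hw heq
    · have hempty : {e ∈ G.edgeSet | m e = 0} = ∅ := by
        apply Set.eq_empty_iff_forall_notMem.2
        intro e
        induction e using Sym2.ind with
        | _ a b =>
          rintro ⟨he, h0⟩
          have := (hPm.1 a b (G.mem_edgeSet.1 he)).1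
          omega
      rw [weakCount, hempty, Set.ncard_empty]
  -- ℓ is a PNW coloring of G'
  have hnz : ∀ e ∈ G'.edgeSet, ℓ e ≠ 0 := by
    intro e he h0
    have hfin : {e ∈ G'.edgeSet | ℓ e = 0}.Finite := Set.toFinite _
    have hempty := (Set.ncard_eq_zero hfin).1 hnoweak
    have hmem : e ∈ {e ∈ G'.edgeSet | ℓ e = 0} := ⟨he, h0⟩
    rw [hempty] at hmem
    exact Set.notMem_empty e hmem
  have hmP : VF.PNW G' c ℓ := by
    constructor
    · intro x w hxw
      have he : s(x, w) ∈ G'.edgeSet := G'.mem_edgeSet.2 hxw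
      have h1 := hproper.1 _ he
      have h2 := hnz _ he
      omega
    · intro x w w' hxw hxw' hne heq
      have he : s(x, w) ∈ G'.edgeSet := G'.mem_edgeSet.2 hxw
      have he' : s(x, w') ∈ G'.edgeSet := G'.mem_edgeSet.2 hxw'
      have hne2 : s(x, w) ≠ s(x, w') := VF.s_ne hxw' hne
      exact hnz _ he (hproper.2 _ he _ he' hne2
        ⟨x, Sym2.mem_mk_left _ _, Sym2.mem_mk_left _ _⟩ heq)
  have hdeg_le : ∀ x, G.degree x ≤ c := fun x => hc ▸ G.degree_le_maxDegree x
  have hdegu_pos : 0 < G.degree u := by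
    rw [← SimpleGraph.card_neighborFinset_eq_degree]
    exact Finset.card_pos.2 ⟨v, by simp [SimpleGraph.mem_neighborFinset, huv]⟩
  have hdegv_pos : 0 < G.degree v := by
    rw [← SimpleGraph.card_neighborFinset_eq_degree]
    exact Finset.card_pos.2 ⟨u, by simp [SimpleGraph.mem_neighborFinset, huv.symm]⟩
  -- the fan-reachable set Z
  set Z : Finset V := Finset.univ.filter (fun y => ∃ L, VF.Chain G' c ℓ u v y L) with hZdef
  have hmemZ : ∀ y, y ∈ Z ↔ ∃ L, VF.Chain G' c ℓ u v y L := by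
    intro y; simp [hZdef]
  have hvZ : v ∈ Z := (hmemZ v).2 ⟨[], VF.Chain.base⟩
  have hZadj : ∀ z ∈ Z, G.Adj u z := by
    intro z hz
    obtain ⟨L, hch⟩ := (hmemZ z).1 hz
    rcases hch.mem_spec z (List.mem_cons_self) with rfl | h
    · exact huv
    · exact (VF.gd_adj.1 h).1
  have hZne : ∀ z ∈ Z, z ≠ u := by
    intro z hz h
    exact G.irrefl (h ▸ hZadj z hz)
  have hZsub : (↑Z : Set V) ⊆ G.neighborSet u := by
    intro z hz
    rw [SimpleGraph.mem_neighborSet]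
    exact hZadj z (Finset.mem_coe.1 hz)
  -- any color free at a fan vertex is present at u
  have hpresent : ∀ z ∈ Z, ∀ α, VF.Free G' c ℓ z α → ∃ w, G'.Adj u w ∧ ℓ s(u, w) = α := by
    intro z hz α hfz
    obtain ⟨L, hchz⟩ := (hmemZ z).1 hz
    by_contra hno
    push_neg at hno
    have hfu : VF.Free G' c ℓ u α := ⟨hfz.1, hfz.2.1, fun w hw => hno w hw⟩
    exact VF.noext huv hng L ℓ z hmP hchz α hfu hfz
  -- maximality: the endpoint of such an edge is in Z
  have hmax : ∀ z ∈ Z, ∀ α, VF.Free G' c ℓ z α →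
      ∀ w, G'.Adj u w → ℓ s(u, w) = α → w ∈ Z := by
    intro z hz α hfz w hw hcw
    obtain ⟨L, hchz⟩ := (hmemZ z).1 hz
    by_cases hmem : w ∈ z :: L
    · obtain ⟨L', hch'⟩ := hchz.prefix w hmem
      exact (hmemZ w).2 ⟨L', hch'⟩
    · exact (hmemZ w).2 ⟨z :: L, VF.Chain.step hchz hw hmem (hcw ▸ hfz)⟩
  -- a color free at u
  obtain ⟨β, hβu⟩ : ∃ β, VF.Free G' c ℓ u β := by
    have h1 : c ≤ (VF.freeF G' c ℓ u).card + (VF.nbr G' u).card := VF.card_freeF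
    have h2 : (VF.nbr G' u).card = G.degree u - 1 := by
      rw [hG'def, VF.nbr_gd_u huv, Finset.card_erase_of_mem (VF.mem_nbr.2 huv),
        VF.nbr_card_eq_degree]
    have h3 := hdeg_le u
    have h4 : 0 < (VF.freeF G' c ℓ u).card := by omega
    obtain ⟨β, hβ⟩ := Finset.card_pos.1 h4
    exact ⟨β, VF.mem_freeF.1 hβ⟩
  -- free sets of distinct fan vertices are disjoint
  have hdisj : ∀ z₁ ∈ Z, ∀ z₂ ∈ Z, z₁ ≠ z₂ →
      Disjoint (VF.freeF G' c ℓ z₁) (VF.freeF G' c ℓ z₂) := by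
    intro z₁ hz₁ z₂ hz₂ hne
    rw [Finset.disjoint_left]
    intro α h1 h2
    obtain ⟨L₁, hch₁⟩ := (hmemZ z₁).1 hz₁
    obtain ⟨L₂, hch₂⟩ := (hmemZ z₂).1 hz₂
    exact VF.claim2 huv hng hmP hβu hch₁ hch₂ hne (VF.mem_freeF.1 h1) (VF.mem_freeF.1 h2)
  set S : Finset ℕ := Z.biUnion (VF.freeF G' c ℓ) with hSdef
  have hcardS : S.card = ∑ z ∈ Z, (VF.freeF G' c ℓ z).card := Finset.card_biUnion hdisj
  have hinj : S.card ≤ (Z.erase v).card := by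
    set f : ℕ → V := fun α =>
      if h : ∃ w, G'.Adj u w ∧ ℓ s(u, w) = α then h.choose else u with hfdef
    have hfspec : ∀ α ∈ S, G'.Adj u (f α) ∧ ℓ s(u, f α) = α := by
      intro α hα
      obtain ⟨z, hz, hαz⟩ := Finset.mem_biUnion.1 hα
      have hex : ∃ w, G'.Adj u w ∧ ℓ s(u, w) = α :=
        hpresent z hz α (VF.mem_freeF.1 hαz)
      simp only [hfdef, dif_pos hex]
      exact hex.choose_spec
    apply Finset.card_le_card_of_injOn f
    · intro α hα
      obtain ⟨z, hz, hαz⟩ := Finset.mem_biUnion.1 hα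
      have hfa := hfspec α hα
      refine Finset.mem_erase.2 ⟨?_, hmax z hz α (VF.mem_freeF.1 hαz) (f α) hfa.1 hfa.2⟩
      intro h
      have := (VF.gd_adj.1 hfa.1).2
      rw [h] at this
      exact this rfl
    · intro α₁ hα₁ α₂ hα₂ heq
      have h1 := (hfspec α₁ hα₁).2
      have h2 := (hfspec α₂ hα₂).2
      rw [← h1, heq, h2]
  -- |Z| ≥ 2
  have hZ2 : 2 ≤ Z.card := by
    have h1 : c ≤ (VF.freeF G' c ℓ v).card + (VF.nbr G' v).card := VF.card_freeF
    have h2 : (VF.nbr G' v).card = G.degree v - 1 := by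
      rw [hG'def, VF.nbr_gd_v huv, Finset.card_erase_of_mem (VF.mem_nbr.2 huv.symm),
        VF.nbr_card_eq_degree]
    have h3 := hdeg_le v
    have h4 : 0 < (VF.freeF G' c ℓ v).card := by omega
    obtain ⟨α₀, hα₀⟩ := Finset.card_pos.1 h4
    have hfr := VF.mem_freeF.1 hα₀
    obtain ⟨w₀, hw₀, hcw₀⟩ := hpresent v hvZ α₀ hfr
    have hw₀Z : w₀ ∈ Z := hmax v hvZ α₀ hfr w₀ hw₀ hcw₀
    have hw₀v : w₀ ≠ v := by
      intro h
      have := (VF.gd_adj.1 hw₀).2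
      rw [h] at this
      exact this rfl
    exact Finset.one_lt_card.2 ⟨w₀, hw₀Z, v, hvZ, hw₀v⟩
  -- final counting
  have e1 : ∀ z ∈ Z, ((VF.nbr G' z).card : ℤ) =
      (G.degree z : ℤ) - (if z = v then 1 else 0) := by
    intro z hz
    by_cases hzv : z = v
    · subst hzv
      rw [hG'def, VF.nbr_gd_v huv, Finset.card_erase_of_mem (VF.mem_nbr.2 huv.symm),
        VF.nbr_card_eq_degree, if_pos rfl, Nat.cast_sub hdegv_pos]
      norm_num
    · rw [hG'def, VF.nbr_gd_other (hZne z hz) hzv, VF.nbr_card_eq_degree, if_neg hzv]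
      ring
  have e2 : (Z.card : ℤ) * c ≤ (∑ z ∈ Z, ((VF.freeF G' c ℓ z).card : ℤ)) +
      ∑ z ∈ Z, ((VF.nbr G' z).card : ℤ) := by
    have hstep : ∀ z ∈ Z, (c : ℤ) ≤ ((VF.freeF G' c ℓ z).card : ℤ) + ((VF.nbr G' z).card : ℤ) := by
      intro z hz
      exact_mod_cast (VF.card_freeF : c ≤ (VF.freeF G' c ℓ z).card + (VF.nbr G' z).card)
    calc (Z.card : ℤ) * c = ∑ _z ∈ Z, (c : ℤ) := by
          rw [Finset.sum_const, nsmul_eq_mul]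
      _ ≤ ∑ z ∈ Z, (((VF.freeF G' c ℓ z).card : ℤ) + ((VF.nbr G' z).card : ℤ)) :=
          Finset.sum_le_sum hstep
      _ = _ := Finset.sum_add_distrib
  have e3 : (∑ z ∈ Z, ((VF.freeF G' c ℓ z).card : ℤ)) ≤ (Z.card : ℤ) - 1 := by
    have h1 : ∑ z ∈ Z, (VF.freeF G' c ℓ z).card ≤ Z.card - 1 := by
      rw [← hcardS]
      have h2 := hinj
      rwa [Finset.card_erase_of_mem hvZ] at h2
    have hz1 : 1 ≤ Z.card := Finset.card_pos.2 ⟨v, hvZ⟩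
    calc (∑ z ∈ Z, ((VF.freeF G' c ℓ z).card : ℤ))
        = ((∑ z ∈ Z, (VF.freeF G' c ℓ z).card : ℕ) : ℤ) := by push_cast; rfl
      _ ≤ ((Z.card - 1 : ℕ) : ℤ) := by exact_mod_cast h1
      _ = (Z.card : ℤ) - 1 := by rw [Nat.cast_sub hz1]; norm_num
  have e4 : ∑ z ∈ Z, (if z = v then (1 : ℤ) else 0) = 1 := by
    rw [Finset.sum_ite_eq' Z v (fun _ => (1 : ℤ)), if_pos hvZ]
  have e5 : ∑ z ∈ Z, (G.degree z : ℤ) = (∑ z ∈ Z, ((VF.nbr G' z).card : ℤ)) + 1 := by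
    have hcongr : ∀ z ∈ Z, (G.degree z : ℤ) =
        ((VF.nbr G' z).card : ℤ) + (if z = v then 1 else 0) := by
      intro z hz
      rw [e1 z hz]
      ring
    rw [Finset.sum_congr rfl hcongr, Finset.sum_add_distrib, e4]
  have e6 : ∑ z ∈ Z, ((G.degree z : ℤ) + 1 - c) =
      (∑ z ∈ Z, (G.degree z : ℤ)) + (Z.card : ℤ) - (Z.card : ℤ) * c := by
    have : ∀ z ∈ Z, (G.degree z : ℤ) + 1 - c = (G.degree z : ℤ) + 1 - c := fun _ _ => rfl
    rw [Finset.sum_sub_distrib, Finset.sum_add_distrib, Finset.sum_const, Finset.sum_const,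
      nsmul_eq_mul, nsmul_eq_mul]
    ring
  have key : (2 : ℤ) ≤ ∑ z ∈ Z, ((G.degree z : ℤ) + 1 - c) := by
    rw [e6, e5]
    linarith
  exact absurd key (not_le.2 (hfan Z hZsub hZ2 hvZ))
end

section
/- Let G be a graph, c ≥ 3 odd, and let every vertex of a set A ⊆ V have degree at most ⌊c/2⌋+1 in G. Then for any c-colored STC-labeling L of G with E(A) ⊆ W_L there exists a c-colored STC-labeling L' agreeing with L on E \ E(A) such that no edge of E(A) is weak under L'. -/
open SimpleGraph

/-- A `c`-colored STC-labeling: every edge gets a color in `{0,…,c}` (`0` = weak),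
and no two edges of the same strong color form an induced path on three vertices. -/
def IsSTCLabeling {V : Type*} (G : SimpleGraph V) (c : ℕ) (ℓ : Sym2 V → ℕ) : Prop :=
  (∀ e ∈ G.edgeSet, ℓ e ≤ c) ∧
  ∀ u v w : V, u ≠ w → G.Adj u v → G.Adj v w → ¬ G.Adj u w →
    ℓ s(u, v) = ℓ s(v, w) → ℓ s(u, v) = 0

private lemma stc_aux {V : Type*} [Fintype V] [DecidableEq V]
    (G : SimpleGraph V) (c : ℕ) (hc : 3 ≤ c) (hodd : Odd c)
    (A : Set V) (hdeg : ∀ a ∈ A, (G.neighborSet a).ncard ≤ c / 2 + 1) :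
    ∀ n (ℓ : Sym2 V → ℕ), IsSTCLabeling G c ℓ →
      {e | e ∈ G.edgeSet ∧ ℓ e = 0 ∧ ∀ x ∈ e, x ∈ A}.ncard = n →
      ∃ ℓ', IsSTCLabeling G c ℓ' ∧
        (∀ e ∈ G.edgeSet, ¬ (ℓ e = 0 ∧ ∀ x ∈ e, x ∈ A) → ℓ' e = ℓ e) ∧
        (∀ e ∈ G.edgeSet, (∀ x ∈ e, x ∈ A) → ℓ' e ≠ 0) := by
  intro n
  induction n with
  | zero =>
    intro ℓ hstc h0
    refine ⟨ℓ, hstc, fun e _ _ => rfl, fun e he hA => ?_⟩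
    intro h0'
    have : e ∈ {e | e ∈ G.edgeSet ∧ ℓ e = 0 ∧ ∀ x ∈ e, x ∈ A} := ⟨he, h0', hA⟩
    have hne : {e | e ∈ G.edgeSet ∧ ℓ e = 0 ∧ ∀ x ∈ e, x ∈ A}.Nonempty := ⟨e, this⟩
    rw [Set.ncard_eq_zero (Set.toFinite _)] at h0
    exact hne.ne_empty h0
  | succ n ih =>
    intro ℓ hstc hcard
    -- pick a weak edge inside A
    have hne : {e | e ∈ G.edgeSet ∧ ℓ e = 0 ∧ ∀ x ∈ e, x ∈ A}.Nonempty := by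
      rw [← Set.ncard_pos (Set.toFinite _)] at *
      omega
    obtain ⟨e, he⟩ := hne
    induction e using Sym2.ind with
    | _ u v =>
    obtain ⟨heE, he0, heA⟩ := he
    have huv : G.Adj u v := heE
    have hu : u ∈ A := heA u (by simp)
    have hv : v ∈ A := heA v (by simp)
    have huvne : u ≠ v := huv.ne
    -- forbidden colors
    set F : Set ℕ := (fun x => ℓ s(u, x)) '' (G.neighborSet u \ {v}) ∪
        (fun x => ℓ s(v, x)) '' (G.neighborSet v \ {u}) with hF
    have hFu : ((fun x => ℓ s(u, x)) '' (G.neighborSet u \ {v})).ncard ≤ c / 2 := by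
      refine le_trans (Set.ncard_image_le (Set.toFinite _)) ?_
      have h1 : (G.neighborSet u \ {v}).ncard + 1 = (G.neighborSet u).ncard :=
        Set.ncard_diff_singleton_add_one huv (Set.toFinite _)
      have := hdeg u hu
      omega
    have hFv : ((fun x => ℓ s(v, x)) '' (G.neighborSet v \ {u})).ncard ≤ c / 2 := by
      refine le_trans (Set.ncard_image_le (Set.toFinite _)) ?_
      have h1 : (G.neighborSet v \ {u}).ncard + 1 = (G.neighborSet v).ncard :=
        Set.ncard_diff_singleton_add_one huv.symm (Set.toFinite _)
      have := hdeg v hv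
      omega
    have hFcard : F.ncard < c := by
      have hun : F.ncard ≤ c / 2 + c / 2 := by
        rw [hF]
        exact le_trans (Set.ncard_union_le _ _) (add_le_add hFu hFv)
      have hmod := Nat.odd_iff.mp hodd
      omega
    have hIcc : (Set.Icc 1 c).ncard = c := by
      rw [← Finset.coe_Icc, Set.ncard_coe_finset, Nat.card_Icc]
      omega
    obtain ⟨k, hkIcc, hkF⟩ :=
      Set.exists_mem_notMem_of_ncard_lt_ncard (by omega : F.ncard < (Set.Icc 1 c).ncard)
        (Set.toFinite _)
    obtain ⟨hk1, hkc⟩ := hkIcc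
    have hk0 : k ≠ 0 := by omega
    -- the updated labeling
    set ℓ₁ : Sym2 V → ℕ := Function.update ℓ s(u, v) k with hℓ₁
    have hℓ₁e : ℓ₁ s(u, v) = k := Function.update_self _ _ _
    have hℓ₁ne : ∀ f, f ≠ s(u, v) → ℓ₁ f = ℓ f := fun f hf => Function.update_of_ne hf _ _
    -- ℓ₁ is STC
    have hstc₁ : IsSTCLabeling G c ℓ₁ := by
      constructor
      · intro f hf
        by_cases h : f = s(u, v)
        · rw [h, hℓ₁e]; exact hkc
        · rw [hℓ₁ne f h]; exact hstc.1 f hf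
      · intro a b d hab h1 h2 h3 heq
        by_cases hA1 : s(a, b) = s(u, v) <;> by_cases hA2 : s(b, d) = s(u, v)
        · exfalso
          have : s(a, b) = s(b, d) := hA1.trans hA2.symm
          rw [Sym2.eq_iff] at this
          rcases this with ⟨h4, h5⟩ | ⟨h4, h5⟩
          · exact hab (h4.trans h5)
          · exact hab h4
        · exfalso
          rw [hA1, hℓ₁e, hℓ₁ne _ hA2] at heq
          apply hkF
          rw [Sym2.eq_iff] at hA1
          rcases hA1 with ⟨rfl, rfl⟩ | ⟨rfl, rfl⟩
          · exact Or.inr ⟨d, ⟨h2, fun hd => hab ((Set.mem_singleton_iff.1 hd).symm)⟩, heq.symm⟩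
          · exact Or.inl ⟨d, ⟨h2, fun hd => hab ((Set.mem_singleton_iff.1 hd).symm)⟩, heq.symm⟩
        · exfalso
          rw [hA2, hℓ₁e, hℓ₁ne _ hA1] at heq
          apply hkF
          rw [Sym2.eq_iff] at hA2
          rcases hA2 with ⟨rfl, rfl⟩ | ⟨rfl, rfl⟩
          · refine Or.inl ⟨a, ⟨h1.symm, fun ha => hab (Set.mem_singleton_iff.1 ha)⟩, ?_⟩
            rw [← heq, Sym2.eq_swap]
          · refine Or.inr ⟨a, ⟨h1.symm, fun ha => hab (Set.mem_singleton_iff.1 ha)⟩, ?_⟩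
            rw [← heq, Sym2.eq_swap]
        · rw [hℓ₁ne _ hA1] at *
          rw [hℓ₁ne _ hA2] at heq
          exact hstc.2 a b d hab h1 h2 h3 heq
    -- the new weak-in-A set lost exactly e
    have hset : {f | f ∈ G.edgeSet ∧ ℓ₁ f = 0 ∧ ∀ x ∈ f, x ∈ A} =
        {f | f ∈ G.edgeSet ∧ ℓ f = 0 ∧ ∀ x ∈ f, x ∈ A} \ {s(u, v)} := by
      ext f
      simp only [Set.mem_setOf_eq, Set.mem_diff, Set.mem_singleton_iff]
      constructor
      · rintro ⟨hf1, hf2, hf3⟩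
        have hfne : f ≠ s(u, v) := by
          rintro rfl; rw [hℓ₁e] at hf2; exact hk0 hf2
        exact ⟨⟨hf1, by rwa [hℓ₁ne f hfne] at hf2, hf3⟩, hfne⟩
      · rintro ⟨⟨hf1, hf2, hf3⟩, hfne⟩
        exact ⟨hf1, by rwa [hℓ₁ne f hfne], hf3⟩
    have hcard₁ : {f | f ∈ G.edgeSet ∧ ℓ₁ f = 0 ∧ ∀ x ∈ f, x ∈ A}.ncard = n := by
      rw [hset]
      have := Set.ncard_diff_singleton_add_one (s := {f | f ∈ G.edgeSet ∧ ℓ f = 0 ∧ ∀ x ∈ f, x ∈ A})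
        ⟨heE, he0, heA⟩ (Set.toFinite _)
      omega
    obtain ⟨ℓ', hstc', hagree', hnz'⟩ := ih ℓ₁ hstc₁ hcard₁
    refine ⟨ℓ', hstc', ?_, hnz'⟩
    intro f hf hnf
    have hfne : f ≠ s(u, v) := by
      rintro rfl; exact hnf ⟨he0, heA⟩
    rw [hagree' f hf, hℓ₁ne f hfne]
    rw [hℓ₁ne f hfne]
    tauto

/-- For odd `c ≥ 3` and a set `A` of vertices of degree at most `⌊c/2⌋+1`,
any STC-labeling with all edges inside `A` weak can be changed, only inside
`E(A)`, into one with no weak edge inside `A`. -/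
theorem odd_c_periphery_good {V : Type*} [Fintype V] [DecidableEq V]
    (G : SimpleGraph V) (c : ℕ) (hc : 3 ≤ c) (hodd : Odd c)
    (A : Set V) (hdeg : ∀ a ∈ A, (G.neighborSet a).ncard ≤ c / 2 + 1)
    (ℓ : Sym2 V → ℕ) (hstc : IsSTCLabeling G c ℓ)
    (hweak : ∀ e ∈ G.edgeSet, (∀ x ∈ e, x ∈ A) → ℓ e = 0) :
    ∃ ℓ' : Sym2 V → ℕ, IsSTCLabeling G c ℓ' ∧
      (∀ e ∈ G.edgeSet, ¬ (∀ x ∈ e, x ∈ A) → ℓ' e = ℓ e) ∧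
      (∀ e ∈ G.edgeSet, (∀ x ∈ e, x ∈ A) → ℓ' e ≠ 0) := by
  obtain ⟨ℓ', hstc', hagree, hnz⟩ :=
    stc_aux G c hc hodd A hdeg {e | e ∈ G.edgeSet ∧ ℓ e = 0 ∧ ∀ x ∈ e, x ∈ A}.ncard ℓ hstc rfl
  exact ⟨ℓ', hstc', fun e he hA => hagree e he (fun h => hA h.2), hnz⟩
end

section
/- Let G be a graph, c ∈ ℕ, A a set of vertices each having degree at most ⌊c/2⌋+1 in G, L an STC-labeling of G, e a weak edge of L inside A, and P=(v_1,…,v_r) an edge-simple path in G[A] starting with e, with color sequence (0,q_2,…,q_{r-1}) under L. Then there exists an STC-labeling L' agreeing with L outside E(P) such that either the color sequence of P under L' is (q_2,…,q_{r-1},0), or L' has strictly fewer weak edges than L. -/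
open SimpleGraph

lemma stc_step {V : Type*} [Fintype V] [DecidableEq V] (G : SimpleGraph V) (c : ℕ)
    (ℓ : Sym2 V → ℕ) (hstc : IsSTCLabeling G c ℓ)
    (u v w : V) (huv : G.Adj u v) (hvw : G.Adj v w) (hne : s(u, v) ≠ s(v, w))
    (hweak : ℓ s(u, v) = 0)
    (hdu : (G.neighborSet u).ncard ≤ c / 2 + 1)
    (hdv : (G.neighborSet v).ncard ≤ c / 2 + 1) :
    (∃ ℓ' : Sym2 V → ℕ, IsSTCLabeling G c ℓ' ∧ (∀ e, e ≠ s(u, v) → ℓ' e = ℓ e) ∧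
        weakCount G ℓ' < weakCount G ℓ) ∨
      (ℓ s(v, w) ≠ 0 ∧
        IsSTCLabeling G c
          (fun f => if f = s(u, v) then ℓ s(v, w) else if f = s(v, w) then 0 else ℓ f)) := by
  classical
  have hne' : s(v, w) ≠ s(u, v) := fun h => hne h.symm
  by_cases hfree : ∃ q', 1 ≤ q' ∧ q' ≤ c ∧
      (∀ x, G.Adj u x → x ≠ v → ℓ s(u, x) ≠ q') ∧
      (∀ x, G.Adj v x → x ≠ u → ℓ s(v, x) ≠ q')
  · -- recolor s(u,v) with the free color q'
    obtain ⟨q', hq1, hqc, hu, hv⟩ := hfree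
    left
    set ℓ₂ : Sym2 V → ℕ := fun f => if f = s(u, v) then q' else ℓ f with hl2
    have E0 : ℓ₂ s(u, v) = q' := by simp [hl2]
    have E2 : ∀ f, f ≠ s(u, v) → ℓ₂ f = ℓ f := by intro f h; simp [hl2, h]
    refine ⟨ℓ₂, ⟨?_, ?_⟩, ?_, ?_⟩
    · intro e he
      by_cases h : e = s(u, v)
      · rw [h, E0]; exact hqc
      · rw [E2 e h]; exact hstc.1 e he
    · intro a b d had hab hbd hnad heq
      by_cases h1 : s(a, b) = s(u, v) <;> by_cases h2 : s(b, d) = s(u, v)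
      · exfalso
        rcases Sym2.eq_iff.mp (h1.trans h2.symm) with ⟨h, _⟩ | ⟨h, _⟩
        · exact hab.ne h
        · exact had h
      · exfalso
        rw [h1, E0, E2 _ h2] at heq
        rcases Sym2.eq_iff.mp h1 with ⟨rfl, rfl⟩ | ⟨rfl, rfl⟩
        · exact hv d hbd (Ne.symm had) heq.symm
        · exact hu d hbd (Ne.symm had) heq.symm
      · exfalso
        rw [h2, E0, E2 _ h1] at heq
        rcases Sym2.eq_iff.mp h2 with ⟨rfl, rfl⟩ | ⟨rfl, rfl⟩
        · refine hu a hab.symm had ?_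
          rw [Sym2.eq_swap]; exact heq
        · refine hv a hab.symm had ?_
          rw [Sym2.eq_swap]; exact heq
      · rw [E2 _ h1] at heq ⊢
        rw [E2 _ h2] at heq
        exact hstc.2 a b d had hab hbd hnad heq
    · intro e he; exact E2 e he
    · have hset : {e ∈ G.edgeSet | ℓ₂ e = 0} = {e ∈ G.edgeSet | ℓ e = 0} \ {s(u, v)} := by
        ext e
        simp only [Set.mem_sep_iff, Set.mem_diff, Set.mem_singleton_iff]
        constructor
        · rintro ⟨he, h0⟩
          have hne0 : e ≠ s(u, v) := by rintro rfl; rw [E0] at h0; omega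
          refine ⟨⟨he, ?_⟩, hne0⟩
          rw [← E2 e hne0]; exact h0
        · rintro ⟨⟨he, h0⟩, hne0⟩
          exact ⟨he, (E2 e hne0).trans h0⟩
      unfold weakCount
      rw [hset]
      exact Set.ncard_diff_singleton_lt_of_mem ⟨huv, hweak⟩ (Set.toFinite _)
  · -- no free color: shift the weak edge one step
    rw [Set.ncard_eq_toFinset_card', ← neighborFinset_def] at hdu hdv
    set S : Finset (Sym2 V) :=
      ((G.neighborFinset u).erase v).image (fun x => s(u, x)) ∪
      ((G.neighborFinset v).erase u).image (fun x => s(v, x)) with hS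
    have hcardS : S.card ≤ c := by
      have h1 : ((G.neighborFinset u).erase v).card = (G.neighborFinset u).card - 1 :=
        Finset.card_erase_of_mem ((G.mem_neighborFinset u v).2 huv)
      have h1' : 1 ≤ (G.neighborFinset u).card :=
        Finset.card_pos.2 ⟨v, (G.mem_neighborFinset u v).2 huv⟩
      have h2 : ((G.neighborFinset v).erase u).card = (G.neighborFinset v).card - 1 :=
        Finset.card_erase_of_mem ((G.mem_neighborFinset v u).2 huv.symm)
      have h2' : 1 ≤ (G.neighborFinset v).card :=
        Finset.card_pos.2 ⟨u, (G.mem_neighborFinset v u).2 huv.symm⟩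
      calc S.card ≤ _ + _ := Finset.card_union_le _ _
        _ ≤ ((G.neighborFinset u).erase v).card + ((G.neighborFinset v).erase u).card :=
          Nat.add_le_add Finset.card_image_le Finset.card_image_le
        _ ≤ c := by omega
    have hsub : Finset.Icc 1 c ⊆ S.image ℓ := by
      intro q' hq'
      rw [Finset.mem_Icc] at hq'
      have hex : (∃ x, G.Adj u x ∧ x ≠ v ∧ ℓ s(u, x) = q') ∨
          (∃ x, G.Adj v x ∧ x ≠ u ∧ ℓ s(v, x) = q') := by
        by_contra hcon
        push_neg at hcon
        exact hfree ⟨q', hq'.1, hq'.2,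
          fun x hx1 hx2 => hcon.1 x hx1 hx2, fun x hx1 hx2 => hcon.2 x hx1 hx2⟩
      rcases hex with ⟨x, hx1, hx2, hx3⟩ | ⟨x, hx1, hx2, hx3⟩
      · exact Finset.mem_image.2 ⟨s(u, x), Finset.mem_union_left _
          (Finset.mem_image.2 ⟨x, Finset.mem_erase.2 ⟨hx2, (G.mem_neighborFinset u x).2 hx1⟩, rfl⟩),
          hx3⟩
      · exact Finset.mem_image.2 ⟨s(v, x), Finset.mem_union_right _
          (Finset.mem_image.2 ⟨x, Finset.mem_erase.2 ⟨hx2, (G.mem_neighborFinset v x).2 hx1⟩, rfl⟩),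
          hx3⟩
    have hc1 : c ≤ (S.image ℓ).card := by
      have := Finset.card_le_card hsub
      simpa using this
    have himg : S.image ℓ = Finset.Icc 1 c := by
      refine (Finset.eq_of_subset_of_card_le hsub ?_).symm
      have := Finset.card_image_le (s := S) (f := ℓ)
      simp only [Nat.card_Icc]
      omega
    have hinj : Set.InjOn ℓ S := by
      refine Finset.card_image_iff.mp ?_
      have := Finset.card_image_le (s := S) (f := ℓ)
      omega
    have hmemS : ∀ f ∈ S, 1 ≤ ℓ f := by
      intro f hf
      have : ℓ f ∈ Finset.Icc 1 c := himg ▸ Finset.mem_image_of_mem ℓ hf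
      exact (Finset.mem_Icc.mp this).1
    have hvwS : s(v, w) ∈ S := by
      refine Finset.mem_union_right _ (Finset.mem_image.2 ⟨w, Finset.mem_erase.2
        ⟨?_, (G.mem_neighborFinset v w).2 hvw⟩, rfl⟩)
      intro h
      exact hne (by rw [h, Sym2.eq_swap])
    have hq0 : ℓ s(v, w) ≠ 0 := by have := hmemS _ hvwS; omega
    have hkey : ∀ b d : V, (b = u ∨ b = v) → G.Adj b d → s(b, d) ≠ s(u, v) →
        s(b, d) ≠ s(v, w) → ℓ s(b, d) ≠ ℓ s(v, w) := by
      intro b d hb hbd hne1 hne2 hcol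
      apply hne2
      refine hinj ?_ hvwS hcol
      rcases hb with rfl | rfl
      · refine Finset.mem_union_left _ (Finset.mem_image.2 ⟨d, Finset.mem_erase.2
          ⟨?_, (G.mem_neighborFinset b d).2 hbd⟩, rfl⟩)
        intro h; exact hne1 (by rw [h])
      · refine Finset.mem_union_right _ (Finset.mem_image.2 ⟨d, Finset.mem_erase.2
          ⟨?_, (G.mem_neighborFinset b d).2 hbd⟩, rfl⟩)
        intro h; rw [h] at hne1; exact hne1 Sym2.eq_swap
    right
    set ℓ₁ : Sym2 V → ℕ :=
      fun f => if f = s(u, v) then ℓ s(v, w) else if f = s(v, w) then 0 else ℓ f with hl1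
    have E0 : ℓ₁ s(u, v) = ℓ s(v, w) := by simp [hl1]
    have E1 : ℓ₁ s(v, w) = 0 := by simp [hl1, hne']
    have E2 : ∀ f, f ≠ s(u, v) → f ≠ s(v, w) → ℓ₁ f = ℓ f := by
      intro f h1 h2; simp [hl1, h1, h2]
    refine ⟨hq0, ?_, ?_⟩
    · intro e he
      by_cases h1 : e = s(u, v)
      · rw [h1, E0]; exact hstc.1 _ (G.mem_edgeSet.2 hvw)
      · by_cases h2 : e = s(v, w)
        · rw [h2, E1]; omega
        · rw [E2 e h1 h2]; exact hstc.1 e he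
    · intro a b d had hab hbd hnad heq
      by_cases h1' : s(a, b) = s(v, w)
      · rw [h1', E1]
      · by_cases h2' : s(b, d) = s(v, w)
        · rw [h2', E1] at heq; exact heq
        · by_cases h1 : s(a, b) = s(u, v) <;> by_cases h2 : s(b, d) = s(u, v)
          · exfalso
            rcases Sym2.eq_iff.mp (h1.trans h2.symm) with ⟨h, _⟩ | ⟨h, _⟩
            · exact hab.ne h
            · exact had h
          · exfalso
            rw [h1, E0, E2 _ h2 h2'] at heq
            rcases Sym2.eq_iff.mp h1 with ⟨rfl, rfl⟩ | ⟨rfl, rfl⟩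
            · exact hkey b d (Or.inr rfl) hbd h2 h2' heq.symm
            · exact hkey b d (Or.inl rfl) hbd h2 h2' heq.symm
          · exfalso
            rw [h2, E0, E2 _ h1 h1'] at heq
            have hba : s(b, a) = s(a, b) := Sym2.eq_swap
            rcases Sym2.eq_iff.mp h2 with ⟨rfl, rfl⟩ | ⟨rfl, rfl⟩
            · exact hkey b a (Or.inl rfl) hab.symm (hba ▸ h1) (hba ▸ h1') (hba ▸ heq)
            · exact hkey b a (Or.inr rfl) hab.symm (hba ▸ h1) (hba ▸ h1') (hba ▸ heq)
          · rw [E2 _ h1 h1'] at heq ⊢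
            rw [E2 _ h2 h2'] at heq
            exact hstc.2 a b d had hab hbd hnad heq

/-- Moving a weak edge along an edge-simple path inside a set of low-degree
vertices: the colors of the path edges can be shifted so that the weak edge
moves to the end of the path, or the total number of weak edges drops. -/
theorem move_weak_edge_along_path {V : Type*} [Fintype V] [DecidableEq V]
    (G : SimpleGraph V) (c : ℕ)
    (A : Set V) (hdeg : ∀ a ∈ A, (G.neighborSet a).ncard ≤ c / 2 + 1)
    (ℓ : Sym2 V → ℕ) (hstc : IsSTCLabeling G c ℓ)
    (r : ℕ) (hr : 2 ≤ r) (P : ℕ → V)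
    (hadj : ∀ i, i + 1 < r → G.Adj (P i) (P (i + 1)))
    (hA : ∀ i, i < r → P i ∈ A)
    (hsimple : ∀ i j, i + 1 < r → j + 1 < r → i ≠ j →
      s(P i, P (i + 1)) ≠ s(P j, P (j + 1)))
    (hweak : ℓ s(P 0, P 1) = 0)
    (EP : Set (Sym2 V)) (hEP : EP = {e | ∃ i, i + 1 < r ∧ e = s(P i, P (i + 1))}) :
    ∃ ℓ' : Sym2 V → ℕ, IsSTCLabeling G c ℓ' ∧
      (∀ e : Sym2 V, e ∉ EP → ℓ' e = ℓ e) ∧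
      (((∀ i, i + 2 < r → ℓ' s(P i, P (i + 1)) = ℓ s(P (i + 1), P (i + 2))) ∧
          ℓ' s(P (r - 2), P (r - 1)) = 0) ∨
        weakCount G ℓ' < weakCount G ℓ) := by
  subst hEP
  induction r, hr using Nat.le_induction generalizing P ℓ with
  | base =>
    refine ⟨ℓ, hstc, fun e _ => rfl, Or.inl ⟨fun i hi => absurd hi (by omega), ?_⟩⟩
    norm_num
    exact hweak
  | succ r hr2 IH =>
    have hadj01 : G.Adj (P 0) (P 1) := hadj 0 (by omega)
    have hadj12 : G.Adj (P 1) (P 2) := hadj 1 (by omega)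
    have hne01 : s(P 0, P 1) ≠ s(P 1, P 2) := hsimple 0 1 (by omega) (by omega) (by omega)
    rcases stc_step G c ℓ hstc (P 0) (P 1) (P 2) hadj01 hadj12 hne01 hweak
        (hdeg _ (hA 0 (by omega))) (hdeg _ (hA 1 (by omega))) with
      ⟨ℓ₂, hstc2, hagree2, hlt2⟩ | ⟨hq0, hstc1⟩
    · refine ⟨ℓ₂, hstc2, ?_, Or.inr hlt2⟩
      intro e he
      exact hagree2 e (fun h => he ⟨0, by omega, h⟩)
    · set ℓ₁ : Sym2 V → ℕ := fun f =>
        if f = s(P 0, P 1) then ℓ s(P 1, P 2) else if f = s(P 1, P 2) then 0 else ℓ f with hl1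
      have hne01' : s(P 1, P 2) ≠ s(P 0, P 1) := fun h => hne01 h.symm
      have E0 : ℓ₁ s(P 0, P 1) = ℓ s(P 1, P 2) := by simp [hl1]
      have E1 : ℓ₁ s(P 1, P 2) = 0 := by simp [hl1, hne01']
      have E2 : ∀ f, f ≠ s(P 0, P 1) → f ≠ s(P 1, P 2) → ℓ₁ f = ℓ f := by
        intro f h1 h2; simp [hl1, h1, h2]
      obtain ⟨ℓ', hstc', hagree', hres⟩ := IH ℓ₁ hstc1 (fun i => P (i + 1))
        (fun i hi => hadj (i + 1) (by omega))
        (fun i hi => hA (i + 1) (by omega))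
        (fun i j hi hj hij => hsimple (i + 1) (j + 1) (by omega) (by omega) (by omega))
        E1
      have hagree : ∀ e, e ∉ {e | ∃ i, i + 1 < r + 1 ∧ e = s(P i, P (i + 1))} → ℓ' e = ℓ e := by
        intro e he
        have h0 : e ≠ s(P 0, P 1) := fun h => he ⟨0, by omega, h⟩
        have h1 : e ≠ s(P 1, P 2) := fun h => he ⟨1, by omega, h⟩
        have hmem : e ∉ {e | ∃ i, i + 1 < r ∧ e = s(P (i + 1), P (i + 1 + 1))} := by
          rintro ⟨i, hi, hie⟩
          exact he ⟨i + 1, by omega, hie⟩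
        rw [hagree' e hmem, E2 e h0 h1]
      refine ⟨ℓ', hstc', hagree, ?_⟩
      have hwceq : weakCount G ℓ₁ = weakCount G ℓ := by
        have hset : {e ∈ G.edgeSet | ℓ₁ e = 0} =
            insert (s(P 1, P 2)) ({e ∈ G.edgeSet | ℓ e = 0} \ {s(P 0, P 1)}) := by
          ext e
          simp only [Set.mem_sep_iff, Set.mem_insert_iff, Set.mem_diff, Set.mem_singleton_iff]
          by_cases h1 : e = s(P 0, P 1)
          · subst h1
            rw [E0]
            simp [hne01, hq0]
          · by_cases h2 : e = s(P 1, P 2)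
            · subst h2
              rw [E1]
              simp [G.mem_edgeSet.2 hadj12]
            · rw [E2 e h1 h2]
              simp [h1, h2]
        unfold weakCount
        have hnm : s(P 1, P 2) ∉ {e ∈ G.edgeSet | ℓ e = 0} \ {s(P 0, P 1)} := by
          rintro ⟨⟨_, h0⟩, _⟩
          exact hq0 h0
        have hm : s(P 0, P 1) ∈ {e ∈ G.edgeSet | ℓ e = 0} := ⟨G.mem_edgeSet.2 hadj01, hweak⟩
        rw [hset, Set.ncard_insert_of_notMem hnm (Set.toFinite _),
          Set.ncard_diff_singleton_add_one hm (Set.toFinite _)]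
      rcases hres with ⟨hshift, hlast⟩ | hlt
      · left
        constructor
        · intro i hi
          rcases Nat.eq_zero_or_pos i with rfl | hipos
          · have h00 : ℓ' s(P 0, P 1) = ℓ₁ s(P 0, P 1) := by
              refine hagree' _ ?_
              rintro ⟨j, hj, hje⟩
              exact hsimple 0 (j + 1) (by omega) (by omega) (by omega) hje
            rw [h00, E0]
          · obtain ⟨j, rfl⟩ : ∃ j, i = j + 1 := ⟨i - 1, by omega⟩
            have h := hshift j (by omega)
            rw [h, E2 _ (hsimple (j + 2) 0 (by omega) (by omega) (by omega))
              (hsimple (j + 2) 1 (by omega) (by omega) (by omega))]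
        · obtain ⟨m, rfl⟩ : ∃ m, r = m + 2 := ⟨r - 2, by omega⟩
          rw [show m + 2 + 1 - 2 = m + 1 from by omega, show m + 2 + 1 - 1 = m + 2 from by omega]
          rw [show m + 2 - 2 + 1 = m + 1 from by omega,
            show m + 2 - 1 + 1 = m + 2 from by omega] at hlast
          exact hlast
      · right
        rw [← hwceq]
        exact hlt
end

section
/- Let G be a graph, c ∈ ℕ, A a connected component of the graph induced by vertices of degree at most ⌊c/2⌋+1, and L an STC-labeling of G. Then there exists an STC-labeling L' agreeing with L on all edges outside E(A) such that L' has at most one weak edge inside E(A). -/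
open SimpleGraph

set_option linter.unusedSectionVars false

namespace STCAux
variable {V : Type*} [Fintype V] [DecidableEq V]

/-- two Sym2's share a vertex -/
def touches (e f : Sym2 V) : Prop := ∃ x, x ∈ e ∧ x ∈ f

lemma touches_symm {e f : Sym2 V} (h : touches e f) : touches f e := by
  obtain ⟨x, hx1, hx2⟩ := h; exact ⟨x, hx2, hx1⟩

/-- every element except the first touches some earlier element -/
def Anchored (r : List (Sym2 V)) : Prop :=
  ∀ p e t, r = p ++ e :: t → p ≠ [] → ∃ f ∈ p, touches e f

lemma anchored_nil : Anchored ([] : List (Sym2 V)) := by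
  intro p e t h hp; exact absurd h (by simp)

lemma anchored_append_singleton {r : List (Sym2 V)} {e : Sym2 V}
    (h : Anchored r) (he : r ≠ [] → ∃ f ∈ r, touches e f) :
    Anchored (r ++ [e]) := by
  intro p e1 t hpt hp
  rcases List.append_eq_append_iff.mp hpt with ⟨a, ha1, ha2⟩ | ⟨cc, hc1, hc2⟩
  · -- p = r ++ a, [e] = a ++ e1 :: t
    match a, ha1, ha2 with
    | [], ha1, ha2 =>
      simp at ha1 ha2
      obtain ⟨rfl, rfl⟩ := ha2
      subst ha1
      exact he hp
    | (x :: a'), ha1, ha2 =>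
      exfalso
      have := congrArg List.length ha2
      simp at this
  · -- r = p ++ cc, e1 :: t = cc ++ [e]
    match cc, hc1, hc2 with
    | [], hc1, hc2 =>
      simp at hc2
      obtain ⟨rfl, rfl⟩ := hc2
      simp at hc1
      subst hc1
      exact he hp
    | (x :: c'), hc1, hc2 =>
      simp only [List.cons_append, List.cons.injEq] at hc2
      obtain ⟨rfl, rfl⟩ := hc2
      exact h p e1 c' hc1 hp



variable (G : SimpleGraph V)

open Classical in
/-- edges of `G` incident to `e` (other than `e`) -/
noncomputable def inc (e : Sym2 V) : Finset (Sym2 V) :=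
  Finset.univ.filter (fun f => f ∈ G.edgeSet ∧ f ≠ e ∧ touches f e)

open Classical in
lemma mem_inc {e f : Sym2 V} : f ∈ inc G e ↔ f ∈ G.edgeSet ∧ f ≠ e ∧ touches f e := by
  simp [inc]

open Classical in
noncomputable def pick (c : ℕ) (L : Sym2 V → ℕ) (e : Sym2 V) : ℕ :=
  if h : (Finset.Icc 1 c \ (inc G e).image L).Nonempty
  then (Finset.Icc 1 c \ (inc G e).image L).min' h else 0

noncomputable def recolor (c : ℕ) : List (Sym2 V) → (Sym2 V → ℕ) → Sym2 V → ℕ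
  | [], g => g
  | e :: t, g => Function.update (recolor c t g) e (pick G c (recolor c t g) e)

lemma recolor_not_mem (c : ℕ) {l : List (Sym2 V)} {g : Sym2 V → ℕ} {f : Sym2 V}
    (h : f ∉ l) : recolor G c l g f = g f := by
  induction l with
  | nil => rfl
  | cons e t ih =>
    simp only [List.mem_cons, not_or] at h
    simp only [recolor, Function.update_of_ne h.1]
    exact ih h.2

lemma recolor_invariant (c : ℕ) (r : List (Sym2 V))
    (hnd : r.Nodup)
    (hedge : ∀ e ∈ r, e ∈ G.edgeSet)
    (hanc : Anchored r)
    (hcard : ∀ e ∈ r, (inc G e).card ≤ c)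
    (g : Sym2 V → ℕ) (hg : ∀ e ∈ r, g e = 0) :
    ∀ t p, r = p ++ t →
      (∀ f ∈ p, recolor G c t g f = 0) ∧
      (∀ e ∈ t, recolor G c t g e = 0 ∨
        (recolor G c t g e ∈ Finset.Icc 1 c ∧
          ∀ f ∈ inc G e, recolor G c t g f ≠ recolor G c t g e)) ∧
      (∀ e ∈ t, e ∈ r.tail → recolor G c t g e ≠ 0) := by
  intro t
  induction t with
  | nil =>
    intro p hpt
    refine ⟨?_, by simp, by simp⟩
    intro f hf
    exact hg f (by rw [hpt]; simpa using hf)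
  | cons e t' ih =>
    intro p hpt
    have hpt' : r = (p ++ [e]) ++ t' := by simpa [List.append_assoc] using hpt
    obtain ⟨I1, I2, I3⟩ := ih (p ++ [e]) hpt'
    set L' := recolor G c t' g with hL'
    have her : e ∈ r := by rw [hpt]; simp
    have hndp : (p ++ e :: t').Nodup := hpt ▸ hnd
    rw [List.nodup_append] at hndp
    have hep : e ∉ p := fun h => hndp.2.2 e h e (by simp) rfl
    have het' : e ∉ t' := by
      have := hndp.2.1
      simp only [List.nodup_cons] at this
      exact this.1
    have hupd : ∀ f : Sym2 V, f ≠ e → recolor G c (e :: t') g f = L' f := by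
      intro f hf
      show Function.update L' e (pick G c L' e) f = L' f
      exact Function.update_of_ne hf _ _
    have hLe : recolor G c (e :: t') g e = pick G c L' e := by
      show Function.update L' e (pick G c L' e) e = _
      exact Function.update_self _ _ _
    set S := Finset.Icc 1 c \ (inc G e).image L' with hS
    have hpickcases : pick G c L' e = 0 ∨
        (pick G c L' e ∈ Finset.Icc 1 c ∧ pick G c L' e ∉ (inc G e).image L') := by
      unfold pick
      split
      · next h =>
        right
        have := Finset.min'_mem _ h
        rw [Finset.mem_sdiff] at this
        exact this
      · left; rfl
    -- if p ≠ [] then the pick succeeds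
    have hsucc : p ≠ [] → recolor G c (e :: t') g e ≠ 0 ∧
        recolor G c (e :: t') g e ∈ Finset.Icc 1 c ∧
        recolor G c (e :: t') g e ∉ (inc G e).image L' := by
      intro hp
      obtain ⟨f0, hf0p, htch⟩ := hanc p e t' hpt hp
      have hf0r : f0 ∈ r := by rw [hpt]; exact List.mem_append_left _ hf0p
      have hf0inc : f0 ∈ inc G e := by
        rw [mem_inc]
        exact ⟨hedge f0 hf0r, fun h => hep (h ▸ hf0p), touches_symm htch⟩
      have hf00 : L' f0 = 0 := I1 f0 (List.mem_append_left _ hf0p)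
      have hSne : S.Nonempty := by
        by_contra hne
        rw [Finset.not_nonempty_iff_eq_empty, hS, Finset.sdiff_eq_empty_iff_subset] at hne
        have h0im : (0 : ℕ) ∈ (inc G e).image L' := Finset.mem_image.mpr ⟨f0, hf0inc, hf00⟩
        have hsub : Finset.Icc 1 c ⊆ ((inc G e).image L').erase 0 := by
          intro x hx
          rw [Finset.mem_erase]
          refine ⟨?_, hne hx⟩
          rw [Finset.mem_Icc] at hx
          omega
        have h1 := Finset.card_le_card hsub
        rw [Finset.card_erase_of_mem h0im, Nat.card_Icc] at h1
        have h2 := Finset.card_image_le (s := inc G e) (f := L')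
        have h3 := hcard e her
        have h4 : 1 ≤ (inc G e).card := Finset.card_pos.mpr ⟨f0, hf0inc⟩
        omega
      have : pick G c L' e = S.min' hSne := by
        unfold pick
        rw [dif_pos hSne]
      rw [hLe, this]
      have hm : S.min' hSne ∈ Finset.Icc 1 c \ (inc G e).image L' := Finset.min'_mem S hSne
      rw [Finset.mem_sdiff] at hm
      have : S.min' hSne ≠ 0 := by
        have := hm.1
        rw [Finset.mem_Icc] at this
        omega
      exact ⟨this, hm.1, hm.2⟩
    refine ⟨?_, ?_, ?_⟩
    · -- I1
      intro f hf
      rw [hupd f (fun h => hep (h ▸ hf))]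
      exact I1 f (List.mem_append_left _ hf)
    · -- I2
      intro e' he'
      rcases List.mem_cons.mp he' with rfl | he't
      · -- the new edge e
        rw [hLe]
        rcases hpickcases with h0 | ⟨hIcc, him⟩
        · left; exact h0
        · right
          refine ⟨hIcc, ?_⟩
          intro f hfinc heq
          have hfe : f ≠ e' := ((mem_inc G).mp hfinc).2.1
          rw [hupd f hfe] at heq
          exact him (Finset.mem_image.mpr ⟨f, hfinc, heq⟩)
      · -- old edges
        have he'e : e' ≠ e := fun h => het' (h ▸ he't)
        rw [hupd e' he'e]
        rcases I2 e' he't with h0 | ⟨hIcc, hne⟩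
        · left; exact h0
        · right
          refine ⟨hIcc, ?_⟩
          intro f hfinc
          by_cases hfe : f = e
          · subst hfe
            rw [hLe]
            rcases hpickcases with h0 | ⟨hIcc2, him⟩
            · rw [h0]
              rw [Finset.mem_Icc] at hIcc
              omega
            · intro heq
              have he'inc : e' ∈ inc G f := by
                rw [mem_inc]
                have := (mem_inc G).mp hfinc
                exact ⟨hedge e' (by rw [hpt]; simp [he't]), he'e, touches_symm this.2.2⟩
              exact him (Finset.mem_image.mpr ⟨e', he'inc, heq.symm⟩)
          · rw [hupd f hfe]
            exact hne f hfinc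
    · -- I3
      intro e' he' htl
      rcases List.mem_cons.mp he' with rfl | he't
      · have hp : p ≠ [] := by
          intro hpnil
          subst hpnil
          simp only [List.nil_append] at hpt
          rw [hpt] at htl
          exact het' htl
        exact (hsucc hp).1
      · have he'e : e' ≠ e := fun h => het' (h ▸ he't)
        rw [hupd e' he'e]
        exact I3 e' he't htl

def Touch (root : V) (r : List (Sym2 V)) (e : Sym2 V) : Prop :=
  ∃ x ∈ e, x = root ∨ ∃ f ∈ r, x ∈ f

open Classical in
lemma build (root : V) (Ins : Sym2 V → Prop) :
    ∀ n (p : List (Sym2 V)), p.Nodup → (∀ e ∈ p, Ins e) → Anchored p →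
      (∀ h : p ≠ [], root ∈ p.head h) →
      (Finset.univ.filter Ins).card ≤ n + p.length →
      ∃ r : List (Sym2 V), p <+: r ∧ r.Nodup ∧ (∀ e ∈ r, Ins e) ∧ Anchored r ∧
        (∀ h : r ≠ [], root ∈ r.head h) ∧
        (∀ e, Ins e → Touch root r e → e ∈ r) := by
  intro n
  induction n with
  | zero =>
    intro p hnd hIns hanc hhead hmeas
    by_cases hstep : ∃ e, Ins e ∧ e ∉ p ∧ Touch root p e
    · exfalso
      obtain ⟨e, hIe, hnp, _⟩ := hstep
      have hsub : insert e p.toFinset ⊆ Finset.univ.filter Ins := by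
        intro a ha
        rw [Finset.mem_insert] at ha
        rw [Finset.mem_filter]
        rcases ha with rfl | ha
        · exact ⟨Finset.mem_univ _, hIe⟩
        · exact ⟨Finset.mem_univ _, hIns a (List.mem_toFinset.mp ha)⟩
      have h1 := Finset.card_le_card hsub
      rw [Finset.card_insert_of_notMem (fun h => hnp (List.mem_toFinset.mp h)),
        List.toFinset_card_of_nodup hnd] at h1
      omega
    · refine ⟨p, List.prefix_refl p, hnd, hIns, hanc, hhead, ?_⟩
      intro e hIe hT
      by_contra hne
      exact hstep ⟨e, hIe, hne, hT⟩
  | succ n ih =>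
    intro p hnd hIns hanc hhead hmeas
    by_cases hstep : ∃ e, Ins e ∧ e ∉ p ∧ Touch root p e
    · obtain ⟨e, hIe, hnp, hT⟩ := hstep
      have hnd' : (p ++ [e]).Nodup := by
        rw [List.nodup_append]
        refine ⟨hnd, by simp, ?_⟩
        intro a ha b hb
        simp only [List.mem_singleton] at hb
        subst hb
        rintro rfl
        exact hnp ha
      have hIns' : ∀ f ∈ p ++ [e], Ins f := by
        intro f hf
        rcases List.mem_append.mp hf with hf | hf
        · exact hIns f hf
        · simp only [List.mem_singleton] at hf; subst hf; exact hIe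
      have hanc' : Anchored (p ++ [e]) := by
        refine anchored_append_singleton hanc ?_
        intro hp
        obtain ⟨x, hx, hx2⟩ := hT
        rcases hx2 with rfl | ⟨f, hf, hxf⟩
        · exact ⟨p.head hp, List.head_mem hp, ⟨x, hx, hhead hp⟩⟩
        · exact ⟨f, hf, ⟨x, hx, hxf⟩⟩
      have hhead' : ∀ h : (p ++ [e]) ≠ [], root ∈ (p ++ [e]).head h := by
        intro h
        cases p with
        | nil =>
          simp only [List.nil_append, List.head_cons]
          obtain ⟨x, hx, hx2⟩ := hT
          rcases hx2 with rfl | ⟨f, hf, _⟩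
          · exact hx
          · simp at hf
        | cons a p' =>
          simp only [List.cons_append, List.head_cons]
          exact hhead (by simp)
      have hmeas' : (Finset.univ.filter Ins).card ≤ n + (p ++ [e]).length := by
        simp only [List.length_append, List.length_singleton]
        omega
      obtain ⟨r, hpre, h1, h2, h3, h4, h5⟩ := ih (p ++ [e]) hnd' hIns' hanc' hhead' hmeas'
      exact ⟨r, ((List.prefix_append p [e]).trans hpre), h1, h2, h3, h4, h5⟩
    · refine ⟨p, List.prefix_refl p, hnd, hIns, hanc, hhead, ?_⟩
      intro e hIe hT
      by_contra hne
      exact hstep ⟨e, hIe, hne, hT⟩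

lemma exists_full_list (G : SimpleGraph V) (Pset : Set V)
    (K : (G.induce Pset).ConnectedComponent) (A : Set V)
    (hA : A = (fun x : ↥Pset => (x : V)) '' K.supp) :
    ∃ r : List (Sym2 V), r.Nodup ∧ Anchored r ∧
      (∀ e, e ∈ r ↔ (e ∈ G.edgeSet ∧ ∀ x ∈ e, x ∈ A)) := by
  classical
  set Ins : Sym2 V → Prop := fun e => e ∈ G.edgeSet ∧ ∀ x ∈ e, x ∈ A with hIns
  by_cases hex : ∃ e, Ins e
  · obtain ⟨e0, he0⟩ := hex
    set root : V := (Quot.out e0).1 with hroot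
    have hrootA : root ∈ A := he0.2 _ (Sym2.out_fst_mem e0)
    have memA : ∀ v : V, v ∈ A ↔ ∃ h : v ∈ Pset,
        (G.induce Pset).connectedComponentMk ⟨v, h⟩ = K := by
      intro v
      rw [hA]
      constructor
      · rintro ⟨x, hx, rfl⟩
        exact ⟨x.2, by rwa [ConnectedComponent.mem_supp_iff] at hx⟩
      · rintro ⟨h, hK⟩
        exact ⟨⟨v, h⟩, (ConnectedComponent.mem_supp_iff _ _).mpr hK, rfl⟩
    obtain ⟨r, _, hnd, hmem, hanc, _, hmax⟩ :=
      build root Ins (Finset.univ.filter Ins).card [] (by simp) (by simp)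
        anchored_nil (by simp) (by simp; exact le_of_eq (by congr!))
    -- vertices reachable within the component are touched
    have walkprop : ∀ (a b : ↥Pset) (w : (G.induce Pset).Walk a b),
        (G.induce Pset).connectedComponentMk a = K →
        ((a : V) = root ∨ ∃ f ∈ r, (a : V) ∈ f) →
        ((b : V) = root ∨ ∃ f ∈ r, (b : V) ∈ f) := by
      intro a b w
      induction w with
      | nil => intro _ h; exact h
      | @cons a y b h w' ih =>
        intro hK hT
        have hyK : (G.induce Pset).connectedComponentMk y = K :=
          (ConnectedComponent.sound h.reachable).symm.trans hK
        have haA : (a : V) ∈ A := (memA _).mpr ⟨a.2, by simpa using hK⟩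
        have hyA : (y : V) ∈ A := (memA _).mpr ⟨y.2, by simpa using hyK⟩
        have hAdj : G.Adj (a : V) (y : V) := h
        have hInsE : Ins s((a : V), (y : V)) := by
          refine ⟨G.mem_edgeSet.mpr hAdj, ?_⟩
          intro x hx
          rcases Sym2.mem_iff.mp hx with rfl | rfl
          · exact haA
          · exact hyA
        have hTch : Touch root r s((a : V), (y : V)) :=
          ⟨(a : V), Sym2.mem_mk_left _ _, hT⟩
        have hin := hmax _ hInsE hTch
        have hyT : ((y : V) = root ∨ ∃ f ∈ r, (y : V) ∈ f) :=
          Or.inr ⟨s((a : V), (y : V)), hin, Sym2.mem_mk_right _ _⟩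
        exact ih hyK hyT
    have hcomplete : ∀ e, Ins e → e ∈ r := by
      intro e hIe
      induction e using Sym2.ind with
      | _ u v =>
        have huA : u ∈ A := hIe.2 u (Sym2.mem_mk_left _ _)
        obtain ⟨hu, huK⟩ := (memA u).mp huA
        obtain ⟨hr, hrK⟩ := (memA root).mp hrootA
        have hreach : (G.induce Pset).Reachable ⟨root, hr⟩ ⟨u, hu⟩ :=
          ConnectedComponent.exact (hrK.trans huK.symm)
        obtain ⟨w⟩ := hreach
        have huT := walkprop ⟨root, hr⟩ ⟨u, hu⟩ w hrK (Or.inl rfl)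
        exact hmax _ hIe ⟨u, Sym2.mem_mk_left _ _, huT⟩
    exact ⟨r, hnd, hanc, fun e => ⟨fun h => hmem e h, fun h => hcomplete e h⟩⟩
  · refine ⟨[], by simp, anchored_nil, ?_⟩
    intro e
    simp only [List.not_mem_nil, false_iff]
    exact fun h => hex ⟨e, h⟩

lemma inc_card_le (G : SimpleGraph V) (c : ℕ) {u v : V}
    (hadj : G.Adj u v)
    (hu : (G.neighborSet u).ncard ≤ c / 2 + 1)
    (hv : (G.neighborSet v).ncard ≤ c / 2 + 1) :
    (inc G s(u, v)).card ≤ c := by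
  classical
  set NU := (G.neighborSet u).toFinite.toFinset with hNU
  set NV := (G.neighborSet v).toFinite.toFinset with hNV
  have hNUcard : NU.card ≤ c / 2 + 1 := by
    rw [hNU, ← Set.ncard_eq_toFinset_card]
    exact hu
  have hNVcard : NV.card ≤ c / 2 + 1 := by
    rw [hNV, ← Set.ncard_eq_toFinset_card]
    exact hv
  have hsub : inc G s(u, v) ⊆
      ((NU.image (fun w => s(u, w))).erase s(u, v)) ∪
      ((NV.image (fun w => s(v, w))).erase s(u, v)) := by
    intro f hf
    obtain ⟨hfE, hfne, x, hxf, hxe⟩ := (mem_inc G).mp hf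
    rcases Sym2.mem_iff.mp hxe with rfl | rfl
    · -- x = u
      have hspec := Sym2.other_spec hxf
      have hother : Sym2.Mem.other hxf ∈ NU := by
        rw [hNU, Set.Finite.mem_toFinset]
        have : G.Adj x (Sym2.Mem.other hxf) := G.mem_edgeSet.mp (hspec.symm ▸ hfE)
        exact this
      refine Finset.mem_union_left _ (Finset.mem_erase.mpr ⟨?_, ?_⟩)
      · exact fun h => hfne (hspec ▸ h) |>.elim
      · exact Finset.mem_image.mpr ⟨_, hother, hspec⟩
    · -- x = v
      have hspec := Sym2.other_spec hxf
      have hother : Sym2.Mem.other hxf ∈ NV := by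
        rw [hNV, Set.Finite.mem_toFinset]
        have : G.Adj x (Sym2.Mem.other hxf) := G.mem_edgeSet.mp (hspec.symm ▸ hfE)
        exact this
      refine Finset.mem_union_right _ (Finset.mem_erase.mpr ⟨?_, ?_⟩)
      · exact fun h => hfne (hspec ▸ h) |>.elim
      · exact Finset.mem_image.mpr ⟨_, hother, hspec⟩
  have h1 := Finset.card_le_card hsub
  have h2 := Finset.card_union_le ((NU.image (fun w => s(u, w))).erase s(u, v))
    ((NV.image (fun w => s(v, w))).erase s(u, v))
  have hUmem : s(u, v) ∈ NU.image (fun w => s(u, w)) := by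
    refine Finset.mem_image.mpr ⟨v, ?_, rfl⟩
    rw [hNU, Set.Finite.mem_toFinset]
    exact hadj
  have hVmem : s(u, v) ∈ NV.image (fun w => s(v, w)) := by
    refine Finset.mem_image.mpr ⟨u, ?_, Sym2.eq_swap⟩
    rw [hNV, Set.Finite.mem_toFinset]
    exact hadj.symm
  have h3 := Finset.card_erase_of_mem hUmem
  have h4 := Finset.card_erase_of_mem hVmem
  have h5 := Finset.card_image_le (s := NU) (f := fun w => s(u, w))
  have h6 := Finset.card_image_le (s := NV) (f := fun w => s(v, w))
  have h7 : 1 ≤ (NU.image (fun w => s(u, w))).card := Finset.card_pos.mpr ⟨_, hUmem⟩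
  have h8 : 1 ≤ (NV.image (fun w => s(v, w))).card := Finset.card_pos.mpr ⟨_, hVmem⟩
  have hdiv := Nat.div_add_mod c 2
  have hmod : c % 2 < 2 := Nat.mod_lt _ (by omega)
  omega

end STCAux

open SimpleGraph

/-- For a periphery component `A` (a connected component of the subgraph induced
by the vertices of degree at most `⌊c/2⌋+1`) and any STC-labeling `L`, there is
an STC-labeling agreeing with `L` outside `E(A)` with at most one weak edge
inside `E(A)`. -/
theorem at_most_one_weak_in_periphery_component {V : Type*} [Fintype V] [DecidableEq V]
    (G : SimpleGraph V) (c : ℕ)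
    (Pset : Set V) (hP : Pset = {v : V | (G.neighborSet v).ncard ≤ c / 2 + 1})
    (K : (G.induce Pset).ConnectedComponent)
    (A : Set V) (hA : A = (fun x : ↥Pset => (x : V)) '' K.supp)
    (ℓ : Sym2 V → ℕ) (hstc : IsSTCLabeling G c ℓ) :
    ∃ ℓ' : Sym2 V → ℕ, IsSTCLabeling G c ℓ' ∧
      (∀ e ∈ G.edgeSet, ¬ (∀ x ∈ e, x ∈ A) → ℓ' e = ℓ e) ∧
      {e ∈ G.edgeSet | (∀ x ∈ e, x ∈ A) ∧ ℓ' e = 0}.ncard ≤ 1 := by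
  classical
  have hAP : A ⊆ Pset := by
    rw [hA]; rintro _ ⟨x, _, rfl⟩; exact x.2
  obtain ⟨r, hnd, hanc, hmem⟩ := STCAux.exists_full_list G Pset K A hA
  have hedge : ∀ e ∈ r, e ∈ G.edgeSet := fun e he => ((hmem e).mp he).1
  have hcard0 : ∀ e : Sym2 V, (e ∈ G.edgeSet ∧ ∀ x ∈ e, x ∈ A) →
      (STCAux.inc G e).card ≤ c := by
    intro e
    induction e using Sym2.ind with
    | _ u v =>
      rintro ⟨hE, hin⟩
      have hadj : G.Adj u v := G.mem_edgeSet.mp hE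
      have hu : u ∈ Pset := hAP (hin u (Sym2.mem_mk_left _ _))
      have hv : v ∈ Pset := hAP (hin v (Sym2.mem_mk_right _ _))
      rw [hP] at hu hv
      exact STCAux.inc_card_le G c hadj hu hv
  have hcard : ∀ e ∈ r, (STCAux.inc G e).card ≤ c :=
    fun e he => hcard0 e ((hmem e).mp he)
  set g : Sym2 V → ℕ := fun e => if (∀ x ∈ e, x ∈ A) then 0 else ℓ e with hg_def
  have hg : ∀ e ∈ r, g e = 0 := by
    intro e he
    simp only [hg_def, if_pos ((hmem e).mp he).2]
  have hgpos : ∀ e : Sym2 V, (∀ x ∈ e, x ∈ A) → g e = 0 := fun e h => if_pos h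
  have hgneg : ∀ e : Sym2 V, ¬ (∀ x ∈ e, x ∈ A) → g e = ℓ e := fun e h => if_neg h
  set L : Sym2 V → ℕ := STCAux.recolor G c r g with hLdef
  obtain ⟨I1, I2, I3⟩ := STCAux.recolor_invariant G c r hnd hedge hanc hcard g hg r [] rfl
  have hnotmem : ∀ e : Sym2 V, e ∉ r → L e = g e :=
    fun e he => STCAux.recolor_not_mem G c he
  refine ⟨L, ⟨?_, ?_⟩, ?_, ?_⟩
  · -- bound
    intro e he
    by_cases her : e ∈ r
    · rcases I2 e her with h0 | ⟨hIcc, _⟩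
      · show STCAux.recolor G c r g e ≤ c
        rw [h0]
        exact Nat.zero_le c
      · exact (Finset.mem_Icc.mp hIcc).2
    · rw [hnotmem e her]
      by_cases hin : ∀ x ∈ e, x ∈ A
      · rw [hgpos e hin]
        exact Nat.zero_le c
      · rw [hgneg e hin]
        exact hstc.1 e he
  · -- triadic condition
    intro u v w huw hadj1 hadj2 hnadj heq
    have hE1 : s(u, v) ∈ G.edgeSet := G.mem_edgeSet.mpr hadj1
    have hE2 : s(v, w) ∈ G.edgeSet := G.mem_edgeSet.mpr hadj2
    have h12 : s(u, v) ≠ s(v, w) := by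
      intro hcontra
      rcases Sym2.eq_iff.mp hcontra with ⟨h1, _⟩ | ⟨h1, _⟩
      · exact G.ne_of_adj hadj1 h1
      · exact huw h1
    by_cases h1r : s(u, v) ∈ r
    · rcases I2 _ h1r with h0 | ⟨_, hne⟩
      · exact h0
      · exact absurd heq.symm (hne s(v, w) ((STCAux.mem_inc G).mpr
          ⟨hE2, h12.symm, ⟨v, Sym2.mem_mk_left _ _, Sym2.mem_mk_right _ _⟩⟩))
    · by_cases h2r : s(v, w) ∈ r
      · rcases I2 _ h2r with h0 | ⟨_, hne⟩
        · rw [heq]; exact h0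
        · exact absurd heq (hne s(u, v) ((STCAux.mem_inc G).mpr
            ⟨hE1, h12, ⟨v, Sym2.mem_mk_right _ _, Sym2.mem_mk_left _ _⟩⟩))
      · by_cases hin1 : ∀ x ∈ s(u, v), x ∈ A
        · exact absurd ((hmem _).mpr ⟨hE1, hin1⟩) h1r
        · by_cases hin2 : ∀ x ∈ s(v, w), x ∈ A
          · exact absurd ((hmem _).mpr ⟨hE2, hin2⟩) h2r
          · have hL1 : L s(u, v) = ℓ s(u, v) := by
              rw [hnotmem _ h1r, hg_def]; exact if_neg hin1
            have hL2 : L s(v, w) = ℓ s(v, w) := by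
              rw [hnotmem _ h2r, hg_def]; exact if_neg hin2
            rw [hL1]
            refine hstc.2 u v w huw hadj1 hadj2 hnadj ?_
            rw [← hL1, ← hL2]; exact heq
  · -- agreement outside E(A)
    intro e he hout
    have her : e ∉ r := fun h => hout ((hmem e).mp h).2
    rw [hnotmem e her]
    exact hgneg e hout
  · -- at most one weak edge inside
    cases r with
    | nil =>
      have : {e ∈ G.edgeSet | (∀ x ∈ e, x ∈ A) ∧ L e = 0} = ∅ := by
        ext e
        simp only [Set.mem_setOf_eq, Set.mem_empty_iff_false, iff_false, not_and]
        intro heE hin _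
        exact absurd ((hmem e).mpr ⟨heE, hin⟩) List.not_mem_nil
      rw [this]
      simp
    | cons e0 r' =>
      have hsub : {e ∈ G.edgeSet | (∀ x ∈ e, x ∈ A) ∧ L e = 0} ⊆ {e0} := by
        rintro e ⟨heE, hin, h0⟩
        have her : e ∈ e0 :: r' := (hmem e).mpr ⟨heE, hin⟩
        by_contra hne
        simp only [Set.mem_singleton_iff] at hne
        have het : e ∈ (e0 :: r').tail := by
          rcases List.mem_cons.mp her with rfl | h
          · exact absurd rfl hne
          · exact h
        exact I3 e her het h0
      calc {e ∈ G.edgeSet | (∀ x ∈ e, x ∈ A) ∧ L e = 0}.ncard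
          ≤ ({e0} : Set (Sym2 V)).ncard :=
            Set.ncard_le_ncard hsub (Set.finite_singleton e0)
        _ = 1 := Set.ncard_singleton e0
end

section
/- Let G be a graph, c ∈ ℕ, and A a periphery component (connected component of low-degree vertices of degree at most ⌊c/2⌋+1). If some edge {u,v} ∈ E(A) forms an induced P_3 with fewer than c other edges of G, then A is good: for every STC-labeling L with E(A) ⊆ W_L there exists an STC-labeling L' agreeing with L outside E(A) and having no weak edge inside E(A). -/
open SimpleGraph

set_option linter.unusedSectionVars false
set_option maxHeartbeats 1600000

attribute [local instance] Classical.propDecidable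

namespace STCaux

variable {V : Type*} [Fintype V] [DecidableEq V] (G : SimpleGraph V)

/-- The set of edges of `G` forming an induced `P₃` with the edge `e`. -/
noncomputable def confE (e : Sym2 V) : Finset (Sym2 V) :=
  Finset.univ.filter (fun f => f ∈ G.edgeSet ∧ f ≠ e ∧ ∃ x y w : V,
    e = s(x, y) ∧ G.Adj x y ∧ f = s(x, w) ∧ ¬ G.Adj y w ∧ y ≠ w)

variable {G}

lemma mem_confE {e f : Sym2 V} :
    f ∈ confE G e ↔ f ∈ G.edgeSet ∧ f ≠ e ∧ ∃ x y w : V,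
      e = s(x, y) ∧ G.Adj x y ∧ f = s(x, w) ∧ ¬ G.Adj y w ∧ y ≠ w := by
  simp [confE]

lemma mem_confE_symm {e f : Sym2 V} (he : e ∈ G.edgeSet) (hf : f ∈ confE G e) :
    e ∈ confE G f := by
  rw [mem_confE] at hf ⊢
  obtain ⟨hfE, hne, x, y, w, hexy, hadj, hfxw, hnyw, hynw⟩ := hf
  refine ⟨he, fun h => hne h.symm, x, w, y, hfxw, ?_, hexy, fun h => hnyw h.symm, fun h => hynw h.symm⟩
  rw [hfxw] at hfE; exact hfE

lemma mem_confE_of_P3 {a b c : V} (hab : G.Adj a b) (hbc : G.Adj b c)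
    (hac : ¬ G.Adj a c) (hane : a ≠ c) : s(b, c) ∈ confE G s(a, b) := by
  rw [mem_confE]
  refine ⟨hbc, ?_, b, a, c, Sym2.eq_swap, hab.symm, rfl, hac, hane⟩
  intro h
  rw [Sym2.eq_iff] at h
  rcases h with ⟨h1, h2⟩ | ⟨h1, h2⟩
  · exact hab.ne h1.symm
  · exact hane h2.symm

/-- neighbors as a finset -/
noncomputable def nbr (G : SimpleGraph V) (x : V) : Finset V :=
  Finset.univ.filter (fun w => G.Adj x w)

lemma mem_nbr {x w : V} : w ∈ nbr G x ↔ G.Adj x w := by simp [nbr]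

lemma confE_subset {x y : V} (_hxy : G.Adj x y) :
    confE G s(x, y) ⊆
      ((nbr G x).erase y).image (fun w => s(x, w)) ∪
      ((nbr G y).erase x).image (fun w => s(y, w)) := by
  intro f hf
  rw [mem_confE] at hf
  obtain ⟨hfE, _hne, x', y', w, hexy, _hadj, hfxw, _hnyw, hynw⟩ := hf
  rw [Sym2.eq_iff] at hexy
  rw [Finset.mem_union, Finset.mem_image, Finset.mem_image]
  have hadjw : G.Adj x' w := by rw [hfxw, SimpleGraph.mem_edgeSet] at hfE; exact hfE
  rcases hexy with ⟨h1, h2⟩ | ⟨h1, h2⟩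
  · subst h1; subst h2
    exact Or.inl ⟨w, Finset.mem_erase.mpr ⟨fun h => hynw h.symm, mem_nbr.mpr hadjw⟩, hfxw.symm⟩
  · subst h1; subst h2
    exact Or.inr ⟨w, Finset.mem_erase.mpr ⟨fun h => hynw h.symm, mem_nbr.mpr hadjw⟩, hfxw.symm⟩

lemma disj_cover {x y : V} (hxy : G.Adj x y) :
    Disjoint (((nbr G x).erase y).image (fun w => s(x, w)))
      (((nbr G y).erase x).image (fun w => s(y, w))) := by
  rw [Finset.disjoint_left]
  intro f hf hf'
  rw [Finset.mem_image] at hf hf'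
  obtain ⟨w, hw, rfl⟩ := hf
  obtain ⟨w', hw', he⟩ := hf'
  rw [Sym2.eq_iff] at he
  rcases he with ⟨h1, _⟩ | ⟨h1, h2⟩
  · exact hxy.ne h1.symm
  · exact (Finset.mem_erase.mp hw').1 h2

lemma sxz_not_mem_confE {x y z : V} (hxy : G.Adj x y) (hxz : G.Adj x z) (hyz : G.Adj y z) :
    s(x, z) ∉ confE G s(x, y) := by
  intro h
  rw [mem_confE] at h
  obtain ⟨_, _, x', y', w, hexy, _hadj, hfxw, hnyw, _⟩ := h
  rw [Sym2.eq_iff] at hexy hfxw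
  rcases hexy with ⟨h1, h2⟩ | ⟨h1, h2⟩ <;> subst h1 <;> subst h2
  · rcases hfxw with ⟨_, h4⟩ | ⟨h3, h4⟩
    · exact hnyw (h4 ▸ hyz)
    · exact hxz.ne' (h3 ▸ h4)
  · rcases hfxw with ⟨h3, _⟩ | ⟨_, h4⟩
    · exact hxy.ne h3
    · exact hyz.ne' h4

lemma confE_comm {x y : V} : confE G s(x, y) = confE G s(y, x) := by
  rw [Sym2.eq_swap]

lemma card_cover {x y : V} (hxy : G.Adj x y) :
    (((nbr G x).erase y).image (fun w => s(x, w)) ∪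
      ((nbr G y).erase x).image (fun w => s(y, w))).card
      = ((nbr G x).card - 1) + ((nbr G y).card - 1) := by
  rw [Finset.card_union_of_disjoint (disj_cover hxy)]
  have h1 : (((nbr G x).erase y).image (fun w => s(x, w))).card = (nbr G x).card - 1 := by
    rw [Finset.card_image_of_injective _ (fun a b h => by
      rw [Sym2.eq_iff] at h
      rcases h with ⟨_, h2⟩ | ⟨h1, h2⟩
      · exact h2
      · exact h2.trans h1), Finset.card_erase_of_mem (mem_nbr.mpr hxy)]
  have h2 : (((nbr G y).erase x).image (fun w => s(y, w))).card = (nbr G y).card - 1 := by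
    rw [Finset.card_image_of_injective _ (fun a b h => by
      rw [Sym2.eq_iff] at h
      rcases h with ⟨_, h2⟩ | ⟨h1, h2⟩
      · exact h2
      · exact h2.trans h1), Finset.card_erase_of_mem (mem_nbr.mpr hxy.symm)]
  rw [h1, h2]

lemma confE_card_le {x y : V} (hxy : G.Adj x y) :
    (confE G s(x, y)).card ≤ ((nbr G x).card - 1) + ((nbr G y).card - 1) := by
  rw [← card_cover hxy]
  exact Finset.card_le_card (confE_subset hxy)

lemma confE_card_le_tri {x y z : V} (hxy : G.Adj x y) (hxz : G.Adj x z) (hyz : G.Adj y z) :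
    (confE G s(x, y)).card + 2 ≤ ((nbr G x).card - 1) + ((nbr G y).card - 1) := by
  rw [← card_cover hxy]
  have hsub : confE G s(x, y) ∪ {s(x, z), s(y, z)} ⊆
      ((nbr G x).erase y).image (fun w => s(x, w)) ∪
      ((nbr G y).erase x).image (fun w => s(y, w)) := by
    apply Finset.union_subset (confE_subset hxy)
    intro f hf
    rw [Finset.mem_insert, Finset.mem_singleton] at hf
    rw [Finset.mem_union, Finset.mem_image, Finset.mem_image]
    rcases hf with rfl | rfl
    · exact Or.inl ⟨z, Finset.mem_erase.mpr ⟨hyz.ne', mem_nbr.mpr hxz⟩, rfl⟩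
    · exact Or.inr ⟨z, Finset.mem_erase.mpr ⟨hxz.ne', mem_nbr.mpr hyz⟩, rfl⟩
  have hxz_not : s(x, z) ∉ confE G s(x, y) := sxz_not_mem_confE hxy hxz hyz
  have hyz_not : s(y, z) ∉ confE G s(x, y) := by
    rw [confE_comm]
    exact sxz_not_mem_confE hxy.symm hyz hxz
  have hne : s(x, z) ≠ s(y, z) := by
    intro h
    rw [Sym2.eq_iff] at h
    rcases h with ⟨h1, _⟩ | ⟨h1, h2⟩
    · exact hxy.ne h1
    · exact hxz.ne h1
  have hdisj : Disjoint (confE G s(x, y)) ({s(x, z), s(y, z)} : Finset (Sym2 V)) := by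
    rw [Finset.disjoint_right]
    intro f hf
    rw [Finset.mem_insert, Finset.mem_singleton] at hf
    rcases hf with rfl | rfl
    · exact hxz_not
    · exact hyz_not
  calc (confE G s(x, y)).card + 2
      = (confE G s(x, y)).card + ({s(x, z), s(y, z)} : Finset (Sym2 V)).card := by
        rw [Finset.card_insert_of_notMem (by simpa using hne), Finset.card_singleton]
    _ = (confE G s(x, y) ∪ {s(x, z), s(y, z)}).card := (Finset.card_union_of_disjoint hdisj).symm
    _ ≤ _ := Finset.card_le_card hsub
lemma exists_sigma (G : SimpleGraph V) (Pset : Set V)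
    (K : (G.induce Pset).ConnectedComponent)
    (A : Set V) (hA : A = (fun x : ↥Pset => (x : V)) '' K.supp)
    (u v : V) (huv : G.Adj u v) (hu : u ∈ A) (hv : v ∈ A) :
    ∃ σ : Sym2 V → ℕ,
      (∀ e : Sym2 V, e ≠ s(u, v) → σ e < σ s(u, v)) ∧
      (∀ e f : Sym2 V, e ≠ s(u, v) → f ≠ s(u, v) → σ e = σ f → e = f) ∧
      (∀ e ∈ G.edgeFinset.filter (fun e => ∀ x ∈ e, x ∈ A), e ≠ s(u, v) →
        ∃ f ∈ G.edgeFinset.filter (fun e => ∀ x ∈ e, x ∈ A), σ e < σ f ∧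
          ∃ x y w : V, e = s(x, y) ∧ f = s(x, w) ∧ w ≠ y) := by
  classical
  set EA := G.edgeFinset.filter (fun e => ∀ x ∈ e, x ∈ A) with hEA
  have hmemEA : ∀ e, e ∈ EA ↔ e ∈ G.edgeSet ∧ ∀ x ∈ e, x ∈ A := by
    intro e; simp [hEA, Finset.mem_filter, mem_edgeFinset]
  have hAP : A ⊆ Pset := by
    rintro x hx
    rw [hA] at hx
    obtain ⟨x', _, rfl⟩ := hx
    exact x'.2
  have hsupp : ∀ x (hx : x ∈ A), (⟨x, hAP hx⟩ : ↥Pset) ∈ K.supp := by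
    intro x hx
    rw [hA] at hx
    obtain ⟨x', hx', h⟩ := hx
    have : (⟨x, hAP hx⟩ : ↥Pset) = x' := Subtype.ext h.symm
    rw [this]; exact hx'
  have huP : u ∈ Pset := hAP hu
  set uh : ↥Pset := (⟨u, huP⟩ : ↥Pset) with huh
  set d : V → ℕ :=
    fun x => if h : x ∈ Pset then (G.induce Pset).dist ⟨x, h⟩ uh else 0 with hd
  have hreach : ∀ x (hx : x ∈ A), (G.induce Pset).Reachable ⟨x, hAP hx⟩ uh := by
    intro x hx
    have h1 := (ConnectedComponent.mem_supp_iff _ _).mp (hsupp x hx)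
    have h2 := (ConnectedComponent.mem_supp_iff _ _).mp (hsupp u hu)
    exact ConnectedComponent.exact (h1.trans h2.symm)
  have hdA : ∀ x (hx : x ∈ A), d x = (G.induce Pset).dist ⟨x, hAP hx⟩ uh := by
    intro x hx; rw [hd]; simp only [dif_pos (hAP hx)]
  have hdu : d u = 0 := by
    rw [hdA u hu]
    exact SimpleGraph.dist_self
  have hd0 : ∀ x (hx : x ∈ A), d x = 0 → x = u := by
    intro x hx h0
    rw [hdA x hx] at h0
    have := ((hreach x hx).dist_eq_zero_iff).mp h0
    exact congrArg Subtype.val this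
  have hstep' : ∀ a : ↥Pset, (G.induce Pset).Reachable a uh →
      (G.induce Pset).dist a uh ≠ 0 →
      ∃ b : ↥Pset, (G.induce Pset).Adj a b ∧
        (G.induce Pset).dist b uh < (G.induce Pset).dist a uh := by
    intro a hr h0
    obtain ⟨p, hp⟩ := hr.exists_walk_length_eq_dist
    cases p with
    | nil => exact absurd SimpleGraph.dist_self h0
    | cons hadj q =>
      refine ⟨_, hadj, ?_⟩
      have h1 := dist_le q
      have h2 : q.length + 1 = (G.induce Pset).dist a uh := by
        rw [← hp]; simp [Walk.length_cons]
      omega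
  have hstep : ∀ x (hx : x ∈ A), d x ≠ 0 → ∃ y, y ∈ A ∧ G.Adj x y ∧ d y < d x := by
    intro x hx h0
    rw [hdA x hx] at h0
    obtain ⟨b, hadj, hlt⟩ := hstep' ⟨x, hAP hx⟩ (hreach x hx) h0
    refine ⟨b.val, ?_, ?_, ?_⟩
    · rw [hA]
      refine ⟨b, ?_, rfl⟩
      rw [ConnectedComponent.mem_supp_iff]
      have hbx : (G.induce Pset).connectedComponentMk b =
          (G.induce Pset).connectedComponentMk ⟨x, hAP hx⟩ :=
        ConnectedComponent.sound hadj.symm.reachable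
      rw [hbx]
      exact (ConnectedComponent.mem_supp_iff _ _).mp (hsupp x hx)
    · exact hadj
    · have hbP : (b : V) ∈ Pset := b.2
      have hb1 : d b.val = (G.induce Pset).dist ⟨b.val, hbP⟩ uh := by
        rw [hd]; simp only [dif_pos hbP]
      have hbb : (⟨b.val, hbP⟩ : ↥Pset) = b := Subtype.ext rfl
      rw [hb1, hbb, hdA x hx]
      exact hlt
  -- the key function
  set key : Sym2 V → ℕ := Sym2.lift ⟨fun a b => min (d a) (d b), fun a b => min_comm _ _⟩
    with hkey
  have hkeyeq : ∀ a b : V, key s(a, b) = min (d a) (d b) := by intro a b; rw [hkey]; rfl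
  set B : ℕ := Finset.univ.sup d with hB
  have hdB : ∀ x, d x ≤ B := fun x => Finset.le_sup (Finset.mem_univ x)
  have hkeyB : ∀ e, key e ≤ B := by
    intro e
    induction e using Sym2.ind with
    | _ a b => rw [hkeyeq]; exact le_trans (min_le_left _ _) (hdB a)
  set C : ℕ := Fintype.card (Sym2 V) with hC
  have hCpos : 0 < C := Fintype.card_pos_iff.mpr ⟨s(u, v)⟩
  set ι : Sym2 V → ℕ := fun e => ((Fintype.equivFin (Sym2 V)) e : ℕ) with hι
  have hιlt : ∀ e, ι e < C := fun e => ((Fintype.equivFin (Sym2 V)) e).isLt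
  have hιinj : ∀ e f, ι e = ι f → e = f := by
    intro e f h
    have := Fin.val_injective h
    exact (Fintype.equivFin (Sym2 V)).injective this
  set σ : Sym2 V → ℕ := fun e => if e = s(u, v) then (B + 1) * C else (B - key e) * C + ι e
    with hσ
  have hmax : ∀ e : Sym2 V, e ≠ s(u, v) → σ e < σ s(u, v) := by
    intro e he
    rw [hσ]
    simp only [if_neg he, if_pos rfl]
    calc (B - key e) * C + ι e < (B - key e) * C + C := by
          exact Nat.add_lt_add_left (hιlt e) _
      _ = (B - key e + 1) * C := by ring
      _ ≤ (B + 1) * C := Nat.mul_le_mul_right C (by omega)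
  have hinj : ∀ e f : Sym2 V, e ≠ s(u, v) → f ≠ s(u, v) → σ e = σ f → e = f := by
    intro e f he hf h
    rw [hσ] at h
    simp only [if_neg he, if_neg hf] at h
    have h2 : ((B - key e) * C + ι e) % C = ((B - key f) * C + ι f) % C := by rw [h]
    rw [Nat.mul_comm (B - key e) C, Nat.mul_comm (B - key f) C] at h2
    rw [Nat.mul_add_mod, Nat.mul_add_mod, Nat.mod_eq_of_lt (hιlt e),
      Nat.mod_eq_of_lt (hιlt f)] at h2
    exact hιinj e f h2
  have hmono : ∀ e f : Sym2 V, e ≠ s(u, v) → f ≠ s(u, v) → key f < key e → σ e < σ f := by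
    intro e f he hf hk
    rw [hσ]
    simp only [if_neg he, if_neg hf]
    have hkB : key e ≤ B := hkeyB e
    calc (B - key e) * C + ι e < (B - key e) * C + C := Nat.add_lt_add_left (hιlt e) _
      _ = (B - key e + 1) * C := by ring
      _ ≤ (B - key f) * C := Nat.mul_le_mul_right C (by omega)
      _ ≤ (B - key f) * C + ι f := Nat.le_add_right _ _
  -- key of edge attained at its endpoints; main successor property
  have hmain : ∀ x y : V, G.Adj x y → x ∈ A → y ∈ A → s(x, y) ≠ s(u, v) → d x ≤ d y →
      ∃ f ∈ EA, σ s(x, y) < σ f ∧ ∃ a b w : V, s(x, y) = s(a, b) ∧ f = s(a, w) ∧ w ≠ b := by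
    intro x y hxy hxA hyA hne hdxy
    have hkeyxy : key s(x, y) = d x := by rw [hkeyeq]; omega
    by_cases h0 : d x = 0
    · have hxu : x = u := hd0 x hxA h0
      refine ⟨s(u, v), ?_, hmax _ hne, x, y, v, rfl, by rw [hxu], ?_⟩
      · rw [hmemEA]
        refine ⟨huv, ?_⟩
        intro z hz
        rw [Sym2.mem_iff] at hz
        rcases hz with rfl | rfl
        · exact hu
        · exact hv
      · intro hvy
        apply hne
        rw [hxu, hvy]
    · obtain ⟨y', hy'A, hxy', hdy'⟩ := hstep x hxA h0
      have hfEA : s(x, y') ∈ EA := by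
        rw [hmemEA]
        refine ⟨hxy', ?_⟩
        intro z hz
        rw [Sym2.mem_iff] at hz
        rcases hz with rfl | rfl
        · exact hxA
        · exact hy'A
      have hkf : key s(x, y') < key s(x, y) := by
        rw [hkeyeq, hkeyxy]; omega
      have hσlt : σ s(x, y) < σ s(x, y') := by
        by_cases hfuv : s(x, y') = s(u, v)
        · rw [hfuv]; exact hmax _ hne
        · exact hmono _ _ hne hfuv hkf
      refine ⟨s(x, y'), hfEA, hσlt, x, y, y', rfl, rfl, ?_⟩
      intro h; rw [h] at hkf; omega
  refine ⟨σ, hmax, hinj, ?_⟩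
  intro e heEA hne
  induction e using Sym2.ind with
  | _ x y =>
    rw [hmemEA] at heEA
    obtain ⟨heE, hxyA⟩ := heEA
    have hxy : G.Adj x y := heE
    have hxA : x ∈ A := hxyA x (Sym2.mem_mk_left x y)
    have hyA : y ∈ A := hxyA y (Sym2.mem_mk_right x y)
    rcases le_total (d x) (d y) with h | h
    · exact hmain x y hxy hxA hyA hne h
    · have hswap : s(x, y) = s(y, x) := Sym2.eq_swap
      rw [hswap] at hne ⊢
      exact hmain y x hxy.symm hyA hxA hne h

lemma mem_confE_uv {u v : V} (huv : G.Adj u v) {f : Sym2 V} :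
    f ∈ confE G s(u, v) ↔ f ∈ G.edgeSet ∧ f ≠ s(u, v) ∧ ∃ w : V,
      (f = s(v, w) ∧ G.Adj v w ∧ ¬ G.Adj u w ∧ u ≠ w) ∨
      (f = s(u, w) ∧ G.Adj u w ∧ ¬ G.Adj v w ∧ v ≠ w) := by
  rw [mem_confE]
  constructor
  · rintro ⟨hfE, hne, x, y, w, hexy, hadj, hfxw, hnyw, hynw⟩
    refine ⟨hfE, hne, w, ?_⟩
    rw [Sym2.eq_iff] at hexy
    have hadjw : G.Adj x w := by rw [hfxw, SimpleGraph.mem_edgeSet] at hfE; exact hfE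
    rcases hexy with ⟨h1, h2⟩ | ⟨h1, h2⟩
    · subst h1; subst h2
      exact Or.inr ⟨hfxw, hadjw, hnyw, hynw⟩
    · subst h1; subst h2
      exact Or.inl ⟨hfxw, hadjw, hnyw, hynw⟩
  · rintro ⟨hfE, hne, w, ⟨hf, ha, hn, hw⟩ | ⟨hf, ha, hn, hw⟩⟩
    · exact ⟨hfE, hne, v, u, w, Sym2.eq_swap, huv.symm, hf, hn, hw⟩
    · exact ⟨hfE, hne, u, v, w, rfl, huv, hf, hn, hw⟩

end STCaux

open STCaux Finset

/-- A periphery component `A` is good: any STC-labeling with all edges of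
`E(A)` weak can be modified, keeping all labels outside `E(A)`, so that
no edge of `E(A)` is weak. -/
def IsGoodComponent {V : Type*} (G : SimpleGraph V) (c : ℕ) (A : Set V) : Prop :=
  ∀ ℓ : Sym2 V → ℕ, IsSTCLabeling G c ℓ →
    (∀ e ∈ G.edgeSet, (∀ x ∈ e, x ∈ A) → ℓ e = 0) →
    ∃ ℓ' : Sym2 V → ℕ, IsSTCLabeling G c ℓ' ∧
      (∀ e ∈ G.edgeSet, ¬ (∀ x ∈ e, x ∈ A) → ℓ' e = ℓ e) ∧
      (∀ e ∈ G.edgeSet, (∀ x ∈ e, x ∈ A) → ℓ' e ≠ 0)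

/-- If some edge `{u,v}` inside a periphery component `A` forms an induced `P₃`
with fewer than `c` other edges of `G`, then `A` is good. -/
theorem few_conflicts_implies_good {V : Type*} [Fintype V] [DecidableEq V]
    (G : SimpleGraph V) (c : ℕ)
    (Pset : Set V) (hP : Pset = {v : V | (G.neighborSet v).ncard ≤ c / 2 + 1})
    (K : (G.induce Pset).ConnectedComponent)
    (A : Set V) (hA : A = (fun x : ↥Pset => (x : V)) '' K.supp)
    (u v : V) (huv : G.Adj u v) (hu : u ∈ A) (hv : v ∈ A)
    (hfew : {f ∈ G.edgeSet | f ≠ s(u, v) ∧ ∃ w : V,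
        (f = s(v, w) ∧ G.Adj v w ∧ ¬ G.Adj u w ∧ u ≠ w) ∨
        (f = s(u, w) ∧ G.Adj u w ∧ ¬ G.Adj v w ∧ v ≠ w)}.ncard < c) :
    IsGoodComponent G c A := by
  classical
  intro ℓ hSTC hweak
  set EA := G.edgeFinset.filter (fun e => ∀ x ∈ e, x ∈ A) with hEAdef
  have hmemEA : ∀ e, e ∈ EA ↔ e ∈ G.edgeSet ∧ ∀ x ∈ e, x ∈ A := by
    intro e; simp [hEAdef, Finset.mem_filter, mem_edgeFinset]
  have hc1 : 1 ≤ c := by omega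
  have hAP : A ⊆ Pset := by
    rintro x hx
    rw [hA] at hx
    obtain ⟨x', _, rfl⟩ := hx
    exact x'.2
  -- degree bound for vertices of A
  have hdeg : ∀ x ∈ A, (nbr G x).card ≤ c / 2 + 1 := by
    intro x hx
    have hxP : x ∈ Pset := hAP hx
    rw [hP] at hxP
    have hcoe : G.neighborSet x = ↑(nbr G x) := by
      ext w; simp [nbr, SimpleGraph.mem_neighborSet]
    simp only [Set.mem_setOf_eq, hcoe, Set.ncard_coe_finset] at hxP
    exact hxP
  have hdiv : c / 2 * 2 ≤ c := Nat.div_mul_le_self c 2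
  -- conflict bound for edges inside A
  have hconfA : ∀ x y : V, G.Adj x y → x ∈ A → y ∈ A →
      (confE G s(x, y)).card ≤ (c / 2 + 1 - 1) + (c / 2 + 1 - 1) := by
    intro x y hxy hxA hyA
    refine le_trans (confE_card_le hxy) ?_
    have h1 := hdeg x hxA
    have h2 := hdeg y hyA
    omega
  have hconfAtri : ∀ x y z : V, G.Adj x y → x ∈ A → y ∈ A → G.Adj x z → G.Adj y z →
      (confE G s(x, y)).card + 2 ≤ (c / 2 + 1 - 1) + (c / 2 + 1 - 1) := by
    intro x y z hxy hxA hyA hxz hyz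
    refine le_trans (confE_card_le_tri hxy hxz hyz) ?_
    have h1 := hdeg x hxA
    have h2 := hdeg y hyA
    omega
  -- translate hfew to confE
  have hfewF : (confE G s(u, v)).card < c := by
    have hset : {f ∈ G.edgeSet | f ≠ s(u, v) ∧ ∃ w : V,
        (f = s(v, w) ∧ G.Adj v w ∧ ¬ G.Adj u w ∧ u ≠ w) ∨
        (f = s(u, w) ∧ G.Adj u w ∧ ¬ G.Adj v w ∧ v ≠ w)} = ↑(confE G s(u, v)) := by
      ext f
      rw [Finset.mem_coe, mem_confE_uv huv]
      simp only [Set.mem_setOf_eq, Set.mem_sep_iff]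
    rw [hset, Set.ncard_coe_finset] at hfew
    exact hfew
  have huvEA : s(u, v) ∈ EA := by
    rw [hmemEA]
    refine ⟨huv, ?_⟩
    intro z hz
    rw [Sym2.mem_iff] at hz
    rcases hz with rfl | rfl
    · exact hu
    · exact hv
  -- ordering function
  obtain ⟨σ, hmax, hinj, hsucc⟩ := exists_sigma G Pset K A hA u v huv hu hv
  rw [← hEAdef] at hsucc
  -- the greedy construction
  have main : ∀ n : ℕ, ∃ g : Sym2 V → ℕ,
      (∀ e, ¬(e ∈ EA ∧ σ e < n) → g e = ℓ e) ∧
      (∀ e, e ∈ EA → σ e < n → 1 ≤ g e ∧ g e ≤ c) ∧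
      (∀ e, e ∈ EA → σ e < n → ∀ f ∈ confE G e, ¬(f ∈ EA ∧ ¬(σ f < n)) → g f ≠ g e) := by
    intro n
    induction n with
    | zero =>
      exact ⟨ℓ, fun e _ => rfl, fun e _ h => absurd h (by omega),
        fun e _ h => absurd h (by omega)⟩
    | succ n ih =>
      obtain ⟨g, hg1, hg2, hg3⟩ := ih
      by_cases hex : ∃ e0 ∈ EA, σ e0 = n
      · obtain ⟨e0, he0EA, he0σ⟩ := hex
        have hinj' : ∀ e ∈ EA, σ e = n → e = e0 := by
          intro e heEA heσ
          by_cases h1 : e = s(u, v) <;> by_cases h2 : e0 = s(u, v)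
          · rw [h1, h2]
          · exfalso
            have := hmax e0 h2
            rw [← h1] at this
            omega
          · exfalso
            have := hmax e h1
            rw [← h2] at this
            omega
          · exact hinj e e0 h1 h2 (heσ.trans he0σ.symm)
        -- the non-pending conflicting edges
        set NP := (confE G e0) \ (EA.filter (fun f => ¬ σ f < n + 1)) with hNPdef
        have hNPmem : ∀ f, f ∈ NP ↔ f ∈ confE G e0 ∧ ¬(f ∈ EA ∧ ¬ σ f < n + 1) := by
          intro f
          rw [hNPdef, Finset.mem_sdiff, Finset.mem_filter]
        have he0E : e0 ∈ G.edgeSet := ((hmemEA e0).mp he0EA).1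
        have he0A : ∀ x ∈ e0, x ∈ A := ((hmemEA e0).mp he0EA).2
        have hNP : NP.card < c := by
          by_cases he0uv : e0 = s(u, v)
          · have h1 : NP.card ≤ (confE G e0).card :=
              Finset.card_le_card (Finset.sdiff_subset)
            rw [he0uv] at h1
            omega
          · obtain ⟨f, hfEA, hσf, a, b, w, he0ab, hfaw, hwb⟩ := hsucc e0 he0EA he0uv
            have hadjab : G.Adj a b := by rw [he0ab, SimpleGraph.mem_edgeSet] at he0E; exact he0E
            have haA : a ∈ A := he0A a (by rw [he0ab]; exact Sym2.mem_mk_left a b)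
            have hbA : b ∈ A := he0A b (by rw [he0ab]; exact Sym2.mem_mk_right a b)
            have hfe0 : f ≠ e0 := by intro h; rw [h] at hσf; omega
            have hfpend : f ∉ NP := by
              rw [hNPmem]
              rintro ⟨-, hcon⟩
              exact hcon ⟨hfEA, by omega⟩
            by_cases hconf : f ∈ confE G e0
            · have hsub : NP ⊆ (confE G e0).erase f := by
                intro x hx
                rw [Finset.mem_erase]
                exact ⟨fun h => hfpend (h ▸ hx), ((hNPmem x).mp hx).1⟩
              have h1 : NP.card ≤ (confE G e0).card - 1 := by
                refine le_trans (Finset.card_le_card hsub) ?_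
                rw [Finset.card_erase_of_mem hconf]
              have h2 := hconfA a b hadjab haA hbA
              rw [← he0ab] at h2
              have h3 : 1 ≤ (confE G e0).card := Finset.card_pos.mpr ⟨f, hconf⟩
              omega
            · -- f forms a triangle with e0
              have hfE : f ∈ G.edgeSet := ((hmemEA f).mp hfEA).1
              have hadjaw : G.Adj a w := by rw [hfaw, SimpleGraph.mem_edgeSet] at hfE; exact hfE
              have hadjbw : G.Adj b w := by
                by_contra hn
                apply hconf
                rw [mem_confE]
                exact ⟨hfE, hfe0, a, b, w, he0ab, hadjab, hfaw, hn, fun h => hwb h.symm⟩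
              have h2 := hconfAtri a b w hadjab haA hbA hadjaw hadjbw
              rw [← he0ab] at h2
              have h1 : NP.card ≤ (confE G e0).card :=
                Finset.card_le_card (Finset.sdiff_subset)
              omega
        -- pick a fresh color
        set F := NP.image g with hFdef
        have hF : F.card < c := lt_of_le_of_lt (Finset.card_image_le) hNP
        have hfresh : ∃ a ∈ Finset.Icc 1 c, a ∉ F := by
          by_contra hcon
          push_neg at hcon
          have hsub : Finset.Icc 1 c ⊆ F := hcon
          have := Finset.card_le_card hsub
          rw [Nat.card_Icc] at this
          omega
        obtain ⟨a, haIcc, haF⟩ := hfresh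
        rw [Finset.mem_Icc] at haIcc
        refine ⟨Function.update g e0 a, ?_, ?_, ?_⟩
        · intro e he
          have hee0 : e ≠ e0 := by
            rintro rfl
            exact he ⟨he0EA, by omega⟩
          rw [Function.update_of_ne hee0]
          apply hg1
          intro ⟨h1, h2⟩
          exact he ⟨h1, by omega⟩
        · intro e heEA heσ
          by_cases hee0 : e = e0
          · rw [hee0, Function.update_self]
            exact haIcc
          · have : σ e < n := by
              have := hinj' e heEA
              rcases Nat.lt_succ_iff_lt_or_eq.mp heσ with h | h
              · exact h
              · exact absurd (this h) hee0
            rw [Function.update_of_ne hee0]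
            exact hg2 e heEA this
        · intro e heEA heσ f hfconf hfnp
          have hfe : f ≠ e := ((mem_confE.mp hfconf).2).1
          by_cases hee0 : e = e0
          · subst hee0
            have hfne0 : f ≠ e := hfe
            rw [Function.update_self, Function.update_of_ne hfe]
            have hfNP : f ∈ NP := (hNPmem f).mpr ⟨hfconf, hfnp⟩
            intro h
            exact haF (h ▸ Finset.mem_image_of_mem g hfNP)
          · have heσn : σ e < n := by
              rcases Nat.lt_succ_iff_lt_or_eq.mp heσ with h | h
              · exact h
              · exact absurd (hinj' e heEA h) hee0
            rw [Function.update_of_ne hee0]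
            by_cases hfe0 : f = e0
            · subst hfe0
              rw [Function.update_self]
              have heE : e ∈ G.edgeSet := ((hmemEA e).mp heEA).1
              have heconf : e ∈ confE G f := mem_confE_symm heE hfconf
              have heNP : e ∈ NP := (hNPmem e).mpr ⟨heconf, fun ⟨_, h⟩ => h heσ⟩
              intro h
              exact haF (h.symm ▸ Finset.mem_image_of_mem g heNP)
            · rw [Function.update_of_ne hfe0]
              apply hg3 e heEA heσn f hfconf
              rintro ⟨h1, h2⟩
              apply hfnp
              refine ⟨h1, ?_⟩
              intro h3
              rcases Nat.lt_succ_iff_lt_or_eq.mp h3 with h | h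
              · exact h2 h
              · exact hfe0 (hinj' f h1 h)
      · -- no edge has σ = n : nothing changes
        have hlt : ∀ e, e ∈ EA → σ e < n + 1 → σ e < n := by
          intro e heEA h
          rcases Nat.lt_succ_iff_lt_or_eq.mp h with h' | h'
          · exact h'
          · exact absurd ⟨e, heEA, h'⟩ hex
        refine ⟨g, ?_, ?_, ?_⟩
        · intro e he
          apply hg1
          rintro ⟨h1, h2⟩
          exact he ⟨h1, by omega⟩
        · intro e heEA heσ
          exact hg2 e heEA (hlt e heEA heσ)
        · intro e heEA heσ f hfconf hfnp
          apply hg3 e heEA (hlt e heEA heσ) f hfconf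
          rintro ⟨h1, h2⟩
          apply hfnp
          exact ⟨h1, fun h3 => h2 (hlt f h1 h3)⟩
  -- final assembly
  obtain ⟨g, hg1, hg2, hg3⟩ := main (σ s(u, v) + 1)
  have hEAlt : ∀ e ∈ EA, σ e < σ s(u, v) + 1 := by
    intro e heEA
    by_cases h : e = s(u, v)
    · rw [h]; omega
    · have := hmax e h; omega
  have hgoff : ∀ e, e ∉ EA → g e = ℓ e := by
    intro e he
    apply hg1
    rintro ⟨h1, _⟩
    exact he h1
  refine ⟨g, ⟨?_, ?_⟩, ?_, ?_⟩
  · -- labels bounded by c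
    intro e heE
    by_cases h : e ∈ EA
    · exact (hg2 e h (hEAlt e h)).2
    · rw [hgoff e h]
      exact hSTC.1 e heE
  · -- STC condition
    intro x y z hxz hxy hyz hnxz heq
    have he1E : s(x, y) ∈ G.edgeSet := hxy
    have he2E : s(y, z) ∈ G.edgeSet := hyz
    have hconf12 : s(y, z) ∈ confE G s(x, y) := mem_confE_of_P3 hxy hyz hnxz hxz
    have hconf21 : s(x, y) ∈ confE G s(y, z) := mem_confE_symm he1E hconf12
    by_cases h1 : s(x, y) ∈ EA
    · exfalso
      refine hg3 s(x, y) h1 (hEAlt _ h1) s(y, z) hconf12 ?_ heq.symm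
      rintro ⟨hf, hlt⟩
      exact hlt (hEAlt _ hf)
    · by_cases h2 : s(y, z) ∈ EA
      · exfalso
        refine hg3 s(y, z) h2 (hEAlt _ h2) s(x, y) hconf21 ?_ heq
        rintro ⟨hf, hlt⟩
        exact hlt (hEAlt _ hf)
      · rw [hgoff _ h1, hgoff _ h2] at heq
        rw [hgoff _ h1]
        exact hSTC.2 x y z hxz hxy hyz hnxz heq
  · -- agrees outside E(A)
    intro e heE hne
    apply hgoff
    rw [hmemEA]
    rintro ⟨_, h⟩
    exact hne h
  · -- nonzero inside E(A)
    intro e heE hall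
    have heEA : e ∈ EA := (hmemEA e).mpr ⟨heE, hall⟩
    have := (hg2 e heEA (hEAlt e heEA)).1
    omega
end
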